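/- arXiv:2303.00511 — 5 statements merged into one kernel-verified Lean document; each statement's English description precedes it below -/
import Mathlib

section
/- Let X be a real Banach space. If X contains a 𝔇-point, then the dual space X* contains a weak* super Δ-point. -/
open NormedSpace Topology

/-- `x` is a 𝔇-point of the real Banach space `X`: `x` is in the unit sphere and every
slice of the unit ball determined by a norm-one functional attaining the value `1` at `x`
contains points almost at distance `2` from `x`. -/
def IsDPoint (X : Type*) [NormedAddCommGroup X] [NormedSpace ℝ X] (x : X) : Prop :=
  ‖x‖ = 1 ∧ ∀ f : StrongDual ℝ X, ‖f‖ = 1 → f x = 1 → ∀ ε : ℝ, 0 < ε →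
    sSup ((fun y => ‖x - y‖) '' {y : X | ‖y‖ ≤ 1 ∧ 1 - ε < f y}) = 2

/-- `g` is a weak* super Δ-point of the dual of `X`: `g` is in the dual unit sphere and
every relatively weak*-open subset of the dual unit ball containing `g` contains points
almost at distance `2` from `g`. -/
def IsWeakStarSuperDeltaPoint (X : Type*) [NormedAddCommGroup X] [NormedSpace ℝ X]
    (g : StrongDual ℝ X) : Prop :=
  ‖g‖ = 1 ∧ ∀ U : Set (WeakDual ℝ X), IsOpen U → StrongDual.toWeakDual g ∈ U →
    sSup ((fun h => ‖g - h‖) ''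
      {h : StrongDual ℝ X | ‖h‖ ≤ 1 ∧ StrongDual.toWeakDual h ∈ U}) = 2

set_option maxHeartbeats 3000000 in
/-- If a real Banach space `X` contains a 𝔇-point, then `X*` contains a weak* super
Δ-point. -/
theorem dPoint_implies_weakStarSuperDeltaPoint
    (X : Type*) [NormedAddCommGroup X] [NormedSpace ℝ X] [CompleteSpace X]
    (h : ∃ x : X, IsDPoint X x) :
    ∃ g : StrongDual ℝ X, IsWeakStarSuperDeltaPoint X g := by
  classical
  obtain ⟨x, hx1, hxD⟩ := h
  by_contra hcon
  push_neg at hcon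
  -- The face `D` of the dual unit ball at `x`, inside the weak dual.
  set D : Set (WeakDual ℝ X) :=
    {φ : WeakDual ℝ X | ‖WeakDual.toStrongDual φ‖ ≤ 1 ∧ φ x = 1} with hD
  -- Basic norm facts
  have hx0 : x ≠ 0 := by
    intro h0
    rw [h0, norm_zero] at hx1; norm_num at hx1
  -- For every `φ ∈ D` there is a weak*-open `U ∋ φ` and `ε > 0` such that
  -- all `h` in the unit ball with `toWeakDual h ∈ U` satisfy `‖φ - h‖ ≤ 2 - ε`.
  have key : ∀ φ : WeakDual ℝ X, φ ∈ D →
      ∃ (U : Set (WeakDual ℝ X)) (ε : ℝ), IsOpen U ∧ φ ∈ U ∧ 0 < ε ∧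
        ∀ h : StrongDual ℝ X, ‖h‖ ≤ 1 → StrongDual.toWeakDual h ∈ U →
          ‖WeakDual.toStrongDual φ - h‖ ≤ 2 - ε := by
    intro φ hφ
    set g : StrongDual ℝ X := WeakDual.toStrongDual φ with hg
    have hgx : g x = 1 := hφ.2
    have hgle : ‖g‖ ≤ 1 := hφ.1
    have hg1 : ‖g‖ = 1 := by
      refine le_antisymm hgle ?_
      have := g.le_opNorm x
      rw [hx1, mul_one] at this
      calc (1 : ℝ) = g x := hgx.symm
        _ ≤ ‖g x‖ := le_abs_self _
        _ ≤ ‖g‖ := this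
    have hng := hcon g
    rw [IsWeakStarSuperDeltaPoint] at hng
    push_neg at hng
    obtain ⟨U, hUo, hUm, hU2⟩ := hng hg1
    set A : Set ℝ := (fun h => ‖g - h‖) ''
      {h : StrongDual ℝ X | ‖h‖ ≤ 1 ∧ StrongDual.toWeakDual h ∈ U} with hA
    have hgU : StrongDual.toWeakDual g ∈ U := hUm
    have hAne : A.Nonempty := ⟨‖g - g‖, ⟨g, ⟨hgle, hgU⟩, rfl⟩⟩
    have hAbdd : ∀ a ∈ A, a ≤ 2 := by
      rintro a ⟨h', ⟨hh1, _⟩, rfl⟩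
      calc ‖g - h'‖ ≤ ‖g‖ + ‖h'‖ := norm_sub_le _ _
        _ ≤ 1 + 1 := add_le_add hgle hh1
        _ = 2 := by norm_num
    have hAbddAbove : BddAbove A := ⟨2, fun a ha => hAbdd a ha⟩
    have hMle : sSup A ≤ 2 := csSup_le hAne hAbdd
    have hMlt : sSup A < 2 := lt_of_le_of_ne hMle hU2
    refine ⟨U, 2 - sSup A, hUo, hUm, by linarith, ?_⟩
    intro h' hh1 hhU
    have : ‖g - h'‖ ≤ sSup A := le_csSup hAbddAbove ⟨h', ⟨hh1, hhU⟩, rfl⟩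
    linarith
  -- D is weak*-compact
  have hDcpt : IsCompact D := by
    have h1 : IsCompact (WeakDual.toStrongDual ⁻¹' Metric.closedBall (0 : StrongDual ℝ X) 1) :=
      WeakDual.isCompact_closedBall (𝕜 := ℝ) 0 1
    have h2 : IsClosed ((fun φ : WeakDual ℝ X => φ x) ⁻¹' {1}) :=
      IsClosed.preimage (WeakDual.eval_continuous x) isClosed_singleton
    have hDeq : D = (WeakDual.toStrongDual ⁻¹' Metric.closedBall (0 : StrongDual ℝ X) 1)
        ∩ ((fun φ : WeakDual ℝ X => φ x) ⁻¹' {1}) := by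
      ext φ
      simp [hD, Metric.mem_closedBall, dist_zero_right]
    rw [hDeq]
    exact h1.inter_right h2
  -- D is nonempty
  obtain ⟨g₀, hg₀1, hg₀x⟩ := exists_dual_vector ℝ x (norm_ne_zero_iff.2 hx0)
  have hg₀x' : g₀ x = 1 := by
    rw [hx1] at hg₀x
    exact_mod_cast hg₀x
  have hDne : D.Nonempty := by
    refine ⟨StrongDual.toWeakDual g₀, ?_, ?_⟩
    · show ‖WeakDual.toStrongDual (StrongDual.toWeakDual g₀)‖ ≤ 1
      rw [show WeakDual.toStrongDual (StrongDual.toWeakDual g₀) = g₀ from rfl, hg₀1]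
    · exact hg₀x'
  -- Choose data for each point of D
  choose U ε hUo hUm hεp hUb using fun i : ↥D => key i i.2
  -- finite subcover
  have hcover : D ⊆ ⋃ i : ↥D, U i := fun φ hφ => Set.mem_iUnion.2 ⟨⟨φ, hφ⟩, hUm _⟩
  obtain ⟨t, ht⟩ := hDcpt.elim_finite_subcover U hUo hcover
  have htne : t.Nonempty := by
    obtain ⟨φ₀, hφ₀⟩ := hDne
    have := ht hφ₀
    rw [Set.mem_iUnion₂] at this
    obtain ⟨i₀, hi₀t, _⟩ := this
    exact ⟨i₀, hi₀t⟩
  set ε₀ : ℝ := t.inf' htne ε with hε₀def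
  have hε₀pos : 0 < ε₀ := by
    obtain ⟨i, _, hi⟩ := Finset.exists_mem_eq_inf' htne ε
    rw [hε₀def, hi]; exact hεp i
  have hε₀le : ∀ i ∈ t, ε₀ ≤ ε i := fun i hi => Finset.inf'_le ε hi
  -- A compact slab around D covered by the same finitely many U i
  set K : ℕ → Set (WeakDual ℝ X) := fun m =>
    {φ : WeakDual ℝ X | ‖WeakDual.toStrongDual φ‖ ≤ 1 ∧ 1 - 1 / (m + 1) ≤ φ x} with hK
  have hKcl : ∀ m, IsClosed (K m) := by
    intro m
    have h1 : IsClosed (WeakDual.toStrongDual ⁻¹'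
        Metric.closedBall (0 : StrongDual ℝ X) 1) := WeakDual.isClosed_closedBall 0 1
    have h2 : IsClosed ((fun φ : WeakDual ℝ X => φ x) ⁻¹' Set.Ici (1 - 1 / (m + 1))) :=
      IsClosed.preimage (WeakDual.eval_continuous x) isClosed_Ici
    have : K m = (WeakDual.toStrongDual ⁻¹' Metric.closedBall (0 : StrongDual ℝ X) 1)
        ∩ ((fun φ : WeakDual ℝ X => φ x) ⁻¹' Set.Ici (1 - 1 / (m + 1))) := by
      ext φ
      simp [hK, Metric.mem_closedBall, dist_zero_right]
    rw [this]
    exact h1.inter h2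
  have hKcpt : ∀ m, IsCompact (K m) := by
    intro m
    have h1 : IsCompact (WeakDual.toStrongDual ⁻¹'
        Metric.closedBall (0 : StrongDual ℝ X) 1) := WeakDual.isCompact_closedBall (𝕜 := ℝ) 0 1
    exact h1.of_isClosed_subset (hKcl m) (fun φ hφ => by
      simpa [Metric.mem_closedBall, dist_zero_right] using hφ.1)
  -- there is m₀ with K m₀ ⊆ ⋃ i ∈ t, U i
  have hslab : ∃ m₀ : ℕ, K m₀ ⊆ ⋃ i ∈ t, U i := by
    by_contra hno
    push_neg at hno
    set C : ℕ → Set (WeakDual ℝ X) := fun m => K m ∩ (⋃ i ∈ t, U i)ᶜ with hC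
    have hCne : ∀ m, (C m).Nonempty := by
      intro m
      obtain ⟨φ, hφK, hφU⟩ := Set.not_subset.1 (hno m)
      exact ⟨φ, hφK, hφU⟩
    have hUopen : IsOpen (⋃ i ∈ t, U i) := isOpen_biUnion fun i _ => hUo i
    have hCcl : ∀ m, IsClosed (C m) := fun m => (hKcl m).inter hUopen.isClosed_compl
    have hCdec : ∀ m, C (m + 1) ⊆ C m := by
      intro m φ hφ
      refine ⟨⟨hφ.1.1, ?_⟩, hφ.2⟩
      have h1 : (1 : ℝ) / (m + 1 + 1) ≤ 1 / (m + 1) := by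
        apply one_div_le_one_div_of_le
        · positivity
        · push_cast; linarith
      have := hφ.1.2
      push_cast at this ⊢
      linarith
    have hCcpt : IsCompact (C 0) := (hKcpt 0).of_isClosed_subset (hCcl 0) Set.inter_subset_left
    obtain ⟨ψ, hψ⟩ := IsCompact.nonempty_iInter_of_sequence_nonempty_isCompact_isClosed
      C hCdec hCne hCcpt hCcl
    have hψm : ∀ m : ℕ, ψ ∈ C m := by
      intro m
      exact Set.mem_iInter.1 hψ m
    have hψx1 : ψ x = 1 := by
      have hle : ψ x ≤ 1 := by
        have h1 := (WeakDual.toStrongDual ψ).le_opNorm x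
        rw [hx1, mul_one] at h1
        calc ψ x ≤ ‖ψ x‖ := le_abs_self _
          _ = ‖(WeakDual.toStrongDual ψ) x‖ := rfl
          _ ≤ ‖WeakDual.toStrongDual ψ‖ := h1
          _ ≤ 1 := (hψm 0).1.1
      refine le_antisymm hle ?_
      by_contra hlt
      push_neg at hlt
      obtain ⟨n, hn⟩ := exists_nat_one_div_lt (show (0:ℝ) < 1 - ψ x by linarith)
      have := (hψm n).1.2
      push_cast at this hn
      linarith
    have hψD : ψ ∈ D := ⟨(hψm 0).1.1, hψx1⟩
    exact (hψm 0).2 (ht hψD)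
  obtain ⟨m₀, hm₀⟩ := hslab
  have hm₀pos : (0:ℝ) < 1 / (m₀ + 1) := by positivity
  have hm₀le1 : (1:ℝ) / (m₀ + 1) ≤ 1 := by
    rw [div_le_one (by positivity)]
    push_cast; linarith
  -- The growth step: any nonempty S ⊆ t can be enlarged inside t.
  have grow : ∀ S : Finset ↥D, S.Nonempty → S ⊆ t → ∃ j ∈ t, j ∉ S := by
    intro S hSne hSt
    set k : ℕ := S.card with hkdef
    have hk1 : 1 ≤ k := Finset.card_pos.2 hSne
    have hkpos : (0:ℝ) < k := by exact_mod_cast hk1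
    -- the averaged functional
    set G : ↥D → StrongDual ℝ X := fun i => WeakDual.toStrongDual (i : WeakDual ℝ X)
      with hGdef
    have hGx : ∀ i : ↥D, G i x = 1 := fun i => i.2.2
    have hGle : ∀ i : ↥D, ‖G i‖ ≤ 1 := fun i => i.2.1
    set f : StrongDual ℝ X := (k : ℝ)⁻¹ • ∑ i ∈ S, G i with hfdef
    have hfx : f x = 1 := by
      rw [hfdef]
      rw [ContinuousLinearMap.smul_apply, ContinuousLinearMap.sum_apply]
      rw [Finset.sum_congr rfl (fun i _ => hGx i)]
      rw [Finset.sum_const, nsmul_eq_mul, mul_one]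
      rw [smul_eq_mul, ← hkdef]; exact inv_mul_cancel₀ hkpos.ne'
    have hfle : ‖f‖ ≤ 1 := by
      rw [hfdef]
      calc ‖(k : ℝ)⁻¹ • ∑ i ∈ S, G i‖ = ‖(k:ℝ)⁻¹‖ * ‖∑ i ∈ S, G i‖ := norm_smul _ _
        _ ≤ (k:ℝ)⁻¹ * (k * 1) := by
            apply mul_le_mul
            · rw [Real.norm_eq_abs, abs_of_pos (inv_pos.2 hkpos)]
            · calc ‖∑ i ∈ S, G i‖ ≤ ∑ i ∈ S, ‖G i‖ := norm_sum_le _ _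
                _ ≤ ∑ _i ∈ S, (1:ℝ) := Finset.sum_le_sum (fun i _ => hGle i)
                _ = k * 1 := by rw [Finset.sum_const, nsmul_eq_mul]
            · positivity
            · exact (inv_pos.2 hkpos).le
        _ = 1 := by field_simp
    have hf1 : ‖f‖ = 1 := by
      refine le_antisymm hfle ?_
      have := f.le_opNorm x
      rw [hx1, mul_one] at this
      calc (1:ℝ) = f x := hfx.symm
        _ ≤ ‖f x‖ := le_abs_self _
        _ ≤ ‖f‖ := this
    clear_value f
    -- choose σ
    set σ : ℝ := min (ε₀ / (k + 3)) (1 / (m₀ + 1)) with hσdef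
    have hσpos : 0 < σ := lt_min (div_pos hε₀pos (by linarith)) hm₀pos
    have hσ1 : σ ≤ 1 := le_trans (min_le_right _ _) hm₀le1
    have hσm₀ : σ ≤ 1 / (m₀ + 1) := min_le_right _ _
    have hσε₀ : σ ≤ ε₀ / (k + 3) := min_le_left _ _
    clear_value σ
    -- apply the D-point property
    have hsup := hxD f hf1 hfx σ hσpos
    obtain ⟨y, hyT, hyfar⟩ : ∃ y : X, (‖y‖ ≤ 1 ∧ 1 - σ < f y) ∧ 2 - σ < ‖x - y‖ := by
      by_contra hno
      push_neg at hno
      have hb : sSup ((fun y => ‖x - y‖) '' {y : X | ‖y‖ ≤ 1 ∧ 1 - σ < f y}) ≤ 2 - σ := by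
        apply Real.sSup_le
        · rintro a ⟨y, hy, rfl⟩
          exact hno y hy
        · linarith
      rw [hsup] at hb
      linarith
    have hy1 : ‖y‖ ≤ 1 := hyT.1
    have hyf : 1 - σ < f y := hyT.2
    have hxy0 : x - y ≠ 0 := by
      intro h0
      rw [h0, norm_zero] at hyfar
      linarith
    -- norming functional of x - y
    obtain ⟨φ, hφ1, hφv⟩ := exists_dual_vector ℝ (x - y) (norm_ne_zero_iff.2 hxy0)
    have hφv' : φ (x - y) = ‖x - y‖ := by exact_mod_cast hφv
    have hφx_le : φ x ≤ 1 := by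
      have := φ.le_opNorm x
      rw [hx1, mul_one, hφ1] at this
      calc φ x ≤ ‖φ x‖ := le_abs_self _
        _ ≤ 1 := this
    have hφy_lb : -1 ≤ φ y := by
      have := φ.le_opNorm y
      rw [hφ1, one_mul] at this
      have h2 : ‖φ y‖ ≤ 1 := le_trans this hy1
      calc (-1 : ℝ) ≤ -‖φ y‖ := by linarith
        _ ≤ φ y := neg_abs_le _
    have hφsub : φ x - φ y = ‖x - y‖ := by
      have h : φ (x - y) = φ x - φ y := map_sub φ x y
      rw [hφv'] at h
      exact h.symm
    clear hsup
    have hφy_ub : φ y < -1 + σ := by linarith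
    have hφx_lb : 1 - σ < φ x := by linarith
    -- φ lies in the slab K m₀, hence in some U j with j ∈ t
    have hφK : StrongDual.toWeakDual φ ∈ K m₀ := by
      constructor
      · show ‖WeakDual.toStrongDual (StrongDual.toWeakDual φ)‖ ≤ 1
        rw [show WeakDual.toStrongDual (StrongDual.toWeakDual φ) = φ from rfl, hφ1]
      · show 1 - 1 / (m₀ + 1 : ℝ) ≤ φ x
        linarith
    have := hm₀ hφK
    rw [Set.mem_iUnion₂] at this
    obtain ⟨j, hjt, hjU⟩ := this
    refine ⟨j, hjt, ?_⟩
    intro hjS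
    -- derive the contradiction
    have hbnd := hUb j φ hφ1.le hjU
    -- G j y is close to 1
    have hsumy : (k : ℝ) * (1 - σ) < ∑ i ∈ S, G i y := by
      have h1 : (k:ℝ)⁻¹ * ∑ i ∈ S, G i y = f y := by
        rw [hfdef, ContinuousLinearMap.smul_apply, ContinuousLinearMap.sum_apply]
        rfl
      have h2 : 1 - σ < (k:ℝ)⁻¹ * ∑ i ∈ S, G i y := by rw [h1]; exact hyf
      calc (k:ℝ) * (1 - σ) < k * ((k:ℝ)⁻¹ * ∑ i ∈ S, G i y) := by
            exact (mul_lt_mul_iff_right₀ hkpos).2 h2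
        _ = ∑ i ∈ S, G i y := by field_simp
    have hGile : ∀ i : ↥D, G i y ≤ 1 := by
      intro i
      have := (G i).le_opNorm y
      calc G i y ≤ ‖G i y‖ := le_abs_self _
        _ ≤ ‖G i‖ * ‖y‖ := this
        _ ≤ 1 * 1 := mul_le_mul (hGle i) hy1 (norm_nonneg _) zero_le_one
        _ = 1 := one_mul 1
    have hGjy : 1 - (k : ℝ) * σ < G j y := by
      have hsplit : ∑ i ∈ S, G i y = G j y + ∑ i ∈ S.erase j, G i y :=
        (Finset.add_sum_erase S (fun i => G i y) hjS).symm
      have herase : ∑ i ∈ S.erase j, G i y ≤ (k : ℝ) - 1 := by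
        calc ∑ i ∈ S.erase j, G i y ≤ ∑ _i ∈ S.erase j, (1:ℝ) :=
              Finset.sum_le_sum (fun i _ => hGile i)
          _ = ((S.erase j).card : ℝ) := by rw [Finset.sum_const, nsmul_eq_mul, mul_one]
          _ = (k : ℝ) - 1 := by
              rw [Finset.card_erase_of_mem hjS, ← hkdef]
              have : (1:ℕ) ≤ k := hk1
              push_cast [Nat.cast_sub this]
              ring
      have := hsumy
      rw [hsplit] at this
      nlinarith
    -- the norm bound is violated
    have hfar : 2 - ((k:ℝ) + 1) * σ < (G j - φ) y := by
      rw [ContinuousLinearMap.sub_apply]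
      nlinarith
    have hub2 : (G j - φ) y ≤ ‖G j - φ‖ := by
      have := (G j - φ).le_opNorm y
      calc (G j - φ) y ≤ ‖(G j - φ) y‖ := le_abs_self _
        _ ≤ ‖G j - φ‖ * ‖y‖ := this
        _ ≤ ‖G j - φ‖ * 1 := by
            apply mul_le_mul_of_nonneg_left hy1 (norm_nonneg _)
        _ = ‖G j - φ‖ := mul_one _
    have hεj : ε₀ ≤ ε j := hε₀le j hjt
    have hkσ : ((k:ℝ) + 1) * σ < ε₀ := by
      have h1 : ((k:ℝ) + 1) * σ ≤ ((k:ℝ) + 1) * (ε₀ / (k + 3)) := by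
        apply mul_le_mul_of_nonneg_left hσε₀ (by linarith)
      have h2 : ((k:ℝ) + 1) * (ε₀ / (k + 3)) < ε₀ := by
        rw [mul_div_assoc']
        rw [div_lt_iff₀ (by linarith)]
        nlinarith
      linarith
    -- `G j = toNormedDual j` and the bound from hUb is about exactly this
    have : ‖G j - φ‖ ≤ 2 - ε j := hbnd
    linarith
  -- iterate the growth step to get arbitrarily large subsets of t
  have build : ∀ m : ℕ, ∃ S : Finset ↥D, S ⊆ t ∧ S.Nonempty ∧ S.card = m + 1 := by
    intro m
    induction m with
    | zero =>
      obtain ⟨i₀, hi₀⟩ := htne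
      exact ⟨{i₀}, Finset.singleton_subset_iff.2 hi₀, ⟨i₀, Finset.mem_singleton_self i₀⟩,
        Finset.card_singleton i₀⟩
    | succ m ih =>
      obtain ⟨S, hSt, hSne, hScard⟩ := ih
      obtain ⟨j, hjt, hjS⟩ := grow S hSne hSt
      refine ⟨insert j S, ?_, ⟨j, Finset.mem_insert_self j S⟩, ?_⟩
      · exact Finset.insert_subset hjt hSt
      · rw [Finset.card_insert_of_notMem hjS, hScard]
  obtain ⟨S, hSt, _, hScard⟩ := build t.card
  have := Finset.card_le_card hSt
  rw [hScard] at this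
  omega
end

section
/- Let X be a real Banach space, let Λ be a directed set, and let (T_λ)_{λ∈Λ} be a family of compact continuous linear operators on X such that sup_{λ∈Λ} ‖I_X − T_λ‖ < 2 and such that the adjoints converge to the identity in the strong operator topology, i.e., for every x* ∈ X* the net (x* ∘ T_λ)_{λ∈Λ} converges in norm to x*. Then X contains no 𝔇-points, and X* contains no weak* Δ-points. -/
open NormedSpace Topology Filter

/-- `g` is a weak* Δ-point of the dual of `X`. -/
def IsWeakStarDeltaPoint (X : Type*) [NormedAddCommGroup X] [NormedSpace ℝ X]
    (g : StrongDual ℝ X) : Prop :=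
  ‖g‖ = 1 ∧ ∀ x : X, ‖x‖ = 1 → ∀ ε : ℝ, 0 < ε → 1 - ε < g x →
    sSup ((fun h => ‖g - h‖) ''
      {h : StrongDual ℝ X | ‖h‖ ≤ 1 ∧ 1 - ε < h x}) = 2

section AuxiliaryLemmas

variable {X : Type*} [NormedAddCommGroup X] [NormedSpace ℝ X]

lemma aux_norm_witness (ψ : X →L[ℝ] ℝ) {r : ℝ} (hr : r < ‖ψ‖) :
    ∃ z : X, ‖z‖ ≤ 1 ∧ r < ψ z := by
  rcases lt_or_ge r 0 with h0 | h0
  · exact ⟨0, by simp, by simpa using h0⟩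
  · have : ¬ (‖ψ‖ ≤ r) := not_le.mpr hr
    rw [ContinuousLinearMap.opNorm_le_iff h0] at this
    push_neg at this
    obtain ⟨w, hw⟩ := this
    have hw0 : w ≠ 0 := by
      intro h
      rw [h] at hw
      simp at hw
    have hnw : (0:ℝ) < ‖w‖ := norm_pos_iff.mpr hw0
    rcases le_or_gt 0 (ψ w) with hs | hs
    · refine ⟨‖w‖⁻¹ • w, ?_, ?_⟩
      · simp [norm_smul, abs_of_nonneg, inv_mul_cancel₀ hnw.ne', le_of_eq,
          abs_of_pos (inv_pos.mpr hnw)]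
      · have : r * ‖w‖ < ψ w := by
          have := hw; rwa [Real.norm_eq_abs, abs_of_nonneg hs] at this
        calc r = r * ‖w‖ / ‖w‖ := by field_simp
        _ < ψ w / ‖w‖ := by exact div_lt_div_of_pos_right this hnw
        _ = ψ (‖w‖⁻¹ • w) := by rw [map_smul]; simp [smul_eq_mul]; ring
    · refine ⟨-(‖w‖⁻¹ • w), ?_, ?_⟩
      · simp [norm_smul, abs_of_pos (inv_pos.mpr hnw), inv_mul_cancel₀ hnw.ne']
      · have : r * ‖w‖ < -(ψ w) := by
          have := hw; rwa [Real.norm_eq_abs, abs_of_neg hs] at this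
        have h2 : r < -(ψ w) / ‖w‖ := by
          rw [lt_div_iff₀ hnw]; exact this
        calc r < -(ψ w) / ‖w‖ := h2
        _ = ψ (-(‖w‖⁻¹ • w)) := by rw [map_neg, map_smul]; simp [smul_eq_mul]; ring

lemma aux_extract {α : Type*} (F : α → ℝ) (A : Set α) (h2 : sSup (F '' A) = 2)
    {δ : ℝ} (hδ : 0 < δ) : ∃ a ∈ A, 2 - δ < F a := by
  have hne : (F '' A).Nonempty := by
    by_contra h
    rw [Set.not_nonempty_iff_eq_empty] at h
    rw [h, Real.sSup_empty] at h2
    norm_num at h2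
  obtain ⟨b, hb, hlt⟩ := exists_lt_of_lt_csSup hne (by rw [h2]; linarith : 2 - δ < sSup (F '' A))
  obtain ⟨a, ha, rfl⟩ := hb
  exact ⟨a, ha, hlt⟩

lemma aux_cluster {ι : Type*} (F : Filter ι) [F.NeBot] (G : ι → StrongDual ℝ X)
    (hG : ∀ i, ‖G i‖ ≤ 1) :
    ∃ γ : StrongDual ℝ X, ‖γ‖ ≤ 1 ∧
      ∀ t : Finset X, ∀ δ : ℝ, 0 < δ → ∀ s ∈ F, ∃ i ∈ s, ∀ v ∈ t, |G i v - γ v| < δ := by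
  have hcpt : IsCompact (WeakDual.toStrongDual ⁻¹' Metric.closedBall (0 : StrongDual ℝ X) 1) :=
    WeakDual.isCompact_closedBall (𝕜 := ℝ) (0 : StrongDual ℝ X) 1
  set S : Set (WeakDual ℝ X) := WeakDual.toStrongDual ⁻¹' Metric.closedBall (0 : StrongDual ℝ X) 1
  have hle : Filter.map (fun i => (StrongDual.toWeakDual (G i) : WeakDual ℝ X)) F ≤ Filter.principal S := by
    rw [Filter.le_principal_iff]
    apply Filter.mem_map.mpr
    have : ∀ i, (StrongDual.toWeakDual (G i) : WeakDual ℝ X) ∈ S := by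
      intro i
      simp only [S, Set.mem_preimage, Metric.mem_closedBall]
      simpa [dist_eq_norm] using hG i
    filter_upwards [Filter.univ_mem] with i _ using this i
  obtain ⟨γ', hγS, hcl⟩ := hcpt hle
  refine ⟨WeakDual.toStrongDual γ', ?_, ?_⟩
  · have := hγS
    simp only [S, Set.mem_preimage, Metric.mem_closedBall, dist_eq_norm, sub_zero] at this
    exact this
  · intro t δ hδ s hs
    have hV : {ψ : WeakDual ℝ X | ∀ v ∈ t, |ψ v - γ' v| < δ} ∈ 𝓝 γ' := by
      have : {ψ : WeakDual ℝ X | ∀ v ∈ t, |ψ v - γ' v| < δ}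
          = ⋂ v ∈ t, {ψ : WeakDual ℝ X | |ψ v - γ' v| < δ} := by
        ext ψ; simp
      rw [this]
      refine (Filter.biInter_finset_mem t).mpr ?_
      intro v _
      have hcont : Continuous fun ψ : WeakDual ℝ X => ψ v := WeakDual.eval_continuous v
      have : IsOpen {ψ : WeakDual ℝ X | |ψ v - γ' v| < δ} := by
        have : {ψ : WeakDual ℝ X | |ψ v - γ' v| < δ}
            = (fun ψ : WeakDual ℝ X => ψ v) ⁻¹' Metric.ball (γ' v) δ := by
          ext ψ; simp [Metric.mem_ball, Real.dist_eq]
        rw [this]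
        exact (Metric.isOpen_ball).preimage hcont
      exact this.mem_nhds (by simpa using hδ)
    have hmem : ((fun i => (StrongDual.toWeakDual (G i) : WeakDual ℝ X)) '' s)
        ∈ Filter.map (fun i => (StrongDual.toWeakDual (G i) : WeakDual ℝ X)) F :=
      Filter.image_mem_map hs
    have hne : ({ψ : WeakDual ℝ X | ∀ v ∈ t, |ψ v - γ' v| < δ}
        ∩ ((fun i => (StrongDual.toWeakDual (G i) : WeakDual ℝ X)) '' s)).Nonempty := by
      have : Filter.NeBot (𝓝 γ' ⊓ Filter.map (fun i => (StrongDual.toWeakDual (G i) : WeakDual ℝ X)) F) := hcl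
      exact this.nonempty_of_mem (Filter.inter_mem_inf hV hmem)
    obtain ⟨ψ, hψ, i, his, hψi⟩ := hne
    refine ⟨i, his, ?_⟩
    intro v hv
    have := hψ v hv
    rw [← hψi] at this
    exact this

lemma aux_engine
    {Λ : Type*} [Preorder Λ] [Nonempty Λ] [IsDirected Λ (· ≤ ·)]
    (T : Λ → X →L[ℝ] X)
    (hcompact : ∀ l, IsCompact (closure (T l '' Metric.closedBall (0 : X) 1)))
    (hsup : ∃ c : ℝ, c < 2 ∧ ∀ l, ‖ContinuousLinearMap.id ℝ X - T l‖ ≤ c)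
    (hSOT : ∀ f : StrongDual ℝ X,
      Tendsto (fun l => ‖f.comp (T l) - f‖) atTop (nhds 0))
    (γ : StrongDual ℝ X) (hγ : ‖γ‖ ≤ 1)
    (hdata : ∀ δ : ℝ, 0 < δ → ∀ t : Finset X, ∃ (y : X) (h : StrongDual ℝ X),
      ‖y‖ ≤ 1 ∧ ‖h‖ ≤ 1 ∧ 1 - δ < γ y ∧ h y < -1 + δ ∧ ∀ v ∈ t, |h v - γ v| < δ) :
    False := by
  obtain ⟨c, hc2, hcl⟩ := hsup
  haveI : (atTop : Filter Λ).NeBot :=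
    Filter.atTop_neBot_iff.mpr ⟨‹Nonempty Λ›, ‹IsDirected Λ (· ≤ ·)›⟩
  set ε : ℝ := (2 - c) / 8 with hε
  have hεpos : 0 < ε := by
    rw [hε]; linarith
  -- pick l with ‖γ ∘ T l - γ‖ < ε
  have : ∀ᶠ l in (atTop : Filter Λ), ‖γ.comp (T l) - γ‖ < ε := by
    have := hSOT γ
    exact this.eventually (gt_mem_nhds hεpos) |>.mono (fun l h => h)
  obtain ⟨l, hl⟩ := this.exists
  -- cover the compact set
  have htb : TotallyBounded (closure (T l '' Metric.closedBall (0 : X) 1)) :=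
    (hcompact l).totallyBounded
  obtain ⟨tset, htfin, htcov⟩ := (Metric.totallyBounded_iff.mp htb) ε hεpos
  obtain ⟨y, h, hy1, hh1, hγy, hhy, hclose⟩ := hdata ε hεpos htfin.toFinset
  -- w := T l y ∈ K
  have hyK : T l y ∈ closure (T l '' Metric.closedBall (0 : X) 1) := by
    apply subset_closure
    exact ⟨y, by simpa [Metric.mem_closedBall, dist_eq_norm] using hy1, rfl⟩
  obtain ⟨v, hvt, hvball⟩ := Set.mem_iUnion₂.mp (htcov hyK)
  have hvdist : ‖T l y - v‖ < ε := by
    rw [Metric.mem_ball, dist_eq_norm] at hvball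
    exact hvball
  have hvclose : |h v - γ v| < ε := hclose v (htfin.mem_toFinset.mpr hvt)
  -- |h (T l y) - γ (T l y)| ≤ 3 ε
  have hbig1 : |h (T l y) - γ (T l y)| ≤ 3 * ε := by
    have e1 : |(h - γ) (T l y) - (h - γ) v| ≤ 2 * ε := by
      have heq : (h - γ) (T l y) - (h - γ) v = (h - γ) (T l y - v) := by
        simp [map_sub]
      rw [heq]
      calc |(h - γ) (T l y - v)| ≤ ‖h - γ‖ * ‖T l y - v‖ := by
            simpa using (h - γ).le_opNorm (T l y - v)
      _ ≤ 2 * ε := by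
          apply mul_le_mul _ (le_of_lt hvdist) (norm_nonneg _) (by norm_num)
          calc ‖h - γ‖ ≤ ‖h‖ + ‖γ‖ := norm_sub_le _ _
          _ ≤ 2 := by linarith
    have e0 : h (T l y) - γ (T l y)
        = ((h - γ) (T l y) - (h - γ) v) + (h v - γ v) := by
      simp [ContinuousLinearMap.sub_apply]
    rw [e0]
    calc |((h - γ) (T l y) - (h - γ) v) + (h v - γ v)|
        ≤ |(h - γ) (T l y) - (h - γ) v| + |h v - γ v| := abs_add_le _ _
    _ ≤ 2 * ε + ε := add_le_add e1 (le_of_lt hvclose)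
    _ = 3 * ε := by ring
  -- |γ y - γ (T l y)| ≤ ε
  have hbig2 : |γ y - γ (T l y)| ≤ ε := by
    have : γ y - γ (T l y) = -((γ.comp (T l) - γ) y) := by
      simp [ContinuousLinearMap.sub_apply, ContinuousLinearMap.comp_apply]
    rw [this, abs_neg]
    calc |(γ.comp (T l) - γ) y| ≤ ‖γ.comp (T l) - γ‖ * ‖y‖ := by
          simpa using (γ.comp (T l) - γ).le_opNorm y
    _ ≤ ε * 1 := mul_le_mul (le_of_lt hl) hy1 (norm_nonneg _) (le_of_lt hεpos)
    _ = ε := by ring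
  -- ‖(id - T l) y‖ ≤ c
  have hA : ‖(ContinuousLinearMap.id ℝ X - T l) y‖ ≤ c := by
    calc ‖(ContinuousLinearMap.id ℝ X - T l) y‖
        ≤ ‖ContinuousLinearMap.id ℝ X - T l‖ * ‖y‖ := (ContinuousLinearMap.id ℝ X - T l).le_opNorm y
    _ ≤ c * 1 := by
        apply mul_le_mul (hcl l) hy1 (norm_nonneg _)
        exact le_trans (norm_nonneg _) (hcl l)
    _ = c := by ring
  -- h (T l y) - h y ≤ ‖(id - T l) y‖
  have hB : h (T l y) - h y ≤ ‖(ContinuousLinearMap.id ℝ X - T l) y‖ := by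
    have : h (T l y) - h y = -(h ((ContinuousLinearMap.id ℝ X - T l) y)) := by
      simp [ContinuousLinearMap.sub_apply, map_sub]
    rw [this]
    calc -(h ((ContinuousLinearMap.id ℝ X - T l) y)) ≤ |h ((ContinuousLinearMap.id ℝ X - T l) y)| := neg_le_abs _
    _ ≤ ‖h‖ * ‖(ContinuousLinearMap.id ℝ X - T l) y‖ := by
        simpa using h.le_opNorm ((ContinuousLinearMap.id ℝ X - T l) y)
    _ ≤ 1 * ‖(ContinuousLinearMap.id ℝ X - T l) y‖ := by
        apply mul_le_mul_of_nonneg_right hh1 (norm_nonneg _)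
    _ = ‖(ContinuousLinearMap.id ℝ X - T l) y‖ := by ring
  -- final
  have h1 := abs_le.mp hbig1
  have h2 := abs_le.mp hbig2
  -- c ≥ h(Tly) - h y ≥ (γ(Tly) - 3ε) - (-1+ε) ≥ (γ y - ε - 3 ε) + 1 - ε ≥ 2 - 6ε
  have : c ≥ 2 - 6 * ε := by linarith [h1.1, h1.2, h2.1, h2.2, hA, hB, hγy, hhy]
  rw [hε] at this
  linarith

lemma aux_avg_norm (x : X) (hx1 : ‖x‖ = 1)
    (Φ : Finset {f : StrongDual ℝ X // ‖f‖ = 1 ∧ f x = 1}) (hΦ : Φ.Nonempty) :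
    ‖((Φ.card : ℝ))⁻¹ • (∑ β ∈ Φ, β.val)‖ = 1
    ∧ (((Φ.card : ℝ))⁻¹ • (∑ β ∈ Φ, β.val)) x = 1 := by
  set φ : StrongDual ℝ X := ((Φ.card : ℝ))⁻¹ • (∑ β ∈ Φ, β.val) with hφ
  have hcard : (0:ℝ) < (Φ.card : ℝ) := by
    exact_mod_cast Finset.card_pos.mpr hΦ
  have hval : φ x = 1 := by
    rw [hφ, ContinuousLinearMap.smul_apply, ContinuousLinearMap.sum_apply]
    have : ∑ β ∈ Φ, β.val x = (Φ.card : ℝ) := by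
      rw [Finset.sum_congr rfl (fun β _ => β.2.2)]
      simp
    rw [this]
    simp [smul_eq_mul, inv_mul_cancel₀ hcard.ne']
  refine ⟨le_antisymm ?_ ?_, hval⟩
  · calc ‖φ‖ = ((Φ.card : ℝ))⁻¹ * ‖∑ β ∈ Φ, β.val‖ := by
          rw [hφ, norm_smul]
          simp [abs_of_pos (inv_pos.mpr hcard)]
    _ ≤ ((Φ.card : ℝ))⁻¹ * (Φ.card : ℝ) := by
        apply mul_le_mul_of_nonneg_left _ (le_of_lt (inv_pos.mpr hcard))
        calc ‖∑ β ∈ Φ, β.val‖ ≤ ∑ β ∈ Φ, ‖β.val‖ := norm_sum_le _ _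
        _ = (Φ.card : ℝ) := by rw [Finset.sum_congr rfl (fun β _ => β.2.1)]; simp
    _ = 1 := inv_mul_cancel₀ hcard.ne'
  · calc (1:ℝ) = φ x := hval.symm
    _ ≤ |φ x| := le_abs_self _
    _ = ‖φ x‖ := (Real.norm_eq_abs _).symm
    _ ≤ ‖φ‖ * ‖x‖ := φ.le_opNorm x
    _ = ‖φ‖ := by rw [hx1, mul_one]

lemma aux_nat_inv_lt {δ : ℝ} (hδ : 0 < δ) : ∃ m : ℕ, ((m:ℝ)+1)⁻¹ < δ := by
  obtain ⟨m, hm⟩ := exists_nat_gt (1/δ)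
  refine ⟨m, ?_⟩
  rw [inv_lt_iff_one_lt_mul₀ (by positivity)]
  have h1 : δ * (1/δ) = 1 := by field_simp
  have h2 : δ * ((m:ℝ)+1) = δ * (m:ℝ) + δ := by ring
  nlinarith [mul_lt_mul_of_pos_left hm hδ]

set_option maxHeartbeats 1000000 in
lemma aux_noD
    {Λ : Type*} [Preorder Λ] [Nonempty Λ] [IsDirected Λ (· ≤ ·)]
    (T : Λ → X →L[ℝ] X)
    (hcompact : ∀ l, IsCompact (closure (T l '' Metric.closedBall (0 : X) 1)))
    (hsup : ∃ c : ℝ, c < 2 ∧ ∀ l, ‖ContinuousLinearMap.id ℝ X - T l‖ ≤ c)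
    (hSOT : ∀ f : StrongDual ℝ X,
      Tendsto (fun l => ‖f.comp (T l) - f‖) atTop (nhds 0))
    (x : X) (hx1 : ‖x‖ = 1)
    (hD : ∀ f : StrongDual ℝ X, ‖f‖ = 1 → f x = 1 → ∀ ε : ℝ, 0 < ε →
      sSup ((fun y => ‖x - y‖) '' {y : X | ‖y‖ ≤ 1 ∧ 1 - ε < f y}) = 2) :
    False := by
  classical
  have hx0 : x ≠ 0 := by
    intro h; rw [h, norm_zero] at hx1; norm_num at hx1
  obtain ⟨f₀, hf₀n, hf₀x'⟩ := exists_dual_vector ℝ x (norm_ne_zero_iff.mpr hx0)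
  have hf₀x : f₀ x = 1 := by
    rw [hx1] at hf₀x'; exact_mod_cast hf₀x'
  set f₀' : {f : StrongDual ℝ X // ‖f‖ = 1 ∧ f x = 1} := ⟨f₀, hf₀n, hf₀x⟩ with hf₀'
  -- existence of the packed data for every index
  have exists_pack : ∀ p : Finset {f : StrongDual ℝ X // ‖f‖ = 1 ∧ f x = 1} × ℕ,
      ∃ (y : X) (g : StrongDual ℝ X),
        ‖y‖ ≤ 1 ∧ ‖g‖ = 1 ∧ g (x - y) = ‖x - y‖ ∧ 2 - ((p.2:ℝ)+1)⁻¹ < ‖x - y‖ ∧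
        ∀ β ∈ insert f₀' p.1, 1 - ((p.2:ℝ)+1)⁻¹ < β.val y := by
    intro p
    set Φ' := insert f₀' p.1 with hΦ'def
    have hΦ' : Φ'.Nonempty := ⟨f₀', Finset.mem_insert_self _ _⟩
    have hcard1 : 1 ≤ Φ'.card := Finset.card_pos.mpr hΦ'
    have hn : (0:ℝ) < (Φ'.card : ℝ) := by exact_mod_cast Finset.card_pos.mpr hΦ'
    obtain ⟨hφn, hφx⟩ := aux_avg_norm x hx1 Φ' hΦ'
    set φ : StrongDual ℝ X := ((Φ'.card : ℝ))⁻¹ • (∑ β ∈ Φ', β.val) with hφdef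
    have hm : (0:ℝ) < (p.2:ℝ) + 1 := by positivity
    have hεpos : (0:ℝ) < (((p.2:ℝ)+1) * (Φ'.card:ℝ))⁻¹ := inv_pos.mpr (mul_pos hm hn)
    have hsup2 := hD φ hφn hφx _ hεpos
    obtain ⟨y, hymem, hfar⟩ := aux_extract (fun y => ‖x - y‖) _ hsup2
      (δ := ((p.2:ℝ)+1)⁻¹) (by positivity)
    obtain ⟨hy1, hy2⟩ := hymem
    -- per-term bound
    have key : ∀ β ∈ Φ', 1 - ((p.2:ℝ)+1)⁻¹ < β.val y := by
      intro β hβ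
      have hφy : φ y = ((Φ'.card:ℝ))⁻¹ * ∑ β ∈ Φ', β.val y := by
        rw [hφdef, ContinuousLinearMap.smul_apply, ContinuousLinearMap.sum_apply, smul_eq_mul]
      have hSig : ∑ β ∈ Φ', β.val y = (Φ'.card:ℝ) * (φ y) := by
        rw [hφy, ← mul_assoc, mul_inv_cancel₀ hn.ne', one_mul]
      have hee : (Φ'.card:ℝ) * ((((p.2:ℝ)+1) * (Φ'.card:ℝ))⁻¹) = ((p.2:ℝ)+1)⁻¹ := by
        rw [mul_inv]
        rw [mul_comm, mul_assoc, inv_mul_cancel₀ hn.ne', mul_one]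
      have hsum : (Φ'.card:ℝ) - ((p.2:ℝ)+1)⁻¹ < ∑ β ∈ Φ', β.val y := by
        rw [hSig]
        have := mul_lt_mul_of_pos_left hy2 hn
        rw [mul_sub, mul_one, hee] at this
        linarith
      have hrest : ∑ β' ∈ Φ'.erase β, β'.val y ≤ (Φ'.card:ℝ) - 1 := by
        have hb : ∀ β' ∈ Φ'.erase β, β'.val y ≤ 1 := by
          intro β' _
          calc β'.val y ≤ |β'.val y| := le_abs_self _
          _ ≤ ‖β'.val‖ * ‖y‖ := by
              simpa [Real.norm_eq_abs] using β'.val.le_opNorm y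
          _ ≤ 1 := by rw [β'.2.1, one_mul]; exact hy1
        calc ∑ β' ∈ Φ'.erase β, β'.val y ≤ ∑ β' ∈ Φ'.erase β, (1:ℝ) :=
              Finset.sum_le_sum hb
        _ = ((Φ'.erase β).card : ℝ) := by simp
        _ = (Φ'.card:ℝ) - 1 := by
            rw [Finset.card_erase_of_mem hβ]
            rw [Nat.cast_sub hcard1]
            norm_num
      have hadd := Finset.add_sum_erase Φ' (fun β => β.val y) hβ
      linarith
    -- the norming functional
    have hinv1 : ((p.2:ℝ)+1)⁻¹ ≤ 1 := by
      rw [inv_le_one_iff₀]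
      right; linarith
    have hxy0 : x - y ≠ 0 := by
      intro h
      rw [h, norm_zero] at hfar
      linarith
    obtain ⟨g, hgn, hgxy'⟩ := exists_dual_vector ℝ (x - y) (norm_ne_zero_iff.mpr hxy0)
    have hgxy : g (x - y) = ‖x - y‖ := by exact_mod_cast hgxy'
    exact ⟨y, g, hy1, hgn, hgxy, hfar, key⟩
  choose Y G hY1 hGn hGxy hfar hslice using exists_pack
  -- basic consequences
  have hbnd : ∀ p, ∀ z : X, ‖z‖ ≤ 1 → G p z ≤ 1 ∧ -1 ≤ G p z := by
    intro p z hz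
    have : |G p z| ≤ 1 := by
      calc |G p z| ≤ ‖G p‖ * ‖z‖ := by simpa [Real.norm_eq_abs] using (G p).le_opNorm z
      _ ≤ 1 := by rw [hGn p, one_mul]; exact hz
    exact ⟨le_trans (le_abs_self _) this, by linarith [neg_abs_le (G p z)]⟩
  have hGx : ∀ p, 1 - ((p.2:ℝ)+1)⁻¹ < G p x := by
    intro p
    have h1 := hGxy p
    have h2 := hfar p
    have h3 := (hbnd p (Y p) (hY1 p)).2
    have : G p x - G p (Y p) = ‖x - Y p‖ := by
      rw [← h1]; simp [map_sub]
    linarith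
  have hGy : ∀ p, G p (Y p) < -1 + ((p.2:ℝ)+1)⁻¹ := by
    intro p
    have h1 := hGxy p
    have h2 := hfar p
    have h3 : G p x ≤ 1 := (hbnd p x (le_of_eq hx1)).1
    have : G p x - G p (Y p) = ‖x - Y p‖ := by
      rw [← h1]; simp [map_sub]
    linarith
  -- cluster point
  haveI : (Filter.atTop : Filter (Finset {f : StrongDual ℝ X // ‖f‖ = 1 ∧ f x = 1} × ℕ)).NeBot :=
    Filter.atTop_neBot
  obtain ⟨γ, hγ1, hCL⟩ := aux_cluster Filter.atTop G (fun p => le_of_eq (hGn p))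
  -- γ x = 1
  have hγx : γ x = 1 := by
    by_contra hne
    have hθ : 0 < |γ x - 1| := abs_pos.mpr (sub_ne_zero.mpr hne)
    set θ := |γ x - 1|
    obtain ⟨m₁, hm₁'⟩ := aux_nat_inv_lt (show (0:ℝ) < θ/2 by positivity)
    obtain ⟨p, hp, hclose⟩ := hCL {x} (θ/2) (by positivity)
      (Set.Ici (∅, m₁)) (Filter.Ici_mem_atTop _)
    have hpm : m₁ ≤ p.2 := hp.2
    have hppos : ((p.2:ℝ)+1)⁻¹ ≤ ((m₁:ℝ)+1)⁻¹ := by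
      apply inv_anti₀ (by positivity)
      have : (m₁:ℝ) ≤ (p.2:ℝ) := by exact_mod_cast hpm
      linarith
    have h1 := hGx p
    have h2 := (hbnd p x (le_of_eq hx1)).1
    have h3 := hclose x (Finset.mem_singleton_self x)
    have h4 : |G p x - 1| < θ/2 := by
      rw [abs_lt]
      constructor <;> nlinarith [hppos, hm₁']
    have : |γ x - 1| < θ := by
      have h5 : |γ x - G p x| < θ/2 := by
        rw [abs_sub_comm]; exact h3
      calc |γ x - 1| ≤ |γ x - G p x| + |G p x - 1| := abs_sub_le _ _ _
      _ < θ/2 + θ/2 := by linarith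
      _ = θ := by ring
    exact absurd this (lt_irrefl θ)
  have hγn : ‖γ‖ = 1 := by
    apply le_antisymm hγ1
    calc (1:ℝ) = γ x := hγx.symm
    _ ≤ |γ x| := le_abs_self _
    _ ≤ ‖γ‖ * ‖x‖ := by simpa [Real.norm_eq_abs] using γ.le_opNorm x
    _ = ‖γ‖ := by rw [hx1, mul_one]
  set γ' : {f : StrongDual ℝ X // ‖f‖ = 1 ∧ f x = 1} := ⟨γ, hγn, hγx⟩ with hγ'def
  -- feed the engine
  apply aux_engine T hcompact hsup hSOT γ hγ1
  intro δ hδ t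
  obtain ⟨m₀, hm₀'⟩ := aux_nat_inv_lt hδ
  obtain ⟨p, hp, hclose⟩ := hCL t δ hδ (Set.Ici ({γ'}, m₀)) (Filter.Ici_mem_atTop _)
  have hpm : m₀ ≤ p.2 := hp.2
  have hpinv : ((p.2:ℝ)+1)⁻¹ ≤ ((m₀:ℝ)+1)⁻¹ := by
    apply inv_anti₀ (by positivity)
    have : (m₀:ℝ) ≤ (p.2:ℝ) := by exact_mod_cast hpm
    linarith
  have hγ'mem : γ' ∈ insert f₀' p.1 := by
    apply Finset.mem_insert_of_mem
    have : ({γ'} : Finset _) ≤ p.1 := hp.1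
    exact Finset.singleton_subset_iff.mp this
  refine ⟨Y p, G p, hY1 p, le_of_eq (hGn p), ?_, ?_, hclose⟩
  · have hsl := hslice p γ' hγ'mem
    have h2 : 1 - δ < 1 - ((p.2:ℝ)+1)⁻¹ := by linarith [hpinv, hm₀']
    calc 1 - δ < 1 - ((p.2:ℝ)+1)⁻¹ := h2
    _ < γ (Y p) := hsl
  · have hgy := hGy p
    have h2 : -1 + ((p.2:ℝ)+1)⁻¹ ≤ -1 + δ := by linarith [hpinv, hm₀']
    linarith

noncomputable def auxBuildSeq {α : Type*} (base : α) (step : ∀ k, (Fin (k+1) → α) → α) :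
    (k : ℕ) → Fin (k+1) → α
  | 0 => fun _ => base
  | (k+1) => Fin.snoc (auxBuildSeq base step k) (step k (auxBuildSeq base step k))

lemma auxBuildSeq_succ {α : Type*} (base : α) (step : ∀ k, (Fin (k+1) → α) → α) (k : ℕ) :
    auxBuildSeq base step (k+1)
      = Fin.snoc (auxBuildSeq base step k) (step k (auxBuildSeq base step k)) := rfl

lemma auxBuildSeq_stable {α : Type*} (base : α) (step : ∀ k, (Fin (k+1) → α) → α) :
    ∀ (m n : ℕ) (h : n ≤ m),
      auxBuildSeq base step m ⟨n, by omega⟩ = auxBuildSeq base step n (Fin.last n) := by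
  intro m
  induction m with
  | zero =>
    intro n h
    have : n = 0 := by omega
    subst this
    rfl
  | succ m ih =>
    intro n h
    rcases Nat.lt_or_ge n (m+1) with h1 | h1
    · have hnm : n ≤ m := by omega
      have : (⟨n, by omega⟩ : Fin (m+2)) = Fin.castSucc ⟨n, by omega⟩ := rfl
      rw [this, auxBuildSeq_succ, Fin.snoc_castSucc]
      exact ih n hnm
    · have : n = m + 1 := by omega
      subst this
      have : (⟨m+1, by omega⟩ : Fin (m+2)) = Fin.last (m+1) := rfl
      rw [this]

lemma aux_geom : ∀ n : ℕ, ∑ i ∈ Finset.range n, (2:ℝ)^i * ((8:ℝ)^(i+1))⁻¹ ≤ 6⁻¹ := by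
  intro n
  have hterm : ∀ i : ℕ, (2:ℝ)^i * ((8:ℝ)^(i+1))⁻¹ = 8⁻¹ * (4⁻¹ : ℝ)^i := by
    intro i
    have h8 : (8:ℝ)^i = 2^i * 4^i := by rw [← mul_pow]; norm_num
    have h4 : ((4:ℝ)⁻¹)^i = ((4:ℝ)^i)⁻¹ := by rw [inv_pow]
    rw [pow_succ, h8, h4]
    have h2 : (2:ℝ)^i ≠ 0 := by positivity
    have h4' : (4:ℝ)^i ≠ 0 := by positivity
    field_simp
  rw [Finset.sum_congr rfl (fun i _ => hterm i), ← Finset.mul_sum]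
  have hgs : ∑ i ∈ Finset.range n, (4⁻¹ : ℝ)^i = ((4⁻¹:ℝ)^n - 1)/((4⁻¹:ℝ) - 1) :=
    geom_sum_eq (by norm_num) n
  have hb : ∑ i ∈ Finset.range n, (4⁻¹ : ℝ)^i ≤ 4/3 := by
    rw [hgs]
    have h1 : (0:ℝ) ≤ (4⁻¹:ℝ)^n := by positivity
    have h2 : (4⁻¹:ℝ)^n ≤ 1 := by
      apply pow_le_one₀ <;> norm_num
    rw [div_le_iff_of_neg (by norm_num : (4⁻¹:ℝ) - 1 < 0)]
    nlinarith
  nlinarith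

set_option maxHeartbeats 1000000 in
lemma aux_step (g : StrongDual ℝ X) (hg1 : ‖g‖ = 1)
    (hΔ : ∀ x : X, ‖x‖ = 1 → ∀ ε : ℝ, 0 < ε → 1 - ε < g x →
      sSup ((fun h => ‖g - h‖) '' {h : StrongDual ℝ X | ‖h‖ ≤ 1 ∧ 1 - ε < h x}) = 2)
    (k : ℕ) (u : Fin (k+1) → X × StrongDual ℝ X)
    (hu : ∀ j : Fin (k+1), ‖(u j).1‖ ≤ 1 ∧ 1 - ((8:ℝ)^((j:ℕ)+1))⁻¹ < g (u j).1) :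
    ∃ q : X × StrongDual ℝ X, ‖q.1‖ ≤ 1 ∧ 1 - ((8:ℝ)^(k+2))⁻¹ < g q.1 ∧ ‖q.2‖ ≤ 1 ∧
      q.2 q.1 < -1 + ((8:ℝ)^(k+2))⁻¹ ∧
      ∀ j : Fin (k+1), 1 - ((2:ℝ)^((j:ℕ)))⁻¹ < q.2 (u j).1 := by
  classical
  set W : ℝ := ∑ j : Fin (k+1), (2:ℝ)^((j:ℕ)) with hWdef
  have hWr : W = ∑ i ∈ Finset.range (k+1), (2:ℝ)^i := by
    rw [hWdef, Fin.sum_univ_eq_sum_range]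
  have hWpos : 0 < W := by
    rw [hWr]
    apply Finset.sum_pos (fun i _ => by positivity) ⟨0, Finset.mem_range.mpr (by omega)⟩
  have hW1 : 1 ≤ W := by
    rw [hWr]
    calc (1:ℝ) = (2:ℝ)^0 := by norm_num
    _ ≤ ∑ i ∈ Finset.range (k+1), (2:ℝ)^i :=
        Finset.single_le_sum (f := fun i => (2:ℝ)^i) (fun i _ => by positivity)
          (Finset.mem_range.mpr (by omega))
  set s : ℝ := (6*W)⁻¹ with hsdef
  have hspos : 0 < s := by rw [hsdef]; positivity
  have hs6 : s ≤ 6⁻¹ := by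
    rw [hsdef]
    rw [inv_le_inv₀ (by linarith) (by norm_num)]
    linarith
  set v : X := W⁻¹ • ∑ j : Fin (k+1), (2:ℝ)^((j:ℕ)) • (u j).1 with hvdef
  have hvnorm : ‖v‖ ≤ 1 := by
    rw [hvdef, norm_smul]
    have h1 : ‖∑ j : Fin (k+1), (2:ℝ)^((j:ℕ)) • (u j).1‖ ≤ W := by
      calc ‖∑ j : Fin (k+1), (2:ℝ)^((j:ℕ)) • (u j).1‖
          ≤ ∑ j : Fin (k+1), ‖(2:ℝ)^((j:ℕ)) • (u j).1‖ := norm_sum_le _ _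
      _ ≤ ∑ j : Fin (k+1), (2:ℝ)^((j:ℕ)) := by
          apply Finset.sum_le_sum
          intro j _
          rw [norm_smul, Real.norm_eq_abs, abs_of_pos (by positivity : (0:ℝ) < (2:ℝ)^((j:ℕ)))]
          calc (2:ℝ)^((j:ℕ)) * ‖(u j).1‖ ≤ (2:ℝ)^((j:ℕ)) * 1 :=
            mul_le_mul_of_nonneg_left (hu j).1 (by positivity)
          _ = (2:ℝ)^((j:ℕ)) := by ring
      _ = W := hWdef.symm
    rw [Real.norm_eq_abs, abs_of_pos (inv_pos.mpr hWpos)]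
    calc W⁻¹ * ‖∑ j : Fin (k+1), (2:ℝ)^((j:ℕ)) • (u j).1‖ ≤ W⁻¹ * W :=
      mul_le_mul_of_nonneg_left h1 (le_of_lt (inv_pos.mpr hWpos))
    _ = 1 := inv_mul_cancel₀ hWpos.ne'
  have hgv : 1 - s < g v := by
    have hgv' : g v = W⁻¹ * ∑ j : Fin (k+1), (2:ℝ)^((j:ℕ)) * g ((u j).1) := by
      rw [hvdef, map_smul, map_sum, smul_eq_mul]
      congr 1
      exact Finset.sum_congr rfl (fun j _ => by rw [map_smul, smul_eq_mul])
    have hlow : W - 6⁻¹ < ∑ j : Fin (k+1), (2:ℝ)^((j:ℕ)) * g ((u j).1) := by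
      have hstrict : ∑ j : Fin (k+1), (2:ℝ)^((j:ℕ)) * (1 - ((8:ℝ)^((j:ℕ)+1))⁻¹)
          < ∑ j : Fin (k+1), (2:ℝ)^((j:ℕ)) * g ((u j).1) := by
        apply Finset.sum_lt_sum_of_nonempty Finset.univ_nonempty
        intro j _
        exact mul_lt_mul_of_pos_left (hu j).2 (by positivity)
      have hsplit : ∑ j : Fin (k+1), (2:ℝ)^((j:ℕ)) * (1 - ((8:ℝ)^((j:ℕ)+1))⁻¹)
          = W - ∑ j : Fin (k+1), (2:ℝ)^((j:ℕ)) * ((8:ℝ)^((j:ℕ)+1))⁻¹ := by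
        rw [hWdef, ← Finset.sum_sub_distrib]
        exact Finset.sum_congr rfl (fun j _ => by ring)
      have hgeo : ∑ j : Fin (k+1), (2:ℝ)^((j:ℕ)) * ((8:ℝ)^((j:ℕ)+1))⁻¹ ≤ 6⁻¹ := by
        rw [Fin.sum_univ_eq_sum_range (fun i => (2:ℝ)^i * ((8:ℝ)^(i+1))⁻¹) (k+1)]
        exact aux_geom (k+1)
      linarith
    rw [hgv']
    have h2 : W⁻¹ * (W - 6⁻¹) < W⁻¹ * ∑ j : Fin (k+1), (2:ℝ)^((j:ℕ)) * g ((u j).1) :=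
      mul_lt_mul_of_pos_left hlow (inv_pos.mpr hWpos)
    have h3 : W⁻¹ * (W - 6⁻¹) = 1 - s := by
      rw [hsdef]
      field_simp
    linarith
  have hgvpos : 0 < g v := by
    have : s < 1 := lt_of_le_of_lt hs6 (by norm_num)
    linarith
  have hvpos : 0 < ‖v‖ := by
    have h1 : g v ≤ ‖v‖ := by
      calc g v ≤ |g v| := le_abs_self _
      _ ≤ ‖g‖ * ‖v‖ := by simpa [Real.norm_eq_abs] using g.le_opNorm v
      _ = ‖v‖ := by rw [hg1, one_mul]
    linarith
  have hv0 : v ≠ 0 := by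
    intro h
    rw [h, norm_zero] at hvpos
    exact lt_irrefl 0 hvpos
  set xh : X := ‖v‖⁻¹ • v with hxhdef
  have hxh1 : ‖xh‖ = 1 := by
    rw [hxhdef, norm_smul, Real.norm_eq_abs, abs_of_pos (inv_pos.mpr hvpos),
      inv_mul_cancel₀ hvpos.ne']
  have hgxh : 1 - s < g xh := by
    have h1 : g xh = ‖v‖⁻¹ * g v := by rw [hxhdef, map_smul, smul_eq_mul]
    have h2 : (1:ℝ) ≤ ‖v‖⁻¹ := by
      rw [le_inv_comm₀ (by norm_num) hvpos]
      simpa using hvnorm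
    have h3 : g v ≤ ‖v‖⁻¹ * g v := le_mul_of_one_le_left (le_of_lt hgvpos) h2
    linarith [h1 ▸ h3, hgv]
  -- apply the Delta point property
  have hsup2 := hΔ xh hxh1 s hspos hgxh
  set τ : ℝ := ((8:ℝ)^(k+2))⁻¹ with hτdef
  have hτpos : 0 < τ := by rw [hτdef]; positivity
  obtain ⟨h, hhmem, hhfar⟩ := aux_extract (fun h => ‖g - h‖) _ hsup2
    (δ := τ/2) (by positivity)
  obtain ⟨hh1, hhxh⟩ := hhmem
  obtain ⟨z, hz1, hz2⟩ := aux_norm_witness (g - h) (r := 2 - τ)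
    (by linarith : 2 - τ < ‖g - h‖)
  have hzabs : |h z| ≤ 1 := by
    calc |h z| ≤ ‖h‖ * ‖z‖ := by simpa [Real.norm_eq_abs] using h.le_opNorm z
    _ ≤ 1 := by nlinarith [norm_nonneg z, hh1, hz1, norm_nonneg h]
  have hzlb : -1 ≤ h z := by
    have := neg_abs_le (h z); linarith
  have hgz : 1 - τ < g z := by
    have h1 : (g - h) z = g z - h z := by simp
    rw [h1] at hz2
    linarith
  have hgz1 : g z ≤ 1 := by
    calc g z ≤ |g z| := le_abs_self _
    _ ≤ ‖g‖ * ‖z‖ := by simpa [Real.norm_eq_abs] using g.le_opNorm z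
    _ ≤ 1 := by rw [hg1, one_mul]; exact hz1
  have hhz : h z < -1 + τ := by
    have h1 : (g - h) z = g z - h z := by simp
    rw [h1] at hz2
    linarith
  -- per-term estimates
  have hhv : 1 - 2*s < h v := by
    have h1 : h v = ‖v‖ * h xh := by
      have e : h xh = ‖v‖⁻¹ * h v := by rw [hxhdef, map_smul, smul_eq_mul]
      rw [e, ← mul_assoc, mul_inv_cancel₀ hvpos.ne', one_mul]
    have hxhpos : 0 < h xh := by
      have : s < 1 := lt_of_le_of_lt hs6 (by norm_num)
      linarith
    have h2 : g v * h xh ≤ ‖v‖ * h xh := by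
      have hgv1 : g v ≤ ‖v‖ := by
        calc g v ≤ |g v| := le_abs_self _
        _ ≤ ‖g‖ * ‖v‖ := by simpa [Real.norm_eq_abs] using g.le_opNorm v
        _ = ‖v‖ := by rw [hg1, one_mul]
      exact mul_le_mul_of_nonneg_right hgv1 (le_of_lt hxhpos)
    have h3 : (1 - s) * (1 - s) < g v * h xh := by
      apply mul_lt_mul' (le_of_lt hgv) hhxh (by linarith) hgvpos
    nlinarith
  have hkey : ∀ j : Fin (k+1), 1 - ((2:ℝ)^((j:ℕ)))⁻¹ < h ((u j).1) := by
    intro j₀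
    have hhv' : h v = W⁻¹ * ∑ j : Fin (k+1), (2:ℝ)^((j:ℕ)) * h ((u j).1) := by
      rw [hvdef, map_smul, map_sum, smul_eq_mul]
      congr 1
      exact Finset.sum_congr rfl (fun j _ => by rw [map_smul, smul_eq_mul])
    have hsum : W - 3⁻¹ < ∑ j : Fin (k+1), (2:ℝ)^((j:ℕ)) * h ((u j).1) := by
      have h1 : W * (1 - 2*s) < W * (h v) := mul_lt_mul_of_pos_left hhv hWpos
      have h2 : W * (h v) = ∑ j : Fin (k+1), (2:ℝ)^((j:ℕ)) * h ((u j).1) := by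
        rw [hhv', ← mul_assoc, mul_inv_cancel₀ hWpos.ne', one_mul]
      have h3 : W * (1 - 2*s) = W - 3⁻¹ := by
        rw [hsdef]
        field_simp
        ring
      linarith
    have hrest : ∑ j ∈ Finset.univ.erase j₀, (2:ℝ)^((j:ℕ)) * h ((u j).1)
        ≤ W - (2:ℝ)^((j₀:ℕ)) := by
      have hterm : ∀ j ∈ Finset.univ.erase j₀, (2:ℝ)^((j:ℕ)) * h ((u j).1) ≤ (2:ℝ)^((j:ℕ)) := by
        intro j _
        have hb : h ((u j).1) ≤ 1 := by
          calc h ((u j).1) ≤ |h ((u j).1)| := le_abs_self _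
          _ ≤ ‖h‖ * ‖(u j).1‖ := by simpa [Real.norm_eq_abs] using h.le_opNorm ((u j).1)
          _ ≤ 1 := by nlinarith [(hu j).1, norm_nonneg ((u j).1), norm_nonneg h]
        calc (2:ℝ)^((j:ℕ)) * h ((u j).1) ≤ (2:ℝ)^((j:ℕ)) * 1 :=
          mul_le_mul_of_nonneg_left hb (by positivity)
        _ = (2:ℝ)^((j:ℕ)) := by ring
      calc ∑ j ∈ Finset.univ.erase j₀, (2:ℝ)^((j:ℕ)) * h ((u j).1)
          ≤ ∑ j ∈ Finset.univ.erase j₀, (2:ℝ)^((j:ℕ)) := Finset.sum_le_sum hterm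
      _ = W - (2:ℝ)^((j₀:ℕ)) := by
          have := Finset.add_sum_erase Finset.univ (fun j : Fin (k+1) => (2:ℝ)^((j:ℕ)))
            (Finset.mem_univ j₀)
          rw [hWdef]
          linarith
    have hadd := Finset.add_sum_erase Finset.univ
      (fun j : Fin (k+1) => (2:ℝ)^((j:ℕ)) * h ((u j).1)) (Finset.mem_univ j₀)
    have hj₀ : (2:ℝ)^((j₀:ℕ)) - 3⁻¹ < (2:ℝ)^((j₀:ℕ)) * h ((u j₀).1) := by linarith
    have hp : (0:ℝ) < (2:ℝ)^((j₀:ℕ)) := by positivity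
    have := mul_lt_mul_of_pos_left hj₀ (inv_pos.mpr hp)
    rw [mul_sub, inv_mul_cancel₀ hp.ne', ← mul_assoc, inv_mul_cancel₀ hp.ne', one_mul] at this
    have hlast : (1:ℝ) - ((2:ℝ)^((j₀:ℕ)))⁻¹ < 1 - ((2:ℝ)^((j₀:ℕ)))⁻¹ * 3⁻¹ := by
      have : ((2:ℝ)^((j₀:ℕ)))⁻¹ * 3⁻¹ < ((2:ℝ)^((j₀:ℕ)))⁻¹ := by
        nlinarith [inv_pos.mpr hp]
      linarith
    linarith
  exact ⟨(z, h), hz1, hgz, hh1, hhz, hkey⟩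

set_option maxHeartbeats 1000000 in
lemma aux_noDelta
    {Λ : Type*} [Preorder Λ] [Nonempty Λ] [IsDirected Λ (· ≤ ·)]
    (T : Λ → X →L[ℝ] X)
    (hcompact : ∀ l, IsCompact (closure (T l '' Metric.closedBall (0 : X) 1)))
    (hsup : ∃ c : ℝ, c < 2 ∧ ∀ l, ‖ContinuousLinearMap.id ℝ X - T l‖ ≤ c)
    (hSOT : ∀ f : StrongDual ℝ X,
      Tendsto (fun l => ‖f.comp (T l) - f‖) atTop (nhds 0))
    (g : StrongDual ℝ X) (hg1 : ‖g‖ = 1)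
    (hΔ : ∀ x : X, ‖x‖ = 1 → ∀ ε : ℝ, 0 < ε → 1 - ε < g x →
      sSup ((fun h => ‖g - h‖) '' {h : StrongDual ℝ X | ‖h‖ ≤ 1 ∧ 1 - ε < h x}) = 2) :
    False := by
  classical
  -- base point
  obtain ⟨z₀, hz₀1, hz₀2⟩ := aux_norm_witness g (r := 1 - (8:ℝ)⁻¹) (by rw [hg1]; norm_num)
  -- total step function
  have step_total : ∀ (k : ℕ) (u : Fin (k+1) → X × StrongDual ℝ X), ∃ q : X × StrongDual ℝ X,
      ((∀ j : Fin (k+1), ‖(u j).1‖ ≤ 1 ∧ 1 - ((8:ℝ)^((j:ℕ)+1))⁻¹ < g (u j).1) →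
        (‖q.1‖ ≤ 1 ∧ 1 - ((8:ℝ)^(k+2))⁻¹ < g q.1 ∧ ‖q.2‖ ≤ 1 ∧
          q.2 q.1 < -1 + ((8:ℝ)^(k+2))⁻¹ ∧
          ∀ j : Fin (k+1), 1 - ((2:ℝ)^((j:ℕ)))⁻¹ < q.2 (u j).1)) := by
    intro k u
    by_cases hinv : ∀ j : Fin (k+1), ‖(u j).1‖ ≤ 1 ∧ 1 - ((8:ℝ)^((j:ℕ)+1))⁻¹ < g (u j).1
    · obtain ⟨q, hq⟩ := aux_step g hg1 hΔ k u hinv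
      exact ⟨q, fun _ => hq⟩
    · exact ⟨(0, 0), fun h => absurd h hinv⟩
  choose stepF hstepF using step_total
  set A : (k : ℕ) → Fin (k+1) → X × StrongDual ℝ X := auxBuildSeq (z₀, (0:StrongDual ℝ X)) stepF with hAdef
  -- invariants
  have hinv : ∀ k : ℕ,
      (∀ j : Fin (k+1), ‖(A k j).1‖ ≤ 1 ∧ 1 - ((8:ℝ)^((j:ℕ)+1))⁻¹ < g (A k j).1) ∧
      (∀ j : Fin (k+1), 1 ≤ (j:ℕ) → ‖(A k j).2‖ ≤ 1 ∧
        (A k j).2 (A k j).1 < -1 + ((8:ℝ)^((j:ℕ)+1))⁻¹ ∧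
        ∀ i : Fin (k+1), (i:ℕ) < (j:ℕ) → 1 - ((2:ℝ)^((i:ℕ)))⁻¹ < (A k j).2 (A k i).1) := by
    intro k
    induction k with
    | zero =>
      have e : ∀ j : Fin 1, A 0 j = (z₀, (0:StrongDual ℝ X)) := by
        intro j
        rw [hAdef]
        rfl
      constructor
      · intro j
        rw [e j]
        have hj0 : (j:ℕ) = 0 := by omega
        rw [hj0]
        refine ⟨hz₀1, ?_⟩
        simpa using hz₀2
      · intro j hj
        have := j.isLt
        omega
    | succ k ih =>
      have hA1 : ∀ i : Fin (k+1), A (k+1) (Fin.castSucc i) = A k i := by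
        intro i
        rw [hAdef, auxBuildSeq_succ, Fin.snoc_castSucc]
      have hAl : A (k+1) (Fin.last (k+1)) = stepF k (A k) := by
        rw [hAdef, auxBuildSeq_succ, Fin.snoc_last]
      have hq := hstepF k (A k) ih.1
      constructor
      · intro j
        induction j using Fin.lastCases with
        | last =>
          rw [hAl]
          simp only [Fin.val_last]
          exact ⟨hq.1, hq.2.1⟩
        | cast i =>
          rw [hA1 i]
          simp only [Fin.coe_castSucc]
          exact ih.1 i
      · intro j hj
        induction j using Fin.lastCases with
        | last =>
          rw [hAl]
          simp only [Fin.val_last] at hj ⊢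
          refine ⟨hq.2.2.1, hq.2.2.2.1, ?_⟩
          intro i hi
          have hilt : (i:ℕ) < k+1 := hi
          have hieq : i = Fin.castSucc ⟨(i:ℕ), hilt⟩ := by
            apply Fin.ext
            simp
          rw [hieq, hA1]
          exact hq.2.2.2.2 ⟨(i:ℕ), hilt⟩
        | cast i =>
          simp only [Fin.coe_castSucc] at hj ⊢
          rw [hA1 i]
          obtain ⟨b1, b2, b3⟩ := ih.2 i hj
          refine ⟨b1, b2, ?_⟩
          intro i' hi'
          have hilt : (i':ℕ) < k+1 := by
            have := i.isLt
            omega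
          have hieq : i' = Fin.castSucc ⟨(i':ℕ), hilt⟩ := by
            apply Fin.ext
            simp
          rw [hieq, hA1]
          exact b3 ⟨(i':ℕ), hilt⟩ hi'
  -- the sequences
  set Z : ℕ → X := fun n => (A n (Fin.last n)).1 with hZdef
  set H : ℕ → StrongDual ℝ X := fun n => (A n (Fin.last n)).2 with hHdef
  have hstab : ∀ (m n : ℕ) (h : n ≤ m), A m ⟨n, Nat.lt_succ_of_le h⟩ = A n (Fin.last n) :=
    fun m n h => auxBuildSeq_stable _ _ m n h
  have hPZ : ∀ n : ℕ, ‖Z n‖ ≤ 1 ∧ 1 - ((8:ℝ)^(n+1))⁻¹ < g (Z n) := by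
    intro n
    have := (hinv n).1 (Fin.last n)
    rwa [Fin.val_last] at this
  have hPH : ∀ n : ℕ, 1 ≤ n → ‖H n‖ ≤ 1 ∧ H n (Z n) < -1 + ((8:ℝ)^(n+1))⁻¹ := by
    intro n hn
    have := (hinv n).2 (Fin.last n) (by rwa [Fin.val_last])
    rw [Fin.val_last] at this
    exact ⟨this.1, this.2.1⟩
  have hPHZ : ∀ n i : ℕ, i < n → 1 - ((2:ℝ)^i)⁻¹ < H n (Z i) := by
    intro n i hi
    have h1 := (hinv n).2 (Fin.last n) (by rw [Fin.val_last]; omega)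
    have h2 := h1.2.2 ⟨i, by omega⟩ (by rw [Fin.val_last]; simpa using hi)
    have h3 : A n ⟨i, by omega⟩ = A i (Fin.last i) := hstab n i (by omega)
    rw [h3] at h2
    exact h2
  have hHb : ∀ n : ℕ, ‖H n‖ ≤ 1 := by
    intro n
    cases n with
    | zero =>
      have : H 0 = (0 : StrongDual ℝ X) := rfl
      rw [this]
      simp
    | succ n => exact (hPH (n+1) (by omega)).1
  -- cluster point
  obtain ⟨γ, hγ1, hCL⟩ := aux_cluster (Filter.atTop : Filter ℕ) H hHb
  -- pinning
  have hpin : ∀ i : ℕ, 1 - ((2:ℝ)^i)⁻¹ ≤ γ (Z i) := by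
    intro i
    by_contra hcon
    push_neg at hcon
    set θ : ℝ := (1 - ((2:ℝ)^i)⁻¹) - γ (Z i) with hθdef
    have hθpos : 0 < θ := by rw [hθdef]; linarith
    obtain ⟨k, hk, hclose⟩ := hCL {Z i} θ hθpos (Set.Ici (i+1)) (Filter.Ici_mem_atTop _)
    have hik : i < k := hk
    have h1 := hPHZ k i hik
    have h2 := hclose (Z i) (Finset.mem_singleton_self _)
    have : γ (Z i) > H k (Z i) - θ := by
      have := abs_lt.mp h2
      linarith
    rw [hθdef] at this
    linarith
  -- feed the engine
  apply aux_engine T hcompact hsup hSOT γ hγ1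
  intro δ hδ t
  obtain ⟨m, hm⟩ := aux_nat_inv_lt hδ
  have hpow : ∀ k : ℕ, m ≤ k → ((2:ℝ)^k)⁻¹ < δ := by
    intro k hk
    have h1 : ((m:ℝ)+1) ≤ (2:ℝ)^m := by
      have := Nat.lt_two_pow_self (n := m)
      have h2 : ((m+1 : ℕ):ℝ) ≤ ((2^m : ℕ):ℝ) := by exact_mod_cast this
      push_cast at h2
      linarith
    have h2 : (2:ℝ)^m ≤ (2:ℝ)^k := by
      apply pow_le_pow_right₀ (by norm_num) hk
    have h3 : ((2:ℝ)^k)⁻¹ ≤ ((m:ℝ)+1)⁻¹ := by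
      apply inv_anti₀ (by positivity)
      linarith
    linarith
  obtain ⟨k, hkmem, hclose⟩ := hCL t δ hδ (Set.Ici (max m 1)) (Filter.Ici_mem_atTop _)
  have hk1 : 1 ≤ k := le_trans (le_max_right m 1) hkmem
  have hkm : m ≤ k := le_trans (le_max_left m 1) hkmem
  refine ⟨Z k, H k, (hPZ k).1, hHb k, ?_, ?_, hclose⟩
  · have h1 := hpin k
    have h2 := hpow k hkm
    linarith
  · have h1 := (hPH k hk1).2
    have h2 : ((8:ℝ)^(k+1))⁻¹ ≤ ((2:ℝ)^k)⁻¹ := by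
      apply inv_anti₀ (by positivity)
      calc (2:ℝ)^k ≤ (8:ℝ)^k := by
            apply pow_le_pow_left₀ (by norm_num) (by norm_num)
      _ ≤ (8:ℝ)^(k+1) := by
            apply pow_le_pow_right₀ (by norm_num) (by omega)
    have h3 := hpow k hkm
    linarith

end AuxiliaryLemmas

/-- Suppose `(T l)_{l ∈ Λ}` is a net (indexed by a directed set `Λ`) of compact operators
on a real Banach space `X` with `sup_l ‖I - T l‖ < 2`, whose adjoints converge to the
identity of `X*` in the strong operator topology.  Then `X` has no 𝔇-points and `X*` has
no weak* Δ-points. -/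
theorem no_dPoints_of_compact_approximation
    (X : Type*) [NormedAddCommGroup X] [NormedSpace ℝ X] [CompleteSpace X]
    (Λ : Type*) [Preorder Λ] [Nonempty Λ] [IsDirected Λ (· ≤ ·)]
    (T : Λ → X →L[ℝ] X)
    (hcompact : ∀ l, IsCompact (closure (T l '' Metric.closedBall (0 : X) 1)))
    (hsup : ∃ c : ℝ, c < 2 ∧ ∀ l, ‖ContinuousLinearMap.id ℝ X - T l‖ ≤ c)
    (hSOT : ∀ f : StrongDual ℝ X,
      Tendsto (fun l => ‖f.comp (T l) - f‖) atTop (nhds 0)) :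
    (¬ ∃ x : X, IsDPoint X x) ∧
      (¬ ∃ g : StrongDual ℝ X, IsWeakStarDeltaPoint X g) := by
  constructor
  · rintro ⟨x, hx⟩
    exact aux_noD T hcompact hsup hSOT x hx.1 hx.2
  · rintro ⟨g, hg⟩
    exact aux_noDelta T hcompact hsup hSOT g hg.1 hg.2
end

section
/- Let X be a real Banach space and let x ∈ S_X be an α-strongly exposed point, i.e., there exists x* ∈ D(x) such that for every ε > 0 there exists δ > 0 for which the slice S(x*,δ) can be covered by finitely many sets of diameter at most ε. Then x is not a 𝔇-point. -/
open NormedSpace Topology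

section Aux

variable {X : Type*} [NormedAddCommGroup X] [NormedSpace ℝ X]

/-- The slice of the unit ball. -/
def DSlice (f : StrongDual ℝ X) (δ : ℝ) : Set X := {y : X | ‖y‖ ≤ 1 ∧ 1 - δ < f y}

/-- The α-strong exposure condition for a functional. -/
def AlphaCond (f : StrongDual ℝ X) : Prop :=
  ∀ ε : ℝ, 0 < ε → ∃ δ : ℝ, 0 < δ ∧ ∃ (n : ℕ) (A : Fin n → Set X),
    (∀ i, EMetric.diam (A i) ≤ ENNReal.ofReal ε) ∧ DSlice f δ ⊆ ⋃ i, A i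

lemma dslice_mono (f : StrongDual ℝ X) {δ₁ δ₂ : ℝ} (hd : δ₁ ≤ δ₂) :
    DSlice f δ₁ ⊆ DSlice f δ₂ := fun y hy => ⟨hy.1, lt_of_le_of_lt (by linarith) hy.2⟩

lemma extract [CompleteSpace X] {x : X} (hx : ‖x‖ = 1) {h : StrongDual ℝ X}
    (hh : ‖h‖ ≤ 1) (hhx : h x = 1) (hα : AlphaCond h)
    (hsup : ∀ t : ℝ, 0 < t → sSup ((fun y => ‖x - y‖) '' DSlice h t) = 2) :
    ∃ w : X, ‖w‖ ≤ 1 ∧ h w = 1 ∧ ‖x - w‖ = 2 := by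
  classical
  have hmem_x : ∀ t : ℝ, 0 < t → x ∈ DSlice h t := fun t ht => ⟨hx.le, by rw [hhx]; linarith⟩
  have hα' : ∀ m : ℕ, ∃ δ : ℝ, 0 < δ ∧ ∃ (n : ℕ) (A : Fin n → Set X),
      (∀ i, EMetric.diam (A i) ≤ ENNReal.ofReal (1/(m+1))) ∧ DSlice h δ ⊆ ⋃ i, A i :=
    fun m => hα (1/(m+1)) (by positivity)
  choose δ' hδ'pos n A hA hcov using hα'
  set t : ℕ → ℝ := fun m =>
    (Finset.range (m+1)).inf' Finset.nonempty_range_add_one (fun q => min (δ' q) (1/(q+1))) with ht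
  have htpos : ∀ m, 0 < t m := by
    intro m
    rw [ht]
    rw [Finset.lt_inf'_iff]
    intro q _
    exact lt_min (hδ'pos q) (by positivity)
  have htle : ∀ p m : ℕ, p ≤ m → t m ≤ min (δ' p) (1/(p+1)) := by
    intro p m hpm
    exact Finset.inf'_le _ (Finset.mem_range.2 (by omega))
  have hy : ∀ m : ℕ, ∃ y, y ∈ DSlice h (t m) ∧ 2 - 1/(m+1) < ‖x - y‖ := by
    intro m
    have hne : ((fun y => ‖x - y‖) '' DSlice h (t m)).Nonempty :=
      ⟨0, x, hmem_x _ (htpos m), by simp⟩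
    have h2 : (2 : ℝ) - 1/(m+1) < sSup ((fun y => ‖x - y‖) '' DSlice h (t m)) := by
      rw [hsup _ (htpos m)]
      have : (0:ℝ) < 1/(m+1) := by positivity
      linarith
    obtain ⟨r, ⟨y, hyS, rfl⟩, hr⟩ := exists_lt_of_lt_csSup hne h2
    exact ⟨y, hyS, hr⟩
  choose y hyS hyd using hy
  have htb : TotallyBounded (Set.range y) := by
    rw [Metric.totallyBounded_iff]
    intro ε hε
    obtain ⟨p, hp⟩ := exists_nat_one_div_lt hε
    refine ⟨(Set.range fun i : Fin (n p) =>
        if hne : (A p i).Nonempty then hne.choose else x) ∪ y '' Set.Iio p,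
        (Set.finite_range _).union ((Set.finite_Iio p).image y), ?_⟩
    rintro _ ⟨m, rfl⟩
    by_cases hm : m < p
    · exact Set.mem_biUnion (Set.mem_union_right _ ⟨m, hm, rfl⟩) (Metric.mem_ball_self hε)
    · push_neg at hm
      have hyp : y m ∈ DSlice h (δ' p) :=
        dslice_mono h ((htle p m hm).trans (min_le_left _ _)) (hyS m)
      obtain ⟨i, hi⟩ := Set.mem_iUnion.1 (hcov p hyp)
      have hne : (A p i).Nonempty := ⟨_, hi⟩
      refine Set.mem_biUnion (Set.mem_union_left _ (Set.mem_range_self i)) ?_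
      have hceq : (if hne' : (A p i).Nonempty then hne'.choose else x) = hne.choose :=
        dif_pos hne
      rw [hceq]
      have hd : edist (y m) hne.choose ≤ ENNReal.ofReal (1/(p+1)) :=
        le_trans (EMetric.edist_le_diam_of_mem hi hne.choose_spec) (hA p i)
      have hd' : dist (y m) hne.choose ≤ 1/(p+1) := by
        rw [edist_dist] at hd
        exact (ENNReal.ofReal_le_ofReal_iff (by positivity)).1 hd
      exact Metric.mem_ball.2 (lt_of_le_of_lt hd' hp)
  have hcl : IsCompact (closure (Set.range y)) :=
    TotallyBounded.isCompact_of_isClosed htb.closure isClosed_closure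
  obtain ⟨w, hwcl, φ, hφ, hlim⟩ :=
    hcl.tendsto_subseq (fun m => subset_closure (Set.mem_range_self (f := y) m))
  have hwle : ‖w‖ ≤ 1 := by
    have hsub : Set.range y ⊆ Metric.closedBall (0 : X) 1 := by
      rintro _ ⟨m, rfl⟩
      exact mem_closedBall_zero_iff.2 (hyS m).1
    exact mem_closedBall_zero_iff.1
      (closure_minimal hsub Metric.isClosed_closedBall hwcl)
  have hten : Filter.Tendsto (fun m : ℕ => 1/((m:ℝ)+1)) Filter.atTop (𝓝 0) :=
    tendsto_one_div_add_atTop_nhds_zero_nat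
  have hbound : ∀ m : ℕ, (1 : ℝ)/((φ m : ℝ)+1) ≤ 1/((m:ℝ)+1) := by
    intro m
    apply one_div_le_one_div_of_le (by positivity)
    have h1 : (m : ℝ) ≤ (φ m : ℝ) := Nat.cast_le.2 hφ.le_apply
    linarith
  have hhw : h w = 1 := by
    have h1 : Filter.Tendsto (fun m => h (y (φ m))) Filter.atTop (𝓝 (h w)) :=
      (h.continuous.tendsto w).comp hlim
    have h0 : Filter.Tendsto (fun m : ℕ => (1:ℝ) - 1/((m:ℝ)+1)) Filter.atTop (𝓝 1) := by
      simpa using tendsto_const_nhds.sub hten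
    have hge : 1 ≤ h w := by
      refine le_of_tendsto_of_tendsto' h0 h1 fun m => ?_
      have ht1 : t (φ m) ≤ 1/((φ m : ℝ)+1) :=
        (htle (φ m) (φ m) le_rfl).trans (min_le_right _ _)
      have := (hyS (φ m)).2
      have := hbound m
      linarith
    have hle : h w ≤ 1 := by
      calc h w ≤ ‖h‖ * ‖w‖ := le_trans (le_abs_self _) (h.le_opNorm w)
      _ ≤ 1 * 1 := mul_le_mul hh hwle (norm_nonneg _) zero_le_one
      _ = 1 := one_mul 1
    linarith
  have hxw : ‖x - w‖ = 2 := by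
    have h1 : Filter.Tendsto (fun m => ‖x - y (φ m)‖) Filter.atTop (𝓝 ‖x - w‖) :=
      (Filter.Tendsto.norm (tendsto_const_nhds.sub hlim))
    have h0 : Filter.Tendsto (fun m : ℕ => (2:ℝ) - 1/((m:ℝ)+1)) Filter.atTop (𝓝 2) := by
      simpa using tendsto_const_nhds.sub hten
    have hge : 2 ≤ ‖x - w‖ := by
      refine le_of_tendsto_of_tendsto' h0 h1 fun m => ?_
      have := hyd (φ m)
      have := hbound m
      linarith
    have hle : ‖x - w‖ ≤ 2 := by
      calc ‖x - w‖ ≤ ‖x‖ + ‖w‖ := norm_sub_le x w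
      _ ≤ 1 + 1 := by rw [hx]; linarith
      _ = 2 := by norm_num
    linarith
  exact ⟨w, hwle, hhw, hxw⟩

lemma step [CompleteSpace X] {x : X} (hx : ‖x‖ = 1) {f : StrongDual ℝ X}
    (hαf : AlphaCond f)
    (hD : ∀ g : StrongDual ℝ X, ‖g‖ = 1 → g x = 1 → ∀ ε : ℝ, 0 < ε →
      sSup ((fun y => ‖x - y‖) '' DSlice g ε) = 2)
    (k : ℕ) (g : ℕ → StrongDual ℝ X) (hg0 : g 0 = f)
    (hgn : ∀ i ≤ k, ‖g i‖ ≤ 1) (hgx : ∀ i ≤ k, g i x = 1) :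
    ∃ w : X, ‖w‖ ≤ 1 ∧ (∀ i ≤ k, g i w = 1) ∧ ‖x - w‖ = 2 := by
  set h : StrongDual ℝ X := ((k+1 : ℝ))⁻¹ • ∑ i ∈ Finset.range (k+1), g i with hhdef
  have hk1 : (0:ℝ) < (k+1 : ℝ) := by positivity
  have happly : ∀ z : X, h z = ((k+1:ℝ))⁻¹ * ∑ i ∈ Finset.range (k+1), g i z := by
    intro z
    simp [hhdef, ContinuousLinearMap.sum_apply]
  have hhx : h x = 1 := by
    rw [happly]
    rw [Finset.sum_congr rfl fun i hi => hgx i (by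
      have := Finset.mem_range.1 hi; omega)]
    rw [Finset.sum_const, Finset.card_range, nsmul_eq_mul, mul_one]
    push_cast
    field_simp
  have hhn : ‖h‖ ≤ 1 := by
    have hs : ‖∑ i ∈ Finset.range (k+1), g i‖ ≤ (k+1 : ℝ) := by
      calc ‖∑ i ∈ Finset.range (k+1), g i‖ ≤ ∑ i ∈ Finset.range (k+1), ‖g i‖ :=
        norm_sum_le _ _
      _ ≤ ∑ i ∈ Finset.range (k+1), 1 := by
          apply Finset.sum_le_sum
          intro i hi
          exact hgn i (by have := Finset.mem_range.1 hi; omega)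
      _ = (k+1 : ℝ) := by simp
    calc ‖h‖ ≤ ‖((k+1:ℝ))⁻¹‖ * ‖∑ i ∈ Finset.range (k+1), g i‖ := by rw [hhdef]; exact _root_.norm_smul_le ((k+1:ℝ))⁻¹ (∑ i ∈ Finset.range (k+1), g i)
    _ ≤ ((k+1:ℝ))⁻¹ * (k+1 : ℝ) := by
        apply mul_le_mul _ hs (norm_nonneg _) (by positivity)
        rw [Real.norm_eq_abs, abs_of_pos (by positivity)]
    _ = 1 := by field_simp
  have hh1 : ‖h‖ = 1 := by
    apply le_antisymm hhn
    have : (1:ℝ) = h x := hhx.symm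
    calc (1:ℝ) = h x := hhx.symm
    _ ≤ ‖h‖ * ‖x‖ := le_trans (le_abs_self _) (h.le_opNorm x)
    _ = ‖h‖ := by rw [hx, mul_one]
  have hαh : AlphaCond h := by
    intro ε hε
    obtain ⟨δ, hδ, m, A, hA, hcov⟩ := hαf ε hε
    refine ⟨δ/(k+1), by positivity, m, A, hA, ?_⟩
    intro z hz
    apply hcov
    obtain ⟨hz1, hz2⟩ := hz
    refine ⟨hz1, ?_⟩
    rw [← hg0]
    have hsumz : (k+1:ℝ) - δ < ∑ i ∈ Finset.range (k+1), g i z := by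
      have := hz2
      rw [happly] at this
      have h2 : (k+1:ℝ) * (1 - δ/(k+1))
          < (k+1:ℝ) * (((k+1:ℝ))⁻¹ * ∑ i ∈ Finset.range (k+1), g i z) :=
        mul_lt_mul_of_pos_left this hk1
      rw [← mul_assoc, mul_inv_cancel₀ (ne_of_gt hk1), one_mul] at h2
      have h3 : (k+1:ℝ) * (1 - δ/(k+1)) = (k+1:ℝ) - δ := by
        field_simp
      linarith [h3 ▸ h2]
    have hsplit : ∑ i ∈ Finset.range (k+1), g i z
        = (∑ i ∈ Finset.range k, g (i+1) z) + g 0 z := Finset.sum_range_succ' _ k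
    have hterm : ∀ i ∈ Finset.range k, g (i+1) z ≤ (1:ℝ) := by
      intro i hi
      have hi' : i + 1 ≤ k := by have := Finset.mem_range.1 hi; omega
      calc g (i+1) z ≤ ‖g (i+1)‖ * ‖z‖ := le_trans (le_abs_self _) ((g (i+1)).le_opNorm z)
        _ ≤ 1 * 1 := mul_le_mul (hgn _ hi') hz1 (norm_nonneg _) zero_le_one
        _ = 1 := one_mul 1
    have htail : ∑ i ∈ Finset.range k, g (i+1) z ≤ (k:ℝ) := by
      have := Finset.sum_le_sum hterm
      simpa using this
    linarith [hsplit ▸ hsumz]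
  obtain ⟨w, hw1, hhw, hxw⟩ := extract hx hhn hhx hαh (hD h hh1 hhx)
  refine ⟨w, hw1, ?_, hxw⟩
  have hsum : ∑ i ∈ Finset.range (k+1), g i w = (k+1:ℝ) := by
    have := hhw
    rw [happly] at this
    field_simp at this
    linarith [this]
  have hbd : ∀ i ∈ Finset.range (k+1), g i w ≤ 1 := by
    intro i hi
    have hi' : i ≤ k := by have := Finset.mem_range.1 hi; omega
    calc g i w ≤ ‖g i‖ * ‖w‖ := le_trans (le_abs_self _) ((g i).le_opNorm w)
    _ ≤ 1 * 1 := mul_le_mul (hgn _ hi') hw1 (norm_nonneg _) zero_le_one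
    _ = 1 := one_mul 1
  intro j hj
  by_contra hne
  have hjlt : g j w < 1 := lt_of_le_of_ne (hbd j (Finset.mem_range.2 (by omega))) hne
  have : ∑ i ∈ Finset.range (k+1), g i w < ∑ i ∈ Finset.range (k+1), (1:ℝ) :=
    Finset.sum_lt_sum hbd ⟨j, Finset.mem_range.2 (by omega), hjlt⟩
  rw [hsum] at this
  simp at this

lemma hb_next {x w : X} (hx : ‖x‖ = 1) (hw : ‖w‖ ≤ 1) (hd : ‖x - w‖ = 2) :
    ∃ g : StrongDual ℝ X, ‖g‖ ≤ 1 ∧ g x = 1 ∧ g w = -1 := by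
  have hne : x - w ≠ 0 := by
    intro h0
    rw [h0, norm_zero] at hd
    norm_num at hd
  obtain ⟨g, hg1, hgv⟩ := exists_dual_vector ℝ (x - w) (norm_ne_zero_iff.2 hne)
  have h2 : g x - g w = 2 := by
    have : g (x - w) = ‖x - w‖ := by exact_mod_cast hgv
    rw [map_sub] at this
    rw [this, hd]
  have hgx : g x ≤ 1 := by
    calc g x ≤ ‖g‖ * ‖x‖ := le_trans (le_abs_self _) (g.le_opNorm x)
    _ = 1 := by rw [hg1, hx, mul_one]
  have hgw : -1 ≤ g w := by
    have : -(g w) ≤ ‖g‖ * ‖w‖ := le_trans (neg_le_abs _) (g.le_opNorm w)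
    rw [hg1, one_mul] at this
    linarith
  exact ⟨g, hg1.le, by linarith, by linarith⟩

lemma chain [CompleteSpace X] {x : X} (hx : ‖x‖ = 1) {f : StrongDual ℝ X}
    (hf1 : ‖f‖ = 1) (hfx : f x = 1) (hαf : AlphaCond f)
    (hD : ∀ g : StrongDual ℝ X, ‖g‖ = 1 → g x = 1 → ∀ ε : ℝ, 0 < ε →
      sSup ((fun y => ‖x - y‖) '' DSlice g ε) = 2) :
    ∀ k : ℕ, ∃ (g : ℕ → StrongDual ℝ X) (w : ℕ → X),
      g 0 = f ∧ (∀ i ≤ k, ‖g i‖ ≤ 1 ∧ g i x = 1) ∧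
      ∀ i < k, ‖w i‖ ≤ 1 ∧ (∀ j ≤ i, g j (w i) = 1) ∧ g (i+1) (w i) = -1 := by
  intro k
  induction k with
  | zero =>
    exact ⟨fun _ => f, fun _ => 0, rfl, fun i _ => ⟨hf1.le, hfx⟩,
      fun i hi => absurd hi (by omega)⟩
  | succ k ih =>
    obtain ⟨g, w, hg0, hgp, hwp⟩ := ih
    obtain ⟨w', hw'1, hw'g, hw'd⟩ :=
      step hx hαf hD k g hg0 (fun i hi => (hgp i hi).1) (fun i hi => (hgp i hi).2)
    obtain ⟨g', hg'1, hg'x, hg'w⟩ := hb_next hx hw'1 hw'd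
    refine ⟨fun i => if i = k+1 then g' else g i,
      fun i => if i = k then w' else w i, ?_, ?_, ?_⟩
    · simp [hg0]
    · intro i hi
      by_cases hik : i = k + 1
      · simp [hik, hg'1, hg'x]
      · simp only [if_neg hik]
        exact hgp i (by omega)
    · intro i hi
      by_cases hik : i = k
      · subst hik
        refine ⟨by simp [hw'1], ?_, ?_⟩
        · intro j hj
          have hj' : j ≠ i + 1 := by omega
          simp only [if_pos rfl, if_neg hj']
          exact hw'g j hj
        · simp [hg'w]
      · have hik' : i < k := by omega
        obtain ⟨hA, hB, hC⟩ := hwp i hik'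
        refine ⟨by simp [if_neg hik, hA], ?_, ?_⟩
        · intro j hj
          have hj' : j ≠ k + 1 := by omega
          simp only [if_neg hik, if_neg hj']
          exact hB j hj
        · have hj' : i + 1 ≠ k + 1 := by omega
          simp only [if_neg hik, if_neg hj']
          exact hC

end Aux

/-- If `x` in the unit sphere of a real Banach space `X` is α-strongly exposed, i.e.,
there is a norm-one functional `f` with `f x = 1` such that for every `ε > 0` some slice
`S(f, δ)` of the unit ball can be covered by finitely many sets of diameter at most `ε`,
then `x` is not a 𝔇-point. -/
theorem alphaStronglyExposed_not_dPoint
    (X : Type*) [NormedAddCommGroup X] [NormedSpace ℝ X] [CompleteSpace X]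
    (x : X) (hx : ‖x‖ = 1)
    (hexp : ∃ f : StrongDual ℝ X, ‖f‖ = 1 ∧ f x = 1 ∧
      ∀ ε : ℝ, 0 < ε → ∃ δ : ℝ, 0 < δ ∧
        ∃ (n : ℕ) (A : Fin n → Set X),
          (∀ i, EMetric.diam (A i) ≤ ENNReal.ofReal ε) ∧
          {y : X | ‖y‖ ≤ 1 ∧ 1 - δ < f y} ⊆ ⋃ i, A i) :
    ¬ IsDPoint X x := by
  intro hDP
  obtain ⟨-, hD⟩ := hDP
  obtain ⟨f, hf1, hfx, hαf⟩ := hexp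
  have hαf' : AlphaCond f := hαf
  have hD' : ∀ g : StrongDual ℝ X, ‖g‖ = 1 → g x = 1 → ∀ ε : ℝ, 0 < ε →
      sSup ((fun y => ‖x - y‖) '' DSlice g ε) = 2 := hD
  obtain ⟨δ₀, hδ₀, nn, A, hdiam, hcov⟩ := hαf' 1 one_pos
  obtain ⟨g, w, hg0, hgp, hwp⟩ := chain hx hf1 hfx hαf' hD' (nn+1)
  have hmem : ∀ i : Fin (nn+1), w (i : ℕ) ∈ DSlice f δ₀ := by
    intro i
    have hi : (i : ℕ) < nn + 1 := i.isLt
    obtain ⟨hA, hB, _⟩ := hwp (i : ℕ) hi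
    have hf := hB 0 (Nat.zero_le _)
    rw [hg0] at hf
    exact ⟨hA, by rw [hf]; linarith⟩
  have hsel : ∀ i : Fin (nn+1), ∃ l : Fin nn, w (i : ℕ) ∈ A l :=
    fun i => Set.mem_iUnion.1 (hcov (hmem i))
  choose c hc using hsel
  obtain ⟨i, j, hne, hcij⟩ := Fintype.exists_ne_map_eq_of_card_lt c (by simp)
  have key : ∀ a b : ℕ, a < b → b < nn + 1 → (2:ℝ) ≤ ‖w a - w b‖ := by
    intro a b hab hb
    have h1 : g (a+1) (w b) = 1 := (hwp b hb).2.1 (a+1) (by omega)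
    have h2 : g (a+1) (w a) = -1 := (hwp a (by omega)).2.2
    have h3 : ‖g (a+1)‖ ≤ 1 := (hgp (a+1) (by omega)).1
    have h4 : g (a+1) (w b - w a) = 2 := by rw [map_sub, h1, h2]; ring
    calc (2:ℝ) = g (a+1) (w b - w a) := h4.symm
    _ ≤ ‖g (a+1)‖ * ‖w b - w a‖ := le_trans (le_abs_self _) ((g (a+1)).le_opNorm _)
    _ ≤ 1 * ‖w b - w a‖ := mul_le_mul_of_nonneg_right h3 (norm_nonneg _)
    _ = ‖w a - w b‖ := by rw [one_mul, norm_sub_rev]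
  have hkey : (2:ℝ) ≤ ‖w (i : ℕ) - w (j : ℕ)‖ := by
    rcases lt_or_gt_of_ne (fun h => hne (Fin.ext h)) with hlt | hgt
    · exact key _ _ hlt j.isLt
    · rw [norm_sub_rev]
      exact key _ _ hgt i.isLt
  have hdij : edist (w (i : ℕ)) (w (j : ℕ)) ≤ ENNReal.ofReal 1 := by
    refine le_trans (EMetric.edist_le_diam_of_mem (hc i) ?_) (hdiam (c i))
    rw [hcij]
    exact hc j
  have : dist (w (i : ℕ)) (w (j : ℕ)) ≤ 1 := by
    rw [edist_dist] at hdij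
    exact (ENNReal.ofReal_le_ofReal_iff zero_le_one).1 hdij
  rw [dist_eq_norm] at this
  linarith
end

section
/- Let X be an infinite-dimensional real Banach space and let x ∈ S_X be an asymptotically smooth point, i.e., lim_{t→0+} ρ̄(t,x)/t = 0, where for t > 0 the modulus of asymptotic smoothness at x is ρ̄(t,x) := inf_Y sup{ ‖x + t y‖ − 1 : y ∈ Y, ‖y‖ = 1 }, the infimum taken over all closed subspaces Y of X of finite codimension. Then x is not a 𝔇-point. -/
set_option maxHeartbeats 1000000


open NormedSpace Topology Filter

/-- The modulus of asymptotic smoothness `ρ̄(t, x)` of `X` at `x`: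
the infimum over all closed finite-codimensional subspaces `Y` of `X` of
`sup { ‖x + t • y‖ - 1 : y ∈ Y, ‖y‖ = 1 }`. -/
noncomputable def asymptoticSmoothnessModulus (X : Type*) [NormedAddCommGroup X]
    [NormedSpace ℝ X] (t : ℝ) (x : X) : ℝ :=
  sInf { r : ℝ | ∃ Y : Submodule ℝ X, IsClosed (Y : Set X) ∧
    FiniteDimensional ℝ (X ⧸ Y) ∧
    r = sSup { s : ℝ | ∃ y ∈ Y, ‖y‖ = 1 ∧ s = ‖x + t • y‖ - 1 } }

section Aux

variable {X : Type*} [NormedAddCommGroup X] [NormedSpace ℝ X]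

lemma ne_bot_of_fd_quot (hinf : ¬ FiniteDimensional ℝ X) (Y : Submodule ℝ X)
    (hfd : FiniteDimensional ℝ (X ⧸ Y)) : Y ≠ ⊥ := by
  intro h
  exact hinf ((Y.quotEquivOfEqBot h).finiteDimensional)

lemma exists_unit_vector {Y : Submodule ℝ X} (h : Y ≠ ⊥) : ∃ y ∈ Y, ‖y‖ = 1 := by
  obtain ⟨v, hv, hv0⟩ := Submodule.exists_mem_ne_zero_of_ne_bot h
  exact ⟨(‖v‖⁻¹ : ℝ) • v, Y.smul_mem _ hv, norm_smul_inv_norm hv0⟩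

lemma exists_good_subspace (hinf : ¬ FiniteDimensional ℝ X) (x : X) (hx : ‖x‖ = 1)
    (hsmooth : Tendsto (fun t => asymptoticSmoothnessModulus X t x / t)
      (nhdsWithin 0 (Set.Ioi 0)) (nhds 0)) {δ : ℝ} (hδ : 0 < δ) :
    ∃ t : ℝ, 0 < t ∧ ∃ Y : Submodule ℝ X, IsClosed (Y : Set X) ∧
      FiniteDimensional ℝ (X ⧸ Y) ∧ Y ≠ ⊥ ∧
      ∀ y ∈ Y, ‖y‖ = 1 → ‖x + t • y‖ ≤ 1 + t * δ := by
  have h1 : ∀ᶠ t in nhdsWithin (0:ℝ) (Set.Ioi 0),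
      asymptoticSmoothnessModulus X t x / t < δ := hsmooth.eventually_lt_const hδ
  obtain ⟨t, hlt, ht⟩ := (h1.and self_mem_nhdsWithin).exists
  have ht : (0:ℝ) < t := ht
  refine ⟨t, ht, ?_⟩
  have hmod : asymptoticSmoothnessModulus X t x < t * δ := by
    have := (div_lt_iff₀ ht).mp hlt
    linarith
  have hne : { r : ℝ | ∃ Y : Submodule ℝ X, IsClosed (Y : Set X) ∧
      FiniteDimensional ℝ (X ⧸ Y) ∧
      r = sSup { s : ℝ | ∃ y ∈ Y, ‖y‖ = 1 ∧ s = ‖x + t • y‖ - 1 } }.Nonempty := by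
    refine ⟨_, ⟨⊤, ?_, ?_, rfl⟩⟩
    · rw [Submodule.top_coe]; exact isClosed_univ
    · have : Subsingleton (X ⧸ (⊤ : Submodule ℝ X)) :=
        Submodule.Quotient.subsingleton_iff.mpr rfl
      have : Finite (X ⧸ (⊤ : Submodule ℝ X)) := Finite.of_subsingleton
      exact Module.Finite.of_finite
  obtain ⟨r, ⟨Y, hcl, hfd, hr⟩, hrlt⟩ := exists_lt_of_csInf_lt hne hmod
  have hYne : Y ≠ ⊥ := ne_bot_of_fd_quot hinf Y hfd
  refine ⟨Y, hcl, hfd, hYne, fun y hy hny => ?_⟩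
  have hbdd : BddAbove { s : ℝ | ∃ y ∈ Y, ‖y‖ = 1 ∧ s = ‖x + t • y‖ - 1 } := by
    refine ⟨t, fun s hs => ?_⟩
    obtain ⟨z, hz, hnz, rfl⟩ := hs
    have : ‖x + t • z‖ ≤ ‖x‖ + ‖t • z‖ := norm_add_le _ _
    rw [norm_smul, hnz] at this
    simp only [Real.norm_eq_abs, abs_of_pos ht] at this
    linarith
  have hmem : ‖x + t • y‖ - 1 ≤ r := by
    rw [hr]
    exact le_csSup hbdd ⟨y, hy, hny, rfl⟩
  linarith


noncomputable def annih (Y : Submodule ℝ X) : Submodule ℝ (StrongDual ℝ X) where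
  carrier := {ψ | ∀ y ∈ Y, ψ y = 0}
  add_mem' := by intro a b ha hb y hy; simp [ha y hy, hb y hy]
  zero_mem' := by intro y hy; simp
  smul_mem' := by intro c a ha y hy; simp [ha y hy]

/-- Approximation of almost-norming functionals by annihilator elements. -/
lemma approx_annih {Y : Submodule ℝ X} {x : X} {t δ : ℝ} (ht : 0 < t) (hδ : 0 < δ)
    (hbnd : ∀ y ∈ Y, ‖y‖ = 1 → ‖x + t • y‖ ≤ 1 + t * δ)
    (φ : StrongDual ℝ X) (hφ : ‖φ‖ ≤ 1) (hφx : 1 - t * δ ≤ φ x) :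
    ∃ ψ ∈ annih Y, ‖φ - ψ‖ ≤ 2 * δ := by
  have hunit : ∀ y ∈ Y, ‖y‖ = 1 → φ y ≤ 2 * δ := by
    intro y hy hny
    have h1 : φ x + t * φ y ≤ 1 + t * δ := by
      have h4 : φ (x + t • y) ≤ ‖φ (x + t • y)‖ := by
        rw [Real.norm_eq_abs]; exact le_abs_self _
      have h5 := le_trans h4 (φ.le_opNorm (x + t • y))
      rw [map_add, map_smul, smul_eq_mul] at h5
      have h2 : ‖x + t • y‖ ≤ 1 + t * δ := hbnd y hy hny
      have h3 : ‖φ‖ * ‖x + t • y‖ ≤ 1 * (1 + t * δ) := by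
        apply mul_le_mul hφ h2 (norm_nonneg _)
        linarith
      linarith
    nlinarith
  have habs : ∀ v : Y, |φ v| ≤ (2 * δ) * ‖v‖ := by
    intro v
    rcases eq_or_ne (v : X) 0 with h0 | h0
    · simp [h0]
    · have hm : ((‖(v:X)‖⁻¹ : ℝ) • (v : X)) ∈ Y := Y.smul_mem _ v.2
      have hn : ‖(‖(v:X)‖⁻¹ : ℝ) • (v : X)‖ = 1 := norm_smul_inv_norm h0
      have h1 := hunit _ hm hn
      have h2 := hunit _ (Y.smul_mem (-(‖(v:X)‖⁻¹ : ℝ)) v.2) (by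
        rw [neg_smul, norm_neg]; exact hn)
      rw [map_smul] at h1 h2
      have hvpos : (0:ℝ) < ‖(v:X)‖ := norm_pos_iff.mpr h0
      rw [abs_le]
      constructor
      · simp only [neg_smul, smul_eq_mul, neg_mul] at h2
        rw [neg_le]
        calc -φ v = ‖(v:X)‖ * (-(‖(v:X)‖⁻¹ * φ v)) := by field_simp
        _ ≤ ‖(v:X)‖ * (2*δ) := by
            apply mul_le_mul_of_nonneg_left h2 hvpos.le
        _ = 2 * δ * ‖(v:X)‖ := by ring
      · simp only [smul_eq_mul] at h1
        calc φ v = ‖(v:X)‖ * (‖(v:X)‖⁻¹ * φ v) := by field_simp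
        _ ≤ ‖(v:X)‖ * (2*δ) := mul_le_mul_of_nonneg_left h1 hvpos.le
        _ = 2 * δ * ‖(v:X)‖ := by ring
  set r : Y →L[ℝ] ℝ := φ.comp Y.subtypeL with hr
  have hrn : ‖r‖ ≤ 2 * δ := by
    apply ContinuousLinearMap.opNorm_le_bound _ (by linarith)
    intro v
    simpa [hr, Real.norm_eq_abs] using habs v
  obtain ⟨g, hg_ext, hg_norm⟩ := exists_extension_norm_eq Y r
  refine ⟨φ - g, ?_, ?_⟩
  · intro y hy
    have := hg_ext ⟨y, hy⟩
    simp only [ContinuousLinearMap.sub_apply]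
    rw [show ((⟨y, hy⟩ : Y) : X) = y from rfl] at this
    rw [this]
    simp [hr]
  · have : φ - (φ - g) = g := by abel
    rw [this, hg_norm]
    exact hrn

lemma annih_fd (Y : Submodule ℝ X) (hfd : FiniteDimensional ℝ (X ⧸ Y)) :
    FiniteDimensional ℝ (annih Y) := by
  have hle : ∀ ψ : annih Y, Y ≤ LinearMap.ker (ψ : StrongDual ℝ X).toLinearMap := by
    intro ψ y hy
    exact ψ.2 y hy
  let L : annih Y →ₗ[ℝ] Module.Dual ℝ (X ⧸ Y) :=
    { toFun := fun ψ => Y.liftQ (ψ : StrongDual ℝ X).toLinearMap (hle ψ)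
      map_add' := by
        intro a b
        refine Submodule.linearMap_qext _ ?_
        ext z
        simp [Submodule.liftQ_apply]
      map_smul' := by
        intro c a
        refine Submodule.linearMap_qext _ ?_
        ext z
        simp [Submodule.liftQ_apply] }
  have hinj : Function.Injective L := by
    intro a b hab
    ext z
    have := congrArg (fun (f : Module.Dual ℝ (X ⧸ Y)) => f (Submodule.Quotient.mk z)) hab
    simpa [L, Submodule.liftQ_apply] using this
  exact FiniteDimensional.of_injective L hinj

lemma key_compact (hinf : ¬ FiniteDimensional ℝ X) (x : X) (hx : ‖x‖ = 1)
    (hsmooth : Tendsto (fun t => asymptoticSmoothnessModulus X t x / t)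
      (nhdsWithin 0 (Set.Ioi 0)) (nhds 0))
    (φ : ℕ → StrongDual ℝ X) (hφ : ∀ n, ‖φ n‖ ≤ 1)
    (htend : Tendsto (fun n => φ n x) atTop (𝓝 1)) :
    ∃ ψ : StrongDual ℝ X, ‖ψ‖ ≤ 1 ∧ ψ x = 1 ∧ ∃ s : ℕ → ℕ, StrictMono s ∧
      Tendsto (fun n => φ (s n)) atTop (𝓝 ψ) := by
  have hTB : TotallyBounded (Set.range φ) := by
    rw [Metric.totallyBounded_iff]
    intro ε hε
    set δ : ℝ := min (ε/8) (1/2) with hδdef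
    have hδε : δ ≤ ε/8 := min_le_left _ _
    have hδhalf : δ ≤ 1/2 := min_le_right _ _
    have hδ : 0 < δ := lt_min (by linarith) one_half_pos
    obtain ⟨t, ht, Y, hcl, hfd, hYne, hbnd⟩ := exists_good_subspace hinf x hx hsmooth hδ
    have hev : ∀ᶠ n in atTop, 1 - t*δ < φ n x :=
      htend.eventually_const_lt (by nlinarith)
    obtain ⟨N, hN⟩ := eventually_atTop.mp hev
    haveI := annih_fd Y hfd
    have hC : IsCompact (Subtype.val '' (Metric.closedBall (0 : annih Y) 2)) :=
      (isCompact_closedBall _ _).image continuous_subtype_val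
    obtain ⟨T₀, hT₀fin, hT₀cov⟩ :=
      Metric.totallyBounded_iff.mp hC.totallyBounded (ε/2) (by linarith)
    refine ⟨T₀ ∪ (φ '' Set.Iio N), hT₀fin.union ((Set.finite_Iio N).image φ), ?_⟩
    rintro ζ ⟨n, rfl⟩
    rcases lt_or_ge n N with hn | hn
    · exact Set.mem_biUnion (Set.mem_union_right _ ⟨n, hn, rfl⟩) (Metric.mem_ball_self hε)
    · obtain ⟨ψ, hψmem, hψnorm⟩ :=
        approx_annih ht hδ hbnd (φ n) (hφ n) (le_of_lt (hN n hn))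
      have hψn2 : ‖ψ‖ ≤ 2 := by
        have h1 : ‖ψ‖ - ‖φ n‖ ≤ ‖ψ - φ n‖ := norm_sub_norm_le _ _
        rw [norm_sub_rev] at h1
        have := hφ n
        linarith
      have hψball : ψ ∈ Subtype.val '' (Metric.closedBall (0 : annih Y) 2) := by
        refine ⟨⟨ψ, hψmem⟩, ?_, rfl⟩
        rw [Metric.mem_closedBall]
        exact (dist_zero_right _).trans_le hψn2
      obtain ⟨p, hpT, hpball⟩ := Set.mem_iUnion₂.mp (hT₀cov hψball)
      refine Set.mem_biUnion (Set.mem_union_left _ hpT) ?_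
      rw [Metric.mem_ball]
      have hd1 : dist (φ n) ψ ≤ 2*δ := by rw [dist_eq_norm]; exact hψnorm
      have hd2 : dist ψ p < ε/2 := hpball
      calc dist (φ n) p ≤ dist (φ n) ψ + dist ψ p := dist_triangle _ _ _
      _ < 2*δ + ε/2 := by linarith
      _ ≤ ε := by linarith
  have hcomp : IsCompact (closure (Set.range φ)) :=
    hTB.closure.isCompact_of_isClosed isClosed_closure
  obtain ⟨ψ, hψmem, s, hs, hconv⟩ :=
    hcomp.tendsto_subseq (fun n => subset_closure (Set.mem_range_self n))
  have hconv' : Tendsto (fun n => φ (s n)) atTop (𝓝 ψ) := hconv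
  refine ⟨ψ, ?_, ?_, s, hs, hconv'⟩
  · have hsub : Set.range φ ⊆ Metric.closedBall 0 1 := by
      rintro _ ⟨n, rfl⟩
      rw [Metric.mem_closedBall, dist_zero_right]
      exact hφ n
    have := closure_minimal hsub Metric.isClosed_closedBall hψmem
    rwa [Metric.mem_closedBall, dist_zero_right] at this
  · have h1 : Tendsto (fun n => φ (s n) x) atTop (𝓝 (ψ x)) :=
      ((ContinuousLinearMap.apply ℝ ℝ x).continuous.tendsto ψ).comp hconv'
    have h2 : Tendsto (fun n => φ (s n) x) atTop (𝓝 1) :=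
      htend.comp hs.tendsto_atTop
    exact tendsto_nhds_unique h1 h2

lemma slice_point {x : X} (hx : ‖x‖ = 1) {m : StrongDual ℝ X} (hmn : ‖m‖ = 1) (hmx : m x = 1)
    {ε : ℝ} (hε : 0 < ε)
    (hsup : sSup ((fun y => ‖x - y‖) '' {y : X | ‖y‖ ≤ 1 ∧ 1 - ε < m y}) = 2) :
    ∃ z : X, ‖z‖ ≤ 1 ∧ 1 - ε < m z ∧ 2 - ε < ‖x - z‖ := by
  by_contra hcon
  push_neg at hcon
  have hle : sSup ((fun y => ‖x - y‖) '' {y : X | ‖y‖ ≤ 1 ∧ 1 - ε < m y}) ≤ 2 - ε := by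
    apply csSup_le
    · exact ⟨‖x - x‖, ⟨x, ⟨by rw [hx], by rw [hmx]; linarith⟩, rfl⟩⟩
    · rintro v ⟨y, ⟨hy1, hy2⟩, rfl⟩
      exact hcon y hy1 hy2
  rw [hsup] at hle
  linarith

lemma eval_le_of_norm_le {f : StrongDual ℝ X} {z : X} (hz : ‖z‖ ≤ 1) : f z ≤ ‖f‖ := by
  have h1 : f z ≤ ‖f z‖ := by rw [Real.norm_eq_abs]; exact le_abs_self _
  have h2 := f.le_opNorm z
  nlinarith [norm_nonneg f, norm_nonneg (f z)]

lemma sep_step {x : X} (hinf : ¬ FiniteDimensional ℝ X) (hx : ‖x‖ = 1)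
    (hsmooth : Tendsto (fun t => asymptoticSmoothnessModulus X t x / t)
      (nhdsWithin 0 (Set.Ioi 0)) (nhds 0))
    (hD : IsDPoint X x) (k : ℕ) (F : ℕ → StrongDual ℝ X)
    (hF : ∀ j < k, ‖F j‖ = 1 ∧ F j x = 1) :
    ∃ h : StrongDual ℝ X, ‖h‖ = 1 ∧ h x = 1 ∧ ∀ j < k, 3/2 ≤ ‖F j - h‖ := by
  have hxne : x ≠ 0 := by intro h; rw [h, norm_zero] at hx; linarith
  rcases Nat.eq_zero_or_pos k with hk0 | hk
  · obtain ⟨g, hg1, hg2⟩ := exists_dual_vector ℝ x (norm_ne_zero_iff.mpr hxne)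
    refine ⟨g, hg1, ?_, by omega⟩
    rw [hg2, hx]
    norm_num
  · -- the average functional
    set m : StrongDual ℝ X := (k:ℝ)⁻¹ • ∑ j ∈ Finset.range k, F j with hm
    have hkR : (0:ℝ) < (k:ℝ) := by exact_mod_cast hk
    have hmx : m x = 1 := by
      rw [hm, ContinuousLinearMap.smul_apply, ContinuousLinearMap.sum_apply]
      have : ∑ j ∈ Finset.range k, (F j) x = (k:ℝ) := by
        rw [Finset.sum_congr rfl (fun j hj => (hF j (Finset.mem_range.mp hj)).2)]
        simp
      rw [this, smul_eq_mul, inv_mul_cancel₀ hkR.ne']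
    have hmle : ‖m‖ ≤ 1 := by
      rw [hm]
      have h1 : ‖∑ j ∈ Finset.range k, F j‖ ≤ (k:ℝ) := by
        calc ‖∑ j ∈ Finset.range k, F j‖ ≤ ∑ j ∈ Finset.range k, ‖F j‖ :=
          norm_sum_le _ _
        _ = (k:ℝ) := by
          rw [Finset.sum_congr rfl (fun j hj => (hF j (Finset.mem_range.mp hj)).1)]
          simp
      rw [norm_smul, Real.norm_eq_abs, abs_of_pos (by positivity)]
      have h2 : (k:ℝ)⁻¹ * ‖∑ j ∈ Finset.range k, F j‖ ≤ (k:ℝ)⁻¹ * (k:ℝ) :=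
        mul_le_mul_of_nonneg_left h1 (by positivity)
      rw [inv_mul_cancel₀ hkR.ne'] at h2
      exact h2
    have hmnorm : ‖m‖ = 1 := by
      refine le_antisymm hmle ?_
      have h3 := m.le_opNorm x
      rw [hmx, hx, mul_one] at h3
      simpa using h3
    have hεpos : ∀ n : ℕ, (0:ℝ) < 1/(n+1) := fun n => by positivity
    have hεle1 : ∀ n : ℕ, 1/((n:ℝ)+1) ≤ 1 := by
      intro n
      rw [div_le_one (by positivity)]
      linarith [Nat.cast_nonneg (α := ℝ) n]
    have hzex : ∀ n : ℕ, ∃ z : X, ‖z‖ ≤ 1 ∧ 1 - 1/(n+1) < m z ∧ 2 - 1/(n+1) < ‖x - z‖ :=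
      fun n => slice_point hx hmnorm hmx (hεpos n) (hD.2 m hmnorm hmx _ (hεpos n))
    choose z hz1 hz2 hz3 using hzex
    have hxzne : ∀ n : ℕ, x - z n ≠ 0 := by
      intro n h
      have h3 := hz3 n
      rw [h, norm_zero] at h3
      linarith [hεle1 n]
    choose g hg1 hg2 using fun n => exists_dual_vector ℝ (x - z n) (norm_ne_zero_iff.mpr (hxzne n))
    have hg2' : ∀ n, g n (x - z n) = ‖x - z n‖ := fun n => by exact_mod_cast hg2 n
    have hgle : ∀ n, g n x ≤ 1 := by
      intro n
      have h := eval_le_of_norm_le (f := g n) (z := x) (le_of_eq hx)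
      rwa [hg1 n] at h
    have hgzn : ∀ n, -1 ≤ g n (z n) := by
      intro n
      have h := eval_le_of_norm_le (f := g n) (z := -(z n)) (by rw [norm_neg]; exact hz1 n)
      rw [map_neg, hg1 n] at h
      linarith
    have hggt : ∀ n, 1 - 1/(n+1) < g n x := by
      intro n
      have h1 : g n x - g n (z n) = ‖x - z n‖ := by rw [← map_sub]; exact hg2' n
      have h3 := hz3 n
      have h4 := hgzn n
      linarith
    have htendg : Tendsto (fun n => g n x) atTop (𝓝 1) := by
      have hlow : Tendsto (fun n : ℕ => 1 - 1/((n:ℝ)+1)) atTop (𝓝 1) := by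
        have := tendsto_one_div_add_atTop_nhds_zero_nat (𝕜 := ℝ)
        have h2 := ((tendsto_const_nhds : Tendsto (fun _ : ℕ => (1:ℝ)) atTop (𝓝 1)).sub this)
        simpa using h2
      refine tendsto_of_tendsto_of_tendsto_of_le_of_le hlow tendsto_const_nhds
        (fun n => (hggt n).le) (fun n => hgle n)
    obtain ⟨h, hhle, hhx, s, hsmono, hconv⟩ :=
      key_compact hinf x hx hsmooth g (fun n => (hg1 n).le) htendg
    have hhnorm : ‖h‖ = 1 := by
      refine le_antisymm hhle ?_
      have h3 := h.le_opNorm x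
      rw [hhx, hx, mul_one] at h3
      simpa using h3
    refine ⟨h, hhnorm, hhx, fun j hj => ?_⟩
    -- choose a good index
    have hdist : Tendsto (fun n => ‖g (s n) - h‖) atTop (𝓝 0) := by
      have := (tendsto_iff_norm_sub_tendsto_zero).mp hconv
      simpa using this
    have hev1 : ∀ᶠ n in atTop, ‖g (s n) - h‖ < 1/4 :=
      hdist.eventually_lt_const (by norm_num)
    have hev2 : ∀ᶠ n in atTop, 4*(k+1) ≤ s n := by
      have := hsmono.tendsto_atTop
      exact this.eventually_ge_atTop _
    obtain ⟨n, hn1, hn2⟩ := (hev1.and hev2).exists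
    set i := s n with hi
    set ε : ℝ := 1/(i+1) with hε
    -- F j (z i) is big
    have hsum : ∑ j' ∈ Finset.range k, F j' (z i) = (k:ℝ) * m (z i) := by
      rw [hm, ContinuousLinearMap.smul_apply, ContinuousLinearMap.sum_apply, smul_eq_mul]
      field_simp
    have hsplit : F j (z i) +  ∑ j' ∈ (Finset.range k).erase j, F j' (z i)
        = ∑ j' ∈ Finset.range k, F j' (z i) :=
      Finset.add_sum_erase (Finset.range k) (fun j' => F j' (z i)) (Finset.mem_range.mpr hj)
    have herase : ∑ j' ∈ (Finset.range k).erase j, F j' (z i) ≤ (k:ℝ) - 1 := by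
      have hcard : ((Finset.range k).erase j).card = k - 1 := by
        rw [Finset.card_erase_of_mem (Finset.mem_range.mpr hj), Finset.card_range]
      have hle : ∀ j' ∈ (Finset.range k).erase j, F j' (z i) ≤ 1 := by
        intro j' hj'
        have hj'' := Finset.mem_range.mp (Finset.mem_of_mem_erase hj')
        have := eval_le_of_norm_le (f := F j') (z := z i) (hz1 i)
        rw [(hF j' hj'').1] at this
        exact this
      have := Finset.sum_le_card_nsmul _ _ 1 hle
      rw [hcard] at this
      have hcast : ((k-1 : ℕ) : ℝ) = (k:ℝ) - 1 := by
        have : 1 ≤ k := hk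
        push_cast [this]
        ring
      calc ∑ j' ∈ (Finset.range k).erase j, F j' (z i) ≤ (k-1 : ℕ) • (1:ℝ) := this
      _ = (k:ℝ) - 1 := by rw [nsmul_eq_mul, mul_one, hcast]
    have hFj : 1 - (k:ℝ) * ε ≤ F j (z i) := by
      have h5 := hz2 i
      nlinarith [hsum, hsplit, herase, hkR]
    -- h (z i) is close to -1
    have hgzi : g i (z i) ≤ -1 + ε := by
      have h1 : g i x - g i (z i) = ‖x - z i‖ := by rw [← map_sub]; exact hg2' i
      have h3 := hz3 i
      have h4 := hgle i
      linarith
    have hhzi : h (z i) ≤ -3/4 + ε := by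
      have h1 : h (z i) - g i (z i) ≤ 1/4 := by
        have h2 := eval_le_of_norm_le (f := h - g i) (z := z i) (hz1 i)
        rw [ContinuousLinearMap.sub_apply] at h2
        have h3 : ‖h - g i‖ < 1/4 := by rwa [norm_sub_rev] at hn1
        linarith
      linarith
    -- conclude
    have hεsmall : (k:ℝ) * ε + ε ≤ 1/4 := by
      have hi1 : (4*(k+1) : ℝ) ≤ (i:ℝ) := by exact_mod_cast hn2
      have hipos : (0:ℝ) < (i:ℝ) + 1 := by positivity
      have hεval : ε = 1/((i:ℝ)+1) := hε
      have h6 : ((k:ℝ)+1) * ε ≤ 1/4 := by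
        rw [hεval, mul_one_div, div_le_div_iff₀ hipos (by norm_num)]
        linarith
      nlinarith
    have hfinal : 3/2 ≤ (F j - h) (z i) := by
      rw [ContinuousLinearMap.sub_apply]
      linarith
    have h7 := eval_le_of_norm_le (f := F j - h) (z := z i) (hz1 i)
    linarith


end Aux

/-- If `X` is an infinite-dimensional real Banach space and `x ∈ S_X` is an
asymptotically smooth point, i.e., `ρ̄(t, x) / t → 0` as `t → 0⁺`, then `x` is not a
𝔇-point. -/
theorem asymptoticallySmoothPoint_not_dPoint
    (X : Type*) [NormedAddCommGroup X] [NormedSpace ℝ X] [CompleteSpace X]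
    (hinf : ¬ FiniteDimensional ℝ X)
    (x : X) (hx : ‖x‖ = 1)
    (hsmooth : Tendsto (fun t => asymptoticSmoothnessModulus X t x / t)
      (nhdsWithin 0 (Set.Ioi 0)) (nhds 0)) :
    ¬ IsDPoint X x := by
  intro hD
  classical
  have step := sep_step hinf hx hsmooth hD
  let next : ℕ → (ℕ → StrongDual ℝ X) → StrongDual ℝ X := fun k F =>
    if h : ∀ j < k, ‖F j‖ = 1 ∧ F j x = 1 then (step k F h).choose else 0
  let A : ℕ → (ℕ → StrongDual ℝ X) := fun k => Nat.rec (fun _ => 0)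
      (fun k Ak => fun j => if j = k then next k Ak else Ak j) k
  have hAsucc : ∀ k j, A (k+1) j = if j = k then next k (A k) else A k j :=
    fun k j => rfl
  have hstab : ∀ k j, j < k → A k j = A (j+1) j := by
    intro k
    induction k with
    | zero => omega
    | succ k ih =>
      intro j hj
      rcases Nat.lt_or_ge j k with h | h
      · rw [hAsucc k j, if_neg (by omega)]
        exact ih j h
      · have hjk : j = k := by omega
        subst hjk
        rfl
  have hgood : ∀ k, (∀ j < k, ‖A k j‖ = 1 ∧ (A k j) x = 1) ∧
      (∀ i j, i < j → j < k → 3/2 ≤ ‖A k i - A k j‖) := by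
    intro k
    induction k with
    | zero => exact ⟨by omega, by omega⟩
    | succ k ih =>
      have hcond : ∀ j < k, ‖A k j‖ = 1 ∧ (A k j) x = 1 := ih.1
      have hnext : A (k+1) k = (step k (A k) hcond).choose := by
        rw [hAsucc k k, if_pos rfl]
        simp only [next, dif_pos hcond]
      obtain ⟨hn1, hn2, hn3⟩ := (step k (A k) hcond).choose_spec
      have hkeep : ∀ j < k, A (k+1) j = A k j := by
        intro j hj
        rw [hAsucc k j, if_neg (by omega)]
      constructor
      · intro j hj
        rcases Nat.lt_or_ge j k with h | h
        · rw [hkeep j h]; exact hcond j h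
        · have : j = k := by omega
          subst this
          rw [hnext]
          exact ⟨hn1, hn2⟩
      · intro i j hij hjk
        rcases Nat.lt_or_ge j k with h | h
        · rw [hkeep i (by omega), hkeep j h]
          exact ih.2 i j hij h
        · have : j = k := by omega
          subst this
          rw [hkeep i (by omega), hnext]
          exact hn3 i hij
  set F : ℕ → StrongDual ℝ X := fun j => A (j+1) j with hF
  have hFnorm : ∀ j, ‖F j‖ = 1 := fun j => ((hgood (j+1)).1 j (by omega)).1
  have hFx : ∀ j, F j x = 1 := fun j => ((hgood (j+1)).1 j (by omega)).2
  have hFsep : ∀ i j, i < j → 3/2 ≤ ‖F i - F j‖ := by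
    intro i j hij
    have h1 := (hgood (j+1)).2 i j hij (by omega)
    rwa [hstab (j+1) i (by omega)] at h1
  obtain ⟨ψ, _, _, s, hsmono, hconv⟩ :=
    key_compact hinf x hx hsmooth F (fun n => (hFnorm n).le)
      (by simp only [hFx]; exact tendsto_const_nhds)
  have hc : CauchySeq (fun n => F (s n)) := hconv.cauchySeq
  obtain ⟨N, hN⟩ := Metric.cauchySeq_iff'.mp hc (3/2) (by norm_num)
  have h1 := hN (N+1) (by omega)
  have h2 : 3/2 ≤ ‖F (s N) - F (s (N+1))‖ :=
    hFsep _ _ (hsmono (by omega))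
  rw [dist_eq_norm, norm_sub_rev] at h1
  linarith
end

section
/- Let X be a reflexive real Banach space (the canonical embedding of X into its bidual X** is surjective). If X contains a 𝔇-point, then both X and X* contain sequential super Δ-points; in particular, neither X nor X* has the Kadets–Klee property. -/
open NormedSpace Topology Filter

/-- `z` is a sequential super Δ-point of the Banach space `Z`: there is a sequence in the
unit sphere of `Z` converging weakly to `z` whose distances to `z` tend to `2`. -/
def IsSequentialSuperDeltaPoint (Z : Type*) [NormedAddCommGroup Z] [NormedSpace ℝ Z]
    (z : Z) : Prop :=
  ‖z‖ = 1 ∧ ∃ zs : ℕ → Z, (∀ n, ‖zs n‖ = 1) ∧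
    (∀ f : StrongDual ℝ Z, Tendsto (fun n => f (zs n)) atTop (nhds (f z))) ∧
    Tendsto (fun n => ‖z - zs n‖) atTop (nhds 2)

/-- A Banach space `Z` has the Kadets–Klee property if weak convergence of sequences on
the unit sphere implies norm convergence. -/
def KadetsKlee (Z : Type*) [NormedAddCommGroup Z] [NormedSpace ℝ Z] : Prop :=
  ∀ (zs : ℕ → Z) (z : Z), (∀ n, ‖zs n‖ = 1) → ‖z‖ = 1 →
    (∀ f : StrongDual ℝ Z, Tendsto (fun n => f (zs n)) atTop (nhds (f z))) →
    Tendsto (fun n => ‖z - zs n‖) atTop (nhds 0)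

section Aux1
variable {E : Type*} [NormedAddCommGroup E] [NormedSpace ℝ E]

/-- Separation of a point from a closed subspace. -/
lemma aux_sep_subspace (W : Submodule ℝ E) (hW : IsClosed (W : Set E)) {v : E} (hv : v ∉ W) :
    ∃ φ : StrongDual ℝ E, (∀ w ∈ W, φ w = 0) ∧ 0 < φ v := by
  obtain ⟨f, u, hfW, hfv⟩ := geometric_hahn_banach_closed_point W.convex hW hv
  have h0 : (0:ℝ) < u := by simpa using hfW 0 W.zero_mem
  refine ⟨f, ?_, h0.trans hfv⟩
  intro w hw
  by_contra hne
  have hall : ∀ t : ℝ, t * f w < u := fun t => by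
    simpa [map_smul, smul_eq_mul] using hfW (t • w) (W.smul_mem t hw)
  have := hall (u / f w)
  rw [div_mul_cancel₀ u hne] at this
  exact lt_irrefl _ this

/-- A weak limit of vectors of norm at most one has norm at most one. -/
lemma aux_weak_norm_le {u : ℕ → E} {w : E} (hu : ∀ n, ‖u n‖ ≤ 1)
    (hw : ∀ φ : StrongDual ℝ E, Tendsto (fun n => φ (u n)) atTop (nhds (φ w))) : ‖w‖ ≤ 1 := by
  by_cases h : w = 0
  · simp [h]
  obtain ⟨g, hg1, hgw⟩ := exists_dual_vector ℝ w (norm_ne_zero_iff.mpr h)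
  have hgw' : g w = ‖w‖ := by exact_mod_cast hgw
  have hb : ∀ n, g (u n) ≤ 1 := fun n => by
    calc g (u n) ≤ |g (u n)| := le_abs_self _
    _ ≤ ‖g‖ * ‖u n‖ := g.le_opNorm _
    _ ≤ 1 := by rw [hg1]; simpa using hu n
  have := le_of_tendsto (hw g) (Eventually.of_forall hb)
  linarith [this, hgw'.symm]

/-- The restriction map `Dual E → Dual W`. -/
noncomputable def restrD (W : Submodule ℝ E) : StrongDual ℝ E →L[ℝ] StrongDual ℝ W :=
  (ContinuousLinearMap.compL ℝ W E ℝ).flip W.subtypeL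

@[simp] lemma restrD_apply (W : Submodule ℝ E) (g : StrongDual ℝ E) (w : W) :
    restrD W g w = g w := rfl

end Aux1

section Aux2
variable {E : Type*} [NormedAddCommGroup E] [NormedSpace ℝ E]

/-- If `E` is reflexive then so is its dual. -/
lemma aux_dual_reflexive (hE : Function.Surjective (inclusionInDoubleDual ℝ E)) :
    Function.Surjective (inclusionInDoubleDual ℝ (StrongDual ℝ E)) := by
  intro Φ
  refine ⟨Φ.comp (inclusionInDoubleDual ℝ E), ?_⟩
  ext F
  obtain ⟨z, rfl⟩ := hE F
  rfl

/-- A closed subspace of a reflexive space is reflexive. -/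
lemma aux_subspace_reflexive (hE : Function.Surjective (inclusionInDoubleDual ℝ E))
    (W : Submodule ℝ E) (hW : IsClosed (W : Set E)) :
    Function.Surjective (inclusionInDoubleDual ℝ W) := by
  intro Λ
  obtain ⟨x₀, hx₀⟩ := hE (Λ.comp (restrD W))
  have hx₀W : x₀ ∈ W := by
    by_contra hmem
    obtain ⟨φ, hφ0, hφv⟩ := aux_sep_subspace W hW hmem
    have h1 : restrD W φ = 0 := by
      ext w; exact hφ0 w w.2
    have h2 : (Λ.comp (restrD W)) φ = φ x₀ := by rw [← hx₀]; rfl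
    rw [ContinuousLinearMap.comp_apply, h1, map_zero] at h2
    exact (ne_of_gt hφv) h2.symm
  refine ⟨⟨x₀, hx₀W⟩, ?_⟩
  ext ψ
  obtain ⟨ψ', hψ'⟩ := exists_extension_norm_eq W ψ
  have h3 : restrD W ψ' = ψ := by ext w; exact hψ'.1 w
  have h4 : (Λ.comp (restrD W)) ψ' = ψ' x₀ := by rw [← hx₀]; rfl
  calc (inclusionInDoubleDual ℝ W ⟨x₀, hx₀W⟩) ψ = ψ ⟨x₀, hx₀W⟩ := rfl
  _ = ψ' x₀ := (hψ'.1 ⟨x₀, hx₀W⟩).symm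
  _ = Λ ψ := by rw [← h4, ContinuousLinearMap.comp_apply, h3]

end Aux2
section Aux3
variable {E : Type*} [NormedAddCommGroup E] [NormedSpace ℝ E]

/-- The topological closure of the span of a countable set is separable (as a set). -/
lemma aux_span_closure_isSeparable {s : Set E} (hs : s.Countable) :
    TopologicalSpace.IsSeparable (((Submodule.span ℝ s).topologicalClosure : Submodule ℝ E) : Set E) := by
  have h1 : TopologicalSpace.IsSeparable (Submodule.span ℝ s : Set E) := (hs.isSeparable).span
  have h2 := h1.closure
  simpa [Submodule.topologicalClosure_coe] using h2

/-- The topological closure of the span of a countable set is a separable space. -/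
lemma aux_span_closure_separable {s : Set E} (hs : s.Countable) :
    TopologicalSpace.SeparableSpace ((Submodule.span ℝ s).topologicalClosure : Submodule ℝ E) :=
  (aux_span_closure_isSeparable hs).separableSpace

/-- If the dual of a normed space is separable, so is the space itself. -/
lemma aux_sep_of_dual_sep [TopologicalSpace.SeparableSpace (StrongDual ℝ E)] :
    TopologicalSpace.SeparableSpace E := by
  have : Nonempty (StrongDual ℝ E) := ⟨0⟩
  set F : ℕ → StrongDual ℝ E := TopologicalSpace.denseSeq (StrongDual ℝ E) with hFdef
  have hF : DenseRange F := TopologicalSpace.denseRange_denseSeq _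
  have hxs : ∀ j : ℕ, ∃ x : E, ‖x‖ ≤ 1 ∧ ‖F j‖ / 2 ≤ ‖F j x‖ := by
    intro j
    rcases eq_or_ne (F j) 0 with h0 | h0
    · exact ⟨0, by simp, by simp [h0]⟩
    · have hlt : ‖F j‖ / 2 < ‖F j‖ := by
        have : 0 < ‖F j‖ := norm_pos_iff.mpr h0
        linarith
      obtain ⟨x, hx1, hx2⟩ := (F j).exists_lt_apply_of_lt_opNorm hlt
      exact ⟨x, hx1.le, hx2.le⟩
  choose xs hxs1 hxs2 using hxs
  set W : Submodule ℝ E := (Submodule.span ℝ (Set.range xs)).topologicalClosure with hWdef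
  by_cases hW : ∀ v : E, v ∈ W
  · have hsep := aux_span_closure_isSeparable (Set.countable_range xs)
    have huniv : (W : Set E) = Set.univ := Set.eq_univ_of_forall hW
    rw [huniv] at hsep
    exact TopologicalSpace.isSeparable_univ_iff.mp hsep
  · exfalso
    push_neg at hW
    obtain ⟨v, hv⟩ := hW
    obtain ⟨φ, hφ0, hφv⟩ := aux_sep_subspace W (Submodule.isClosed_topologicalClosure _) hv
    have hφn : φ ≠ 0 := by
      intro h; rw [h] at hφv; simp at hφv
    set ψ : StrongDual ℝ E := ‖φ‖⁻¹ • φ with hψdef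
    have hψ1 : ‖ψ‖ = 1 := by
      rw [hψdef, norm_smul, norm_inv, norm_norm, inv_mul_cancel₀ (norm_ne_zero_iff.mpr hφn)]
    have hψ0 : ∀ w ∈ W, ψ w = 0 := fun w hw => by
      simp [hψdef, hφ0 w hw]
    obtain ⟨j, hj⟩ := Metric.denseRange_iff.mp hF ψ (1/4) (by norm_num)
    have hd : ‖F j - ψ‖ < 1/4 := by rwa [dist_comm, dist_eq_norm] at hj
    have hFj : 3/4 ≤ ‖F j‖ := by
      have h5 := norm_sub_norm_le ψ (F j)
      rw [hψ1, norm_sub_rev] at h5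
      linarith
    have hmem : xs j ∈ W :=
      Submodule.le_topologicalClosure _ (Submodule.subset_span ⟨j, rfl⟩)
    have h6 : F j (xs j) = (F j - ψ) (xs j) := by
      simp [hψ0 (xs j) hmem]
    have h7 : ‖F j (xs j)‖ ≤ ‖F j - ψ‖ := by
      rw [h6]
      calc ‖(F j - ψ) (xs j)‖ ≤ ‖F j - ψ‖ * ‖xs j‖ := (F j - ψ).le_opNorm _
      _ ≤ ‖F j - ψ‖ * 1 := by
          exact mul_le_mul_of_nonneg_left (hxs1 j) (norm_nonneg _)
      _ = ‖F j - ψ‖ := mul_one _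
    have h8 := hxs2 j
    linarith

/-- A separable reflexive space has separable dual. -/
lemma aux_dual_separable [TopologicalSpace.SeparableSpace E]
    (hE : Function.Surjective (inclusionInDoubleDual ℝ E)) :
    TopologicalSpace.SeparableSpace (StrongDual ℝ E) := by
  have hsep2 : TopologicalSpace.SeparableSpace (StrongDual ℝ (StrongDual ℝ E)) := by
    have hcont : Continuous (inclusionInDoubleDual ℝ E) := (inclusionInDoubleDual ℝ E).continuous
    have hdr : DenseRange (inclusionInDoubleDual ℝ E) := hE.denseRange
    exact hdr.separableSpace hcont
  exact aux_sep_of_dual_sep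
end Aux3
section Aux4
variable {E : Type*} [NormedAddCommGroup E] [NormedSpace ℝ E]

/-- Weak sequential compactness of the unit ball in a reflexive space. -/
lemma aux_weak_seq_compact (hE : Function.Surjective (inclusionInDoubleDual ℝ E))
    (u : ℕ → E) (hu : ∀ k, ‖u k‖ ≤ 1) :
    ∃ (w : E) (σ : ℕ → ℕ), StrictMono σ ∧ ‖w‖ ≤ 1 ∧
      ∀ φ : StrongDual ℝ E, Filter.Tendsto (fun k => φ (u (σ k))) Filter.atTop (nhds (φ w)) := by
  classical
  set W : Submodule ℝ E := (Submodule.span ℝ (Set.range u)).topologicalClosure with hWdef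
  have hWc : IsClosed (W : Set E) := Submodule.isClosed_topologicalClosure _
  have hmem : ∀ k, u k ∈ W := fun k =>
    Submodule.le_topologicalClosure _ (Submodule.subset_span ⟨k, rfl⟩)
  haveI : TopologicalSpace.SeparableSpace W := aux_span_closure_separable (Set.countable_range u)
  have hWrefl := aux_subspace_reflexive hE W hWc
  haveI : TopologicalSpace.SeparableSpace (StrongDual ℝ W) := aux_dual_separable hWrefl
  haveI : Nonempty (StrongDual ℝ W) := ⟨0⟩
  set Ψ : ℕ → StrongDual ℝ W := TopologicalSpace.denseSeq (StrongDual ℝ W) with hΨdef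
  have hΨ : DenseRange Ψ := TopologicalSpace.denseRange_denseSeq _
  set uW : ℕ → W := fun k => ⟨u k, hmem k⟩ with huWdef
  have huW : ∀ k, ‖uW k‖ ≤ 1 := fun k => hu k
  -- extract a subsequence along which all Ψ j converge, using compactness of a product of
  -- intervals
  set S : Set (ℕ → ℝ) := Set.pi Set.univ (fun j => Set.Icc (-‖Ψ j‖) ‖Ψ j‖) with hSdef
  have hScomp : IsCompact S := isCompact_univ_pi (fun j => isCompact_Icc)
  set T : ℕ → (ℕ → ℝ) := fun k j => Ψ j (uW k) with hTdef
  have hTS : ∀ k, T k ∈ S := by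
    intro k
    rw [hSdef, Set.mem_univ_pi]
    intro j
    have h1 : ‖Ψ j (uW k)‖ ≤ ‖Ψ j‖ := by
      calc ‖Ψ j (uW k)‖ ≤ ‖Ψ j‖ * ‖uW k‖ := (Ψ j).le_opNorm _
      _ ≤ ‖Ψ j‖ * 1 := mul_le_mul_of_nonneg_left (huW k) (norm_nonneg (Ψ j))
      _ = ‖Ψ j‖ := mul_one _
    rw [Real.norm_eq_abs, abs_le] at h1
    exact ⟨h1.1, h1.2⟩
  obtain ⟨α, hαS, σ, hσ, hconv⟩ := hScomp.tendsto_subseq hTS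
  have hcoord : ∀ j, Filter.Tendsto (fun k => Ψ j (uW (σ k))) Filter.atTop (nhds (α j)) := by
    intro j
    have := tendsto_pi_nhds.mp hconv j
    exact this
  -- every functional converges along the subsequence
  have hcauchy : ∀ ψ : StrongDual ℝ W, ∃ l, Filter.Tendsto (fun k => ψ (uW (σ k)))
      Filter.atTop (nhds l) := by
    intro ψ
    have hC : CauchySeq (fun k => ψ (uW (σ k))) := by
      rw [Metric.cauchySeq_iff]
      intro ε hε
      obtain ⟨j, hj⟩ := Metric.denseRange_iff.mp hΨ ψ (ε/4) (by linarith)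
      have hdist : ‖ψ - Ψ j‖ < ε/4 := by rwa [dist_eq_norm ψ (Ψ j)] at hj
      have hCj : CauchySeq (fun k => Ψ j (uW (σ k))) := (hcoord j).cauchySeq
      rw [Metric.cauchySeq_iff] at hCj
      obtain ⟨N, hN⟩ := hCj (ε/4) (by linarith)
      refine ⟨N, fun a ha b hb => ?_⟩
      have hest : ∀ c, |ψ (uW (σ c)) - Ψ j (uW (σ c))| ≤ ε/4 := by
        intro c
        have : ‖(ψ - Ψ j) (uW (σ c))‖ ≤ ‖ψ - Ψ j‖ * ‖uW (σ c)‖ := (ψ - Ψ j).le_opNorm _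
        rw [ContinuousLinearMap.sub_apply] at this
        have h2 : ‖ψ - Ψ j‖ * ‖uW (σ c)‖ ≤ ‖ψ - Ψ j‖ * 1 :=
          mul_le_mul_of_nonneg_left (huW _) (norm_nonneg (ψ - Ψ j))
        rw [Real.norm_eq_abs] at this
        nlinarith [this, h2, hdist]
      have h3 := hN a ha b hb
      rw [Real.dist_eq] at h3 ⊢
      have h4 := hest a
      have h5 := hest b
      have habs3 : |ψ (uW (σ a)) - ψ (uW (σ b))| ≤ |ψ (uW (σ a)) - Ψ j (uW (σ a))| +
          |Ψ j (uW (σ a)) - Ψ j (uW (σ b))| + |Ψ j (uW (σ b)) - ψ (uW (σ b))| := by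
        have h6 : ψ (uW (σ a)) - ψ (uW (σ b)) = (ψ (uW (σ a)) - Ψ j (uW (σ a))) +
            (Ψ j (uW (σ a)) - Ψ j (uW (σ b))) + (Ψ j (uW (σ b)) - ψ (uW (σ b))) := by ring
        rw [h6]
        exact abs_add_three _ _ _
      have h7 : |Ψ j (uW (σ b)) - ψ (uW (σ b))| = |ψ (uW (σ b)) - Ψ j (uW (σ b))| :=
        abs_sub_comm _ _
      rw [h7] at habs3
      linarith
    exact cauchySeq_tendsto_of_complete hC
  choose lim hlim using hcauchy
  -- the limit functional
  have hbound : ∀ ψ : StrongDual ℝ W, ‖lim ψ‖ ≤ 1 * ‖ψ‖ := by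
    intro ψ
    rw [Real.norm_eq_abs, one_mul]
    have habs : Filter.Tendsto (fun k => |ψ (uW (σ k))|) Filter.atTop (nhds |lim ψ|) :=
      (hlim ψ).abs
    refine le_of_tendsto habs (Filter.Eventually.of_forall (fun k => ?_))
    calc |ψ (uW (σ k))| ≤ ‖ψ‖ * ‖uW (σ k)‖ := (ψ.le_opNorm _)
    _ ≤ ‖ψ‖ * 1 := mul_le_mul_of_nonneg_left (huW _) (norm_nonneg ψ)
    _ = ‖ψ‖ := mul_one _
  set L : StrongDual ℝ (StrongDual ℝ W) := LinearMap.mkContinuous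
    { toFun := lim
      map_add' := fun ψ₁ ψ₂ => by
        refine tendsto_nhds_unique (hlim (ψ₁ + ψ₂)) ?_
        have := (hlim ψ₁).add (hlim ψ₂)
        simpa using this
      map_smul' := fun c ψ => by
        refine tendsto_nhds_unique (hlim (c • ψ)) ?_
        have := (hlim ψ).const_mul c
        simpa [smul_eq_mul] using this } 1 hbound with hLdef
  obtain ⟨w₀, hw₀⟩ := hWrefl L
  have hψconv : ∀ ψ : StrongDual ℝ W, Filter.Tendsto (fun k => ψ (uW (σ k)))
      Filter.atTop (nhds (ψ w₀)) := by
    intro ψ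
    have h1 : (inclusionInDoubleDual ℝ W w₀) ψ = ψ w₀ := rfl
    have h2 : L ψ = lim ψ := rfl
    have h3 : ψ w₀ = lim ψ := by rw [← h1, hw₀, h2]
    rw [h3]
    exact hlim ψ
  refine ⟨(w₀ : E), σ, hσ, ?_, ?_⟩
  · have hle : ‖w₀‖ ≤ 1 := aux_weak_norm_le (u := fun k => uW (σ k)) (fun k => huW _) hψconv
    exact hle
  · intro φ
    have h4 : ∀ k, φ (u (σ k)) = (restrD W φ) (uW (σ k)) := fun k => rfl
    have h5 : φ (w₀ : E) = (restrD W φ) w₀ := rfl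
    rw [h5]
    simp only [h4]
    exact hψconv (restrD W φ)
end Aux4
noncomputable section Aux5

/-- auxiliary epsilon sequence -/
def epsv (k : ℕ) : ℝ := ((k : ℝ) + 2)⁻¹

lemma epsv_pos (k : ℕ) : 0 < epsv k := by
  have : (0:ℝ) < (k:ℝ) + 2 := by positivity
  exact inv_pos.mpr this

lemma epsv_le_half (k : ℕ) : epsv k ≤ 1/2 := by
  rw [epsv]
  rw [inv_le_comm₀ (by positivity) (by norm_num)]
  push_cast
  norm_num

lemma epsv_antitone {j k : ℕ} (h : j ≤ k) : epsv k ≤ epsv j := by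
  apply inv_anti₀ (by positivity)
  have : (j:ℝ) ≤ k := by exact_mod_cast h
  linarith

lemma epsv_tendsto : Filter.Tendsto epsv Filter.atTop (nhds 0) := by
  have h1 : Filter.Tendsto (fun k : ℕ => (k : ℝ) + 2) Filter.atTop Filter.atTop :=
    Filter.tendsto_atTop_add_const_right _ 2 tendsto_natCast_atTop_atTop
  exact h1.inv_tendsto_atTop

lemma aux_one_sub_epsv_tendsto : Filter.Tendsto (fun k => 1 - epsv k) Filter.atTop (nhds 1) := by
  have := epsv_tendsto.const_sub 1
  simpa using this

/-- squeeze to 1 along epsv lower bounds -/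
lemma aux_squeeze_one {s : ℕ → ℝ} {l : ℝ}
    (h : Filter.Tendsto s Filter.atTop (nhds l))
    (hlow : ∀ k, 1 - epsv k ≤ s k) (hup : ∀ k, s k ≤ 1) : l = 1 := by
  have h1 : 1 ≤ l := le_of_tendsto_of_tendsto' aux_one_sub_epsv_tendsto h hlow
  have h2 : l ≤ 1 := le_of_tendsto' h hup
  linarith

variable {X : Type*} [NormedAddCommGroup X] [NormedSpace ℝ X]

open NormedSpace

/-- norm-one criterion -/
lemma aux_norm_one_of {Q : StrongDual ℝ X} {x : X} (hQle : ‖Q‖ ≤ 1) (hx : ‖x‖ = 1)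
    (hQx : Q x = 1) : ‖Q‖ = 1 := by
  refine le_antisymm hQle ?_
  have h1 : |Q x| ≤ ‖Q‖ * ‖x‖ := by
    have h0 := Q.le_opNorm x
    rwa [Real.norm_eq_abs] at h0
  rw [hQx, hx, mul_one] at h1
  simpa using h1

/-- value bound -/
lemma aux_val_le {Q : StrongDual ℝ X} {y : X} (hQ : ‖Q‖ ≤ 1) (hy : ‖y‖ ≤ 1) : Q y ≤ 1 := by
  have h1 : |Q y| ≤ ‖Q‖ * ‖y‖ := by
    have h0 := Q.le_opNorm y
    rwa [Real.norm_eq_abs] at h0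
  have h2 : ‖Q‖ * ‖y‖ ≤ 1 := by nlinarith [norm_nonneg Q, norm_nonneg y]
  calc Q y ≤ |Q y| := le_abs_self _
  _ ≤ 1 := h1.trans h2

lemma aux_val_neg_le {Q : StrongDual ℝ X} {y : X} (hQ : ‖Q‖ ≤ 1) (hy : ‖y‖ ≤ 1) : -1 ≤ Q y := by
  have h1 : |Q y| ≤ 1 := by
    have h0 := Q.le_opNorm y
    rw [Real.norm_eq_abs] at h0
    nlinarith [norm_nonneg Q, norm_nonneg y, abs_nonneg (Q y)]
  linarith [abs_le.mp h1]

/-- extraction of far slice points from the 𝔇-point property -/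
lemma aux_dpoint_far {x : X} (hx1 : ‖x‖ = 1)
    (hxD : ∀ f : StrongDual ℝ X, ‖f‖ = 1 → f x = 1 → ∀ ε : ℝ, 0 < ε →
      sSup ((fun y => ‖x - y‖) '' {y : X | ‖y‖ ≤ 1 ∧ 1 - ε < f y}) = 2)
    {Q : StrongDual ℝ X} (hQ1 : ‖Q‖ = 1) (hQx : Q x = 1) {ε : ℝ} (hε : 0 < ε) :
    ∃ y : X, ‖y‖ ≤ 1 ∧ 1 - ε < Q y ∧ 2 - ε < ‖x - y‖ := by
  have h2 := hxD Q hQ1 hQx ε hε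
  have hne : ((fun y => ‖x - y‖) '' {y : X | ‖y‖ ≤ 1 ∧ 1 - ε < Q y}).Nonempty :=
    ⟨‖x - x‖, ⟨x, ⟨le_of_eq hx1, by rw [hQx]; linarith⟩, rfl⟩⟩
  have hlt : 2 - ε < sSup ((fun y => ‖x - y‖) '' {y : X | ‖y‖ ≤ 1 ∧ 1 - ε < Q y}) := by
    rw [h2]; linarith
  obtain ⟨d, hd, hdlt⟩ := exists_lt_of_lt_csSup hne hlt
  obtain ⟨y, hy, rfl⟩ := hd
  exact ⟨y, hy.1, hy.2, hdlt⟩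

end Aux5
section Aux6
open NormedSpace
variable {X : Type*} [NormedAddCommGroup X] [NormedSpace ℝ X]

/-- One round of the construction. -/
structure AuxRound (X : Type*) [NormedAddCommGroup X] [NormedSpace ℝ X] (x : X) where
  Q : StrongDual ℝ X
  va : ℕ → X
  pa : ℕ → StrongDual ℝ X
  vl : X
  pl : StrongDual ℝ X
  hQ1 : ‖Q‖ = 1
  hQx : Q x = 1
  hva : ∀ k, ‖va k‖ ≤ 1
  hslice : ∀ k, 1 - epsv k < Q (va k)
  hfar : ∀ k, 2 - epsv k < ‖x - va k‖
  hpa1 : ∀ k, ‖pa k‖ = 1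
  hpan : ∀ k, pa k (x - va k) = ‖x - va k‖
  hvw : ∀ φ : StrongDual ℝ X, Filter.Tendsto (fun k => φ (va k)) Filter.atTop (nhds (φ vl))
  hpw : ∀ Λ : StrongDual ℝ (StrongDual ℝ X), Filter.Tendsto (fun k => Λ (pa k)) Filter.atTop (nhds (Λ pl))
  hvl1 : ‖vl‖ ≤ 1
  hpl1 : ‖pl‖ ≤ 1
  hplx : pl x = 1
  hQvl : Q vl = 1

variable {x : X}

lemma aux_pa_x_lb (R : AuxRound X x) (hx1 : ‖x‖ = 1) (k : ℕ) :
    1 - epsv k < R.pa k x := by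
  have h1 : R.pa k x = R.pa k (x - R.va k) + R.pa k (R.va k) := by
    rw [← map_add]; congr 1; abel
  have h2 : -1 ≤ R.pa k (R.va k) := aux_val_neg_le (le_of_eq (R.hpa1 k)) (R.hva k)
  have h3 := R.hfar k
  rw [h1, R.hpan k]
  linarith

lemma aux_pa_va_ub (R : AuxRound X x) (hx1 : ‖x‖ = 1) (k : ℕ) :
    R.pa k (R.va k) ≤ -1 + epsv k := by
  have h1 : R.pa k (R.va k) = R.pa k x - R.pa k (x - R.va k) := by
    rw [← map_sub]; congr 1; abel
  have h2 : R.pa k x ≤ 1 := aux_val_le (le_of_eq (R.hpa1 k)) (le_of_eq hx1)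
  have h3 := R.hfar k
  rw [h1, R.hpan k]
  linarith

/-- Construction of a round from any norming functional. -/
lemma aux_roundStep (hrefl : Function.Surjective (inclusionInDoubleDual ℝ X))
    (hx1 : ‖x‖ = 1)
    (hxD : ∀ f : StrongDual ℝ X, ‖f‖ = 1 → f x = 1 → ∀ ε : ℝ, 0 < ε →
      sSup ((fun y => ‖x - y‖) '' {y : X | ‖y‖ ≤ 1 ∧ 1 - ε < f y}) = 2)
    (Q : StrongDual ℝ X) (hQ1 : ‖Q‖ = 1) (hQx : Q x = 1) :
    ∃ R : AuxRound X x, R.Q = Q := by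
  classical
  have hsel : ∀ k : ℕ, ∃ y : X, ‖y‖ ≤ 1 ∧ 1 - epsv k < Q y ∧ 2 - epsv k < ‖x - y‖ :=
    fun k => aux_dpoint_far hx1 hxD hQ1 hQx (epsv_pos k)
  choose va0 hva0 hslice0 hfar0 using hsel
  have hne : ∀ k, x - va0 k ≠ 0 := by
    intro k h
    have h2 := hfar0 k
    rw [h, norm_zero] at h2
    have := epsv_le_half k
    linarith
  have hpa0 : ∀ k, ∃ g : StrongDual ℝ X, ‖g‖ = 1 ∧ g (x - va0 k) = ‖x - va0 k‖ := by
    intro k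
    obtain ⟨g, h1, h2⟩ := exists_dual_vector ℝ _ (norm_ne_zero_iff.mpr (hne k))
    exact ⟨g, h1, by exact_mod_cast h2⟩
  choose pa0 hpa01 hpa0n using hpa0
  obtain ⟨vl, σ₁, hσ₁, hvl1, hvw1⟩ := aux_weak_seq_compact hrefl va0 hva0
  obtain ⟨pl, σ₂, hσ₂, hpl1, hpw2⟩ := aux_weak_seq_compact (aux_dual_reflexive hrefl)
      (fun k => pa0 (σ₁ k)) (fun k => le_of_eq (hpa01 _))
  set τ : ℕ → ℕ := σ₁ ∘ σ₂ with hτdef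
  have hτ : StrictMono τ := hσ₁.comp hσ₂
  have hτk : ∀ k, k ≤ τ k := fun k => hτ.le_apply
  have hvw : ∀ φ : StrongDual ℝ X, Filter.Tendsto (fun k => φ (va0 (τ k))) Filter.atTop (nhds (φ vl)) :=
    fun φ => (hvw1 φ).comp hσ₂.tendsto_atTop
  have hpw : ∀ Λ : StrongDual ℝ (StrongDual ℝ X),
      Filter.Tendsto (fun k => Λ (pa0 (τ k))) Filter.atTop (nhds (Λ pl)) := fun Λ => hpw2 Λ
  have hplx : pl x = 1 := by
    have hconv : Filter.Tendsto (fun k => pa0 (τ k) x) Filter.atTop (nhds (pl x)) := by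
      have := hpw (inclusionInDoubleDual ℝ X x)
      exact this
    refine aux_squeeze_one hconv (fun k => ?_) (fun k => ?_)
    · have h1 : pa0 (τ k) x = pa0 (τ k) (x - va0 (τ k)) + pa0 (τ k) (va0 (τ k)) := by
        rw [← map_add]; congr 1; abel
      have h2 : -1 ≤ pa0 (τ k) (va0 (τ k)) := aux_val_neg_le (le_of_eq (hpa01 _)) (hva0 _)
      have h3 := hfar0 (τ k)
      have h4 : epsv (τ k) ≤ epsv k := epsv_antitone (hτk k)
      rw [h1, hpa0n]
      linarith
    · exact aux_val_le (le_of_eq (hpa01 _)) (le_of_eq hx1)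
  have hQvl : Q vl = 1 := by
    refine aux_squeeze_one (hvw Q) (fun k => ?_) (fun k => ?_)
    · have h4 : epsv (τ k) ≤ epsv k := epsv_antitone (hτk k)
      have := hslice0 (τ k)
      linarith
    · exact aux_val_le (le_of_eq hQ1) (hva0 _)
  refine ⟨⟨Q, fun k => va0 (τ k), fun k => pa0 (τ k), vl, pl, hQ1, hQx,
    fun k => hva0 _, fun k => ?_, fun k => ?_, fun k => hpa01 _, fun k => hpa0n _,
    hvw, hpw, hvl1, hpl1, hplx, hQvl⟩, rfl⟩
  · have h4 : epsv (τ k) ≤ epsv k := epsv_antitone (hτk k)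
    have := hslice0 (τ k)
    linarith
  · have h4 : epsv (τ k) ≤ epsv k := epsv_antitone (hτk k)
    have := hfar0 (τ k)
    linarith
end Aux6
noncomputable section Aux7
open NormedSpace
variable {X : Type*} [NormedAddCommGroup X] [NormedSpace ℝ X] {x : X}

/-- the next norming functional -/
def auxNextQ (R : AuxRound X x) : StrongDual ℝ X := (1/2 : ℝ) • R.Q + (1/2 : ℝ) • R.pl

lemma auxNextQ_le (R : AuxRound X x) : ‖auxNextQ R‖ ≤ 1 := by
  rw [auxNextQ]
  calc ‖(1/2 : ℝ) • R.Q + (1/2 : ℝ) • R.pl‖ ≤ ‖(1/2 : ℝ) • R.Q‖ + ‖(1/2 : ℝ) • R.pl‖ :=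
    norm_add_le _ _
  _ ≤ 1 := by
      rw [norm_smul, norm_smul, R.hQ1]
      have := R.hpl1
      rw [Real.norm_eq_abs]
      rw [abs_of_pos (by norm_num : (0:ℝ) < 1/2)]
      linarith

lemma auxNextQ_x (R : AuxRound X x) : auxNextQ R x = 1 := by
  simp [auxNextQ, R.hQx, R.hplx]
  norm_num

lemma auxNextQ_one (R : AuxRound X x) (hx1 : ‖x‖ = 1) : ‖auxNextQ R‖ = 1 :=
  aux_norm_one_of (auxNextQ_le R) hx1 (auxNextQ_x R)

variable (hrefl : Function.Surjective (inclusionInDoubleDual ℝ X))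
  (hx1 : ‖x‖ = 1)
  (hxD : ∀ f : StrongDual ℝ X, ‖f‖ = 1 → f x = 1 → ∀ ε : ℝ, 0 < ε →
      sSup ((fun y => ‖x - y‖) '' {y : X | ‖y‖ ≤ 1 ∧ 1 - ε < f y}) = 2)
  (f : StrongDual ℝ X) (hf1 : ‖f‖ = 1) (hfx : f x = 1)

/-- The sequence of rounds. -/
def auxRounds : ℕ → AuxRound X x
  | 0 => (aux_roundStep hrefl hx1 hxD f hf1 hfx).choose
  | (n+1) =>
      (aux_roundStep hrefl hx1 hxD (auxNextQ (auxRounds n))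
        (auxNextQ_one (auxRounds n) hx1) (auxNextQ_x (auxRounds n))).choose

lemma auxRounds_zero_Q : (auxRounds hrefl hx1 hxD f hf1 hfx 0).Q = f :=
  (aux_roundStep hrefl hx1 hxD f hf1 hfx).choose_spec

lemma auxRounds_succ_Q (n : ℕ) :
    (auxRounds hrefl hx1 hxD f hf1 hfx (n+1)).Q
      = auxNextQ (auxRounds hrefl hx1 hxD f hf1 hfx n) :=
  (aux_roundStep hrefl hx1 hxD (auxNextQ _) (auxNextQ_one _ hx1) (auxNextQ_x _)).choose_spec

/-- representation step -/
lemma aux_rep_step {Q g r pl : StrongDual ℝ X} {c : ℝ} (hc : 0 < c) (hc1 : c ≤ 1)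
    (hr : ‖r‖ ≤ 1) (hpl : ‖pl‖ ≤ 1) (hrep : Q = c • g + (1 - c) • r) :
    ∃ (c' : ℝ) (r' : StrongDual ℝ X), 0 < c' ∧ c' ≤ 1 ∧ ‖r'‖ ≤ 1 ∧
      (1/2 : ℝ) • Q + (1/2 : ℝ) • pl = c' • g + (1 - c') • r' := by
  have hpos : (0:ℝ) < 1 - c/2 := by linarith
  refine ⟨c/2, (1 - c/2)⁻¹ • (((1-c)/2) • r + (1/2 : ℝ) • pl), by linarith, by linarith, ?_, ?_⟩
  · rw [norm_smul, Real.norm_eq_abs, abs_of_pos (inv_pos.mpr hpos)]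
    have h1 : ‖((1-c)/2) • r + (1/2 : ℝ) • pl‖ ≤ ‖((1-c)/2) • r‖ + ‖(1/2 : ℝ) • pl‖ := norm_add_le _ _
    have h2 : ‖((1-c)/2) • r‖ ≤ (1-c)/2 := by
      rw [norm_smul, Real.norm_eq_abs, abs_of_nonneg (by linarith : (0:ℝ) ≤ (1-c)/2)]
      nlinarith [norm_nonneg r]
    have h3 : ‖(1/2 : ℝ) • pl‖ ≤ 1/2 := by
      rw [norm_smul, Real.norm_eq_abs, abs_of_pos (by norm_num : (0:ℝ) < 1/2)]
      linarith
    rw [inv_mul_le_iff₀ hpos]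
    nlinarith [h1, h2, h3]
  · have hB : (1 - c/2) • ((1 - c/2)⁻¹ • (((1-c)/2) • r + (1/2 : ℝ) • pl))
        = ((1-c)/2) • r + (1/2 : ℝ) • pl := smul_inv_smul₀ (ne_of_gt hpos) _
    rw [hrep, hB]
    module

end Aux7
section Aux8
open NormedSpace
variable {X : Type*} [NormedAddCommGroup X] [NormedSpace ℝ X] {x : X}

/-- face lemma: convex combinations attaining norm force components to attain. -/
lemma aux_face {Q g r : StrongDual ℝ X} {c : ℝ} (hc : 0 < c) (hc1 : c ≤ 1) (hg : ‖g‖ ≤ 1)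
    (hr : ‖r‖ ≤ 1) (hrep : Q = c • g + (1 - c) • r) {v : X} (hv : ‖v‖ ≤ 1) (hQv : Q v = 1) :
    g v = 1 := by
  have h1 : Q v = c * g v + (1 - c) * r v := by
    rw [hrep]
    simp only [ContinuousLinearMap.add_apply, ContinuousLinearMap.coe_smul',
      Pi.smul_apply, smul_eq_mul]
  have hgv : g v ≤ 1 := aux_val_le hg hv
  have hrv : r v ≤ 1 := aux_val_le hr hv
  rw [hQv] at h1
  nlinarith

variable (hrefl : Function.Surjective (inclusionInDoubleDual ℝ X))
  (hx1 : ‖x‖ = 1)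
  (hxD : ∀ f : StrongDual ℝ X, ‖f‖ = 1 → f x = 1 → ∀ ε : ℝ, 0 < ε →
      sSup ((fun y => ‖x - y‖) '' {y : X | ‖y‖ ≤ 1 ∧ 1 - ε < f y}) = 2)
  (f : StrongDual ℝ X) (hf1 : ‖f‖ = 1) (hfx : f x = 1)

/-- representation of later round functionals in terms of an earlier `pl`. -/
lemma aux_rep_pl {n m : ℕ} (h : n < m) :
    ∃ (c : ℝ) (r : StrongDual ℝ X), 0 < c ∧ c ≤ 1 ∧ ‖r‖ ≤ 1 ∧
      (auxRounds hrefl hx1 hxD f hf1 hfx m).Q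
        = c • (auxRounds hrefl hx1 hxD f hf1 hfx n).pl + (1 - c) • r := by
  induction m with
  | zero => omega
  | succ m ih =>
    rcases Nat.lt_succ_iff_lt_or_eq.mp h with h' | h'
    · obtain ⟨c, r, hc, hc1, hr, hrep⟩ := ih h'
      obtain ⟨c', r', hc', hc1', hr', hrep'⟩ := aux_rep_step hc hc1 hr
        ((auxRounds hrefl hx1 hxD f hf1 hfx m).hpl1) hrep
      refine ⟨c', r', hc', hc1', hr', ?_⟩
      rw [auxRounds_succ_Q, auxNextQ, hrep']
    · subst h'
      refine ⟨1/2, (auxRounds hrefl hx1 hxD f hf1 hfx n).Q, by norm_num, by norm_num,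
        le_of_eq (auxRounds hrefl hx1 hxD f hf1 hfx n).hQ1, ?_⟩
      rw [auxRounds_succ_Q, auxNextQ]
      module

/-- representation of round functionals in terms of `f`. -/
lemma aux_rep_f (m : ℕ) :
    ∃ (c : ℝ) (r : StrongDual ℝ X), 0 < c ∧ c ≤ 1 ∧ ‖r‖ ≤ 1 ∧
      (auxRounds hrefl hx1 hxD f hf1 hfx m).Q = c • f + (1 - c) • r := by
  induction m with
  | zero =>
    refine ⟨1, 0, by norm_num, le_refl _, by simp, ?_⟩
    rw [auxRounds_zero_Q]
    module
  | succ m ih =>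
    obtain ⟨c, r, hc, hc1, hr, hrep⟩ := ih
    obtain ⟨c', r', hc', hc1', hr', hrep'⟩ := aux_rep_step hc hc1 hr
      ((auxRounds hrefl hx1 hxD f hf1 hfx m).hpl1) hrep
    refine ⟨c', r', hc', hc1', hr', ?_⟩
    rw [auxRounds_succ_Q, auxNextQ, hrep']

/-- earlier limit functionals attain value one at later limit points. -/
lemma aux_pl_face {n m : ℕ} (h : n < m) :
    (auxRounds hrefl hx1 hxD f hf1 hfx n).pl ((auxRounds hrefl hx1 hxD f hf1 hfx m).vl) = 1 := by
  obtain ⟨c, r, hc, hc1, hr, hrep⟩ := aux_rep_pl hrefl hx1 hxD f hf1 hfx h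
  exact aux_face hc hc1 ((auxRounds hrefl hx1 hxD f hf1 hfx n).hpl1) hr hrep
    ((auxRounds hrefl hx1 hxD f hf1 hfx m).hvl1) ((auxRounds hrefl hx1 hxD f hf1 hfx m).hQvl)

/-- `f` attains value one at all limit points. -/
lemma aux_f_face (m : ℕ) :
    f ((auxRounds hrefl hx1 hxD f hf1 hfx m).vl) = 1 := by
  obtain ⟨c, r, hc, hc1, hr, hrep⟩ := aux_rep_f hrefl hx1 hxD f hf1 hfx m
  exact aux_face hc hc1 (le_of_eq hf1) hr hrep
    ((auxRounds hrefl hx1 hxD f hf1 hfx m).hvl1) ((auxRounds hrefl hx1 hxD f hf1 hfx m).hQvl)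

end Aux8
section Aux9
open NormedSpace

/-- convergence of functional differences controlled on a dense family -/
lemma aux_dense_tendsto {E : Type*} [NormedAddCommGroup E] [NormedSpace ℝ E]
    (W : Submodule ℝ E)
    (ψ : ℕ → StrongDual ℝ W) (hψ : DenseRange ψ)
    (ψe : ℕ → StrongDual ℝ E) (hψe : ∀ j, ∀ w : W, ψe j w = ψ j w)
    (a b : ℕ → E) (ha : ∀ n, a n ∈ W) (hb : ∀ n, b n ∈ W)
    (ha1 : ∀ n, ‖a n‖ ≤ 1) (hb1 : ∀ n, ‖b n‖ ≤ 1)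
    (hcontrol : ∀ n, ∀ j ≤ n, |ψe j (a n) - ψe j (b n)| ≤ epsv n)
    (φ : StrongDual ℝ E) :
    Filter.Tendsto (fun n => φ (a n) - φ (b n)) Filter.atTop (nhds 0) := by
  rw [Metric.tendsto_atTop]
  intro ε hε
  obtain ⟨j, hj⟩ := Metric.denseRange_iff.mp hψ (restrD W φ) (ε/4) (by linarith)
  have hest : ∀ u : E, ∀ hu : u ∈ W, ‖u‖ ≤ 1 → |φ u - ψe j u| < ε / 4 := by
    intro u hu hu1
    have h1 : φ u = (restrD W φ) (⟨u, hu⟩ : W) := rfl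
    have h2 : ψe j u = ψ j (⟨u, hu⟩ : W) := hψe j (⟨u, hu⟩ : W)
    rw [h1, h2]
    have h3 : |(restrD W φ - ψ j) (⟨u, hu⟩ : W)| ≤ ‖restrD W φ - ψ j‖ * ‖(⟨u, hu⟩ : W)‖ := by
      have := (restrD W φ - ψ j).le_opNorm (⟨u, hu⟩ : W)
      rwa [Real.norm_eq_abs] at this
    have h4 : ‖(⟨u, hu⟩ : W)‖ = ‖u‖ := rfl
    have h5 : ‖restrD W φ - ψ j‖ < ε/4 := by rwa [dist_eq_norm (restrD W φ) (ψ j)] at hj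
    rw [ContinuousLinearMap.sub_apply] at h3
    have h6 : ‖restrD W φ - ψ j‖ * ‖(⟨u, hu⟩ : W)‖ < ε/4 := by
      rw [h4]
      nlinarith [norm_nonneg (restrD W φ - ψ j)]
    calc |(restrD W φ) (⟨u, hu⟩ : W) - ψ j (⟨u, hu⟩ : W)| ≤
        ‖restrD W φ - ψ j‖ * ‖(⟨u, hu⟩ : W)‖ := h3
    _ < ε/4 := h6
  obtain ⟨N₀, hN₀⟩ := Filter.eventually_atTop.mp
    (epsv_tendsto.eventually (eventually_lt_nhds (show (0:ℝ) < ε/4 by linarith)))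
  refine ⟨max j N₀, fun n hn => ?_⟩
  have hnj : j ≤ n := le_trans (le_max_left _ _) hn
  have hnN₀ : N₀ ≤ n := le_trans (le_max_right _ _) hn
  have h7 := hcontrol n j hnj
  have h8 := hest (a n) (ha n) (ha1 n)
  have h9 := hest (b n) (hb n) (hb1 n)
  have h10 : epsv n < ε/4 := hN₀ n hnN₀
  rw [Real.dist_eq, sub_zero]
  have h11 : |φ (a n) - φ (b n)| ≤ |φ (a n) - ψe j (a n)| + |ψe j (a n) - ψe j (b n)|
      + |ψe j (b n) - φ (b n)| := by
    have heq : φ (a n) - φ (b n) = (φ (a n) - ψe j (a n)) + (ψe j (a n) - ψe j (b n))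
        + (ψe j (b n) - φ (b n)) := by ring
    rw [heq]
    exact abs_add_three _ _ _
  have h12 : |ψe j (b n) - φ (b n)| = |φ (b n) - ψe j (b n)| := abs_sub_comm _ _
  rw [h12] at h11
  linarith
end Aux9
section Main
open NormedSpace

lemma aux_superDelta_not_KK {Z : Type*} [NormedAddCommGroup Z] [NormedSpace ℝ Z]
    {z : Z} (h : IsSequentialSuperDeltaPoint Z z) : ¬ KadetsKlee Z := by
  obtain ⟨hz1, zs, hzs1, hzsw, hzsd⟩ := h
  intro hKK
  have h0 := hKK zs z hzs1 hz1 hzsw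
  have := tendsto_nhds_unique hzsd h0
  norm_num at this

lemma aux_main {X : Type*} [NormedAddCommGroup X] [NormedSpace ℝ X]
    (hrefl : Function.Surjective (inclusionInDoubleDual ℝ X))
    {x : X} (hD : IsDPoint X x) :
    (∃ v : X, IsSequentialSuperDeltaPoint X v) ∧
    (∃ g : StrongDual ℝ X, IsSequentialSuperDeltaPoint (StrongDual ℝ X) g) := by
  classical
  obtain ⟨hx1, hxD⟩ := hD
  have hx0 : x ≠ 0 := by intro h; rw [h, norm_zero] at hx1; norm_num at hx1
  obtain ⟨f, hf1, hfx'⟩ := exists_dual_vector ℝ x (norm_ne_zero_iff.mpr hx0)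
  have hfx : f x = 1 := by rw [hx1] at hfx'; exact_mod_cast hfx'
  set Rd : ℕ → AuxRound X x := auxRounds hrefl hx1 hxD f hf1 hfx with hRd
  obtain ⟨vI, σ₁, hσ₁, hvI1, hvIw⟩ := aux_weak_seq_compact hrefl (fun n => (Rd n).vl)
    (fun n => (Rd n).hvl1)
  obtain ⟨pI, σ₂, hσ₂, hpI1, hpIw⟩ := aux_weak_seq_compact (aux_dual_reflexive hrefl)
    (fun n => (Rd (σ₁ n)).pl) (fun n => (Rd _).hpl1)
  set ρ : ℕ → ℕ := σ₁ ∘ σ₂ with hρdef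
  have hρ : StrictMono ρ := hσ₁.comp hσ₂
  have hvρ : ∀ φ : StrongDual ℝ X, Filter.Tendsto (fun n => φ ((Rd (ρ n)).vl))
      Filter.atTop (nhds (φ vI)) := fun φ => (hvIw φ).comp hσ₂.tendsto_atTop
  have hpρ : ∀ Λ : StrongDual ℝ (StrongDual ℝ X), Filter.Tendsto (fun n => Λ ((Rd (ρ n)).pl))
      Filter.atTop (nhds (Λ pI)) := fun Λ => hpIw Λ
  have hfvI : f vI = 1 := by
    have h1 := hvρ f
    have h2 : (fun n => f ((Rd (ρ n)).vl)) = fun _ => (1:ℝ) :=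
      funext (fun n => aux_f_face hrefl hx1 hxD f hf1 hfx (ρ n))
    rw [h2] at h1
    exact tendsto_nhds_unique h1 tendsto_const_nhds
  have hvIn : ‖vI‖ = 1 := by
    refine le_antisymm hvI1 ?_
    have h1 : |f vI| ≤ ‖f‖ * ‖vI‖ := by
      have := f.le_opNorm vI; rwa [Real.norm_eq_abs] at this
    rw [hfvI, hf1, one_mul] at h1
    exact le_trans (by norm_num) h1
  have hplvI : ∀ n, (Rd (ρ n)).pl vI = 1 := by
    intro n
    have hT := hvρ ((Rd (ρ n)).pl)
    have hevt : (fun j => (Rd (ρ n)).pl ((Rd (ρ j)).vl)) =ᶠ[Filter.atTop] (fun _ => (1:ℝ)) := by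
      rw [Filter.eventuallyEq_iff_exists_mem]
      refine ⟨Set.Ici (n+1), Filter.mem_atTop (n+1), fun j hj => ?_⟩
      exact aux_pl_face hrefl hx1 hxD f hf1 hfx (hρ (by exact Nat.lt_of_lt_of_le (Nat.lt_succ_self n) hj))
    have hT' := (Filter.tendsto_congr' hevt).mp hT
    exact tendsto_nhds_unique hT' tendsto_const_nhds
  have hpIvI : pI vI = 1 := by
    have hT := hpρ (inclusionInDoubleDual ℝ X vI)
    have h2 : (fun n => (inclusionInDoubleDual ℝ X vI) ((Rd (ρ n)).pl)) = fun _ => (1:ℝ) :=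
      funext (fun n => hplvI n)
    rw [h2] at hT
    exact tendsto_nhds_unique hT tendsto_const_nhds
  have hpIn : ‖pI‖ = 1 := aux_norm_one_of hpI1 hvIn hpIvI
  -- separable subspaces
  set Wgen : Set X := insert vI (Set.range (fun n => (Rd n).vl) ∪
    Set.range (fun p : ℕ × ℕ => (Rd p.1).va p.2)) with hWgen
  have hWgenc : Wgen.Countable :=
    ((Set.countable_range _).union (Set.countable_range _)).insert vI
  set W : Submodule ℝ X := (Submodule.span ℝ Wgen).topologicalClosure with hWdef
  have hWc : IsClosed (W : Set X) := Submodule.isClosed_topologicalClosure _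
  have hWmem : ∀ u ∈ Wgen, u ∈ W := fun u hu =>
    Submodule.le_topologicalClosure _ (Submodule.subset_span hu)
  have hWvl : ∀ n, (Rd n).vl ∈ W := fun n =>
    hWmem _ (Set.mem_insert_iff.mpr (Or.inr (Or.inl ⟨n, rfl⟩)))
  have hWva : ∀ n k, (Rd n).va k ∈ W := fun n k =>
    hWmem _ (Set.mem_insert_iff.mpr (Or.inr (Or.inr ⟨(n, k), rfl⟩)))
  haveI : TopologicalSpace.SeparableSpace W := aux_span_closure_separable hWgenc
  have hWrefl := aux_subspace_reflexive hrefl W hWc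
  haveI : TopologicalSpace.SeparableSpace (StrongDual ℝ W) := aux_dual_separable hWrefl
  haveI : Nonempty (StrongDual ℝ W) := ⟨0⟩
  set ψ : ℕ → StrongDual ℝ W := TopologicalSpace.denseSeq (StrongDual ℝ W) with hψdef
  have hψd : DenseRange ψ := TopologicalSpace.denseRange_denseSeq _
  have hψeex : ∀ j, ∃ g : StrongDual ℝ X, ∀ w : W, g w = ψ j w := fun j => by
    obtain ⟨g, hg, _⟩ := exists_extension_norm_eq W (ψ j)
    exact ⟨g, hg⟩
  choose ψe hψe using hψeex
  set Vgen : Set (StrongDual ℝ X) := insert pI (Set.range (fun n => (Rd n).pl) ∪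
    Set.range (fun p : ℕ × ℕ => (Rd p.1).pa p.2)) with hVgen
  have hVgenc : Vgen.Countable :=
    ((Set.countable_range _).union (Set.countable_range _)).insert pI
  set V : @Submodule ℝ (StrongDual ℝ X) _ AddCommGroup.toAddCommMonoid NormedSpace.toModule := (Submodule.span ℝ Vgen).topologicalClosure with hVdef
  have hVc : IsClosed (V : Set (StrongDual ℝ X)) := Submodule.isClosed_topologicalClosure _
  have hVmem : ∀ u ∈ Vgen, u ∈ V := fun u hu =>
    Submodule.le_topologicalClosure _ (Submodule.subset_span hu)
  have hVpl : ∀ n, (Rd n).pl ∈ V := fun n =>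
    hVmem _ (Set.mem_insert_iff.mpr (Or.inr (Or.inl ⟨n, rfl⟩)))
  have hVpa : ∀ n k, (Rd n).pa k ∈ V := fun n k =>
    hVmem _ (Set.mem_insert_iff.mpr (Or.inr (Or.inr ⟨(n, k), rfl⟩)))
  haveI : TopologicalSpace.SeparableSpace V := aux_span_closure_separable hVgenc
  have hVrefl := aux_subspace_reflexive (aux_dual_reflexive hrefl) V hVc
  haveI : TopologicalSpace.SeparableSpace (StrongDual ℝ V) := aux_dual_separable hVrefl
  haveI : Nonempty (StrongDual ℝ V) := ⟨0⟩
  set Ψ : ℕ → StrongDual ℝ V := TopologicalSpace.denseSeq (StrongDual ℝ V) with hΨdef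
  have hΨd : DenseRange Ψ := TopologicalSpace.denseRange_denseSeq _
  have hΨeex : ∀ j, ∃ g : StrongDual ℝ (StrongDual ℝ X), ∀ w : V, g w = Ψ j w := fun j => by
    obtain ⟨g, hg, _⟩ := exists_extension_norm_eq V (Ψ j)
    exact ⟨g, hg⟩
  choose Ψe hΨe using hΨeex
  -- diagonal selection
  have hKsel : ∀ n : ℕ, ∃ k : ℕ, (∀ j ∈ Finset.range (n+1),
      |ψe j ((Rd (ρ n)).va k) - ψe j ((Rd (ρ n)).vl)| ≤ epsv n) ∧
      (1 - epsv n < (Rd (ρ n)).pa k vI) ∧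
      (∀ j ∈ Finset.range (n+1),
        |Ψe j ((Rd (ρ n)).pa k) - Ψe j ((Rd (ρ n)).pl)| ≤ epsv n) ∧ n ≤ k := by
    intro n
    have e1 : ∀ᶠ k in Filter.atTop, ∀ j ∈ Finset.range (n+1),
        |ψe j ((Rd (ρ n)).va k) - ψe j ((Rd (ρ n)).vl)| ≤ epsv n := by
      rw [Finset.eventually_all]
      intro j _
      obtain ⟨N, hN⟩ := Metric.tendsto_atTop.mp ((Rd (ρ n)).hvw (ψe j)) (epsv n) (epsv_pos n)
      rw [Filter.eventually_atTop]
      exact ⟨N, fun k hk => by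
        have := hN k hk; rw [Real.dist_eq] at this; linarith⟩
    have e2 : ∀ᶠ k in Filter.atTop, 1 - epsv n < (Rd (ρ n)).pa k vI := by
      have hT := (Rd (ρ n)).hpw (inclusionInDoubleDual ℝ X vI)
      have heq : (inclusionInDoubleDual ℝ X vI) ((Rd (ρ n)).pl) = 1 := hplvI n
      rw [heq] at hT
      exact hT.eventually (eventually_gt_nhds (by linarith [epsv_pos n]))
    have e3 : ∀ᶠ k in Filter.atTop, ∀ j ∈ Finset.range (n+1),
        |Ψe j ((Rd (ρ n)).pa k) - Ψe j ((Rd (ρ n)).pl)| ≤ epsv n := by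
      rw [Finset.eventually_all]
      intro j _
      obtain ⟨N, hN⟩ := Metric.tendsto_atTop.mp ((Rd (ρ n)).hpw (Ψe j)) (epsv n) (epsv_pos n)
      rw [Filter.eventually_atTop]
      exact ⟨N, fun k hk => by
        have := hN k hk; rw [Real.dist_eq] at this; linarith⟩
    have e4 : ∀ᶠ k in Filter.atTop, n ≤ k := Filter.eventually_ge_atTop n
    obtain ⟨k, hk⟩ := (((e1.and e2).and (e3.and e4))).exists
    exact ⟨k, hk.1.1, hk.1.2, hk.2.1, hk.2.2⟩
  choose K hK1 hK2 hK3 hK4 using hKsel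
  set w : ℕ → X := fun n => (Rd (ρ n)).va (K n) with hwdef
  set G : ℕ → StrongDual ℝ X := fun n => (Rd (ρ n)).pa (K n) with hGdef
  have hw1 : ∀ n, ‖w n‖ ≤ 1 := fun n => (Rd (ρ n)).hva (K n)
  have hG1 : ∀ n, ‖G n‖ = 1 := fun n => (Rd (ρ n)).hpa1 (K n)
  have hKn : ∀ n, epsv (K n) ≤ epsv n := fun n => epsv_antitone (hK4 n)
  have hnlow : ∀ n, 1 - epsv n ≤ ‖w n‖ := by
    intro n
    have h1 := (Rd (ρ n)).hslice (K n)
    have h2 : (Rd (ρ n)).Q (w n) ≤ ‖w n‖ := by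
      have h3 : |(Rd (ρ n)).Q (w n)| ≤ ‖(Rd (ρ n)).Q‖ * ‖w n‖ := by
        have := ((Rd (ρ n)).Q).le_opNorm (w n); rwa [Real.norm_eq_abs] at this
      rw [(Rd (ρ n)).hQ1, one_mul] at h3
      exact le_trans (le_abs_self _) h3
    have h4 := hKn n
    linarith
  have hnpos : ∀ n, 0 < ‖w n‖ :=
    fun n => lt_of_lt_of_le (by linarith [epsv_le_half n]) (hnlow n)
  have hnrm1 : Filter.Tendsto (fun n => ‖w n‖) Filter.atTop (nhds 1) :=
    tendsto_of_tendsto_of_tendsto_of_le_of_le aux_one_sub_epsv_tendsto tendsto_const_nhds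
      hnlow hw1
  set wt : ℕ → X := fun n => (‖w n‖)⁻¹ • w n with hwtdef
  have hwt1 : ∀ n, ‖wt n‖ = 1 := by
    intro n
    rw [hwtdef]
    simp only [norm_smul, norm_inv, norm_norm]
    rw [inv_mul_cancel₀ (ne_of_gt (hnpos n))]
  have H1 : ∀ φ : StrongDual ℝ X, Filter.Tendsto (fun n => φ (w n) - φ ((Rd (ρ n)).vl))
      Filter.atTop (nhds 0) := by
    intro φ
    refine aux_dense_tendsto W ψ hψd ψe hψe w (fun n => (Rd (ρ n)).vl)
      (fun n => hWva _ _) (fun n => hWvl _) hw1 (fun n => (Rd (ρ n)).hvl1) ?_ φ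
    intro n j hj
    exact hK1 n j (Finset.mem_range.mpr (Nat.lt_succ_of_le hj))
  have H2 : ∀ φ : StrongDual ℝ X, Filter.Tendsto (fun n => φ (w n)) Filter.atTop (nhds (φ vI)) := by
    intro φ
    have h2 := (H1 φ).add (hvρ φ)
    simp only [sub_add_cancel, zero_add] at h2
    exact h2
  have hinvT : Filter.Tendsto (fun n => (‖w n‖)⁻¹) Filter.atTop (nhds 1) := by
    have := hnrm1.inv₀ (one_ne_zero)
    simpa using this
  have Hwt : ∀ φ : StrongDual ℝ X, Filter.Tendsto (fun n => φ (wt n)) Filter.atTop (nhds (φ vI)) := by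
    intro φ
    have h1 : (fun n => φ (wt n)) = fun n => (‖w n‖)⁻¹ * φ (w n) := by
      funext n; rw [hwtdef]; simp [map_smul]
    rw [h1]
    have := hinvT.mul (H2 φ)
    simpa using this
  have hGvI : Filter.Tendsto (fun n => G n vI) Filter.atTop (nhds 1) :=
    tendsto_of_tendsto_of_tendsto_of_le_of_le aux_one_sub_epsv_tendsto tendsto_const_nhds
      (fun n => le_of_lt (hK2 n)) (fun n => aux_val_le (le_of_eq (hG1 n)) hvI1)
  have hGw : Filter.Tendsto (fun n => G n (w n)) Filter.atTop (nhds (-1)) := by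
    have hup : ∀ n, G n (w n) ≤ -1 + epsv n := by
      intro n
      have h5 := aux_pa_va_ub (Rd (ρ n)) hx1 (K n)
      have h6 := hKn n
      linarith
    have hlo : ∀ n, -1 ≤ G n (w n) := fun n => aux_val_neg_le (le_of_eq (hG1 n)) (hw1 n)
    have hupT : Filter.Tendsto (fun n => -1 + epsv n) Filter.atTop (nhds (-1)) := by
      have h7 := epsv_tendsto.const_add (-1 : ℝ); simpa using h7
    exact tendsto_of_tendsto_of_tendsto_of_le_of_le tendsto_const_nhds hupT hlo hup
  have hGwt : Filter.Tendsto (fun n => G n (wt n)) Filter.atTop (nhds (-1)) := by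
    have h1 : (fun n => G n (wt n)) = fun n => (‖w n‖)⁻¹ * G n (w n) := by
      funext n; rw [hwtdef]; simp [map_smul]
    rw [h1]
    have := hinvT.mul hGw
    simpa using this
  have Hdist : Filter.Tendsto (fun n => ‖vI - wt n‖) Filter.atTop (nhds 2) := by
    have hlo : ∀ n, G n vI - G n (wt n) ≤ ‖vI - wt n‖ := by
      intro n
      have h1 : G n vI - G n (wt n) = G n (vI - wt n) := by rw [map_sub]
      rw [h1]
      have h2 : |G n (vI - wt n)| ≤ ‖G n‖ * ‖vI - wt n‖ := by
        have := (G n).le_opNorm (vI - wt n); rwa [Real.norm_eq_abs] at this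
      rw [hG1 n, one_mul] at h2
      exact le_trans (le_abs_self _) h2
    have hup : ∀ n, ‖vI - wt n‖ ≤ 2 := by
      intro n
      calc ‖vI - wt n‖ ≤ ‖vI‖ + ‖wt n‖ := norm_sub_le _ _
      _ = 2 := by rw [hvIn, hwt1 n]; norm_num
    have hloT : Filter.Tendsto (fun n => G n vI - G n (wt n)) Filter.atTop (nhds 2) := by
      have h8 := hGvI.sub hGwt
      norm_num at h8
      exact h8
    exact tendsto_of_tendsto_of_tendsto_of_le_of_le hloT tendsto_const_nhds hlo hup
  have HG1 : ∀ F : StrongDual ℝ (StrongDual ℝ X),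
      Filter.Tendsto (fun n => F (G n) - F ((Rd (ρ n)).pl)) Filter.atTop (nhds 0) := by
    intro F
    refine aux_dense_tendsto V Ψ hΨd Ψe hΨe G (fun n => (Rd (ρ n)).pl)
      (fun n => hVpa _ _) (fun n => hVpl _) (fun n => le_of_eq (hG1 n))
      (fun n => (Rd (ρ n)).hpl1) ?_ F
    intro n j hj
    exact hK3 n j (Finset.mem_range.mpr (Nat.lt_succ_of_le hj))
  have HG2 : ∀ F : StrongDual ℝ (StrongDual ℝ X), Filter.Tendsto (fun n => F (G n))
      Filter.atTop (nhds (F pI)) := by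
    intro F
    have h2 := (HG1 F).add (hpρ F)
    simp only [sub_add_cancel, zero_add] at h2
    exact h2
  have HpIwt : Filter.Tendsto (fun n => pI (wt n)) Filter.atTop (nhds 1) := by
    have := Hwt pI; rwa [hpIvI] at this
  have HGdist : Filter.Tendsto (fun n => ‖pI - G n‖) Filter.atTop (nhds 2) := by
    have hlo : ∀ n, pI (wt n) - G n (wt n) ≤ ‖pI - G n‖ := by
      intro n
      have h1 : pI (wt n) - G n (wt n) = (pI - G n) (wt n) := by
        rw [ContinuousLinearMap.sub_apply]
      rw [h1]
      have h2 : |(pI - G n) (wt n)| ≤ ‖pI - G n‖ * ‖wt n‖ := by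
        have := (pI - G n).le_opNorm (wt n); rwa [Real.norm_eq_abs] at this
      rw [hwt1 n, mul_one] at h2
      exact le_trans (le_abs_self _) h2
    have hup : ∀ n, ‖pI - G n‖ ≤ 2 := by
      intro n
      calc ‖pI - G n‖ ≤ ‖pI‖ + ‖G n‖ := norm_sub_le _ _
      _ = 2 := by rw [hpIn, hG1 n]; norm_num
    have hloT : Filter.Tendsto (fun n => pI (wt n) - G n (wt n)) Filter.atTop (nhds 2) := by
      have h9 := HpIwt.sub hGwt
      norm_num at h9
      exact h9
    exact tendsto_of_tendsto_of_tendsto_of_le_of_le hloT tendsto_const_nhds hlo hup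
  exact ⟨⟨vI, hvIn, wt, hwt1, Hwt, Hdist⟩, ⟨pI, hpIn, G, hG1, HG2, HGdist⟩⟩
end Main


/-- If a reflexive real Banach space `X` contains a 𝔇-point, then both `X` and `X*`
contain sequential super Δ-points; in particular neither `X` nor `X*` is Kadets--Klee. -/
theorem reflexive_dPoint_implies_sequentialSuperDeltaPoints
    (X : Type*) [NormedAddCommGroup X] [NormedSpace ℝ X] [CompleteSpace X]
    (hrefl : Function.Surjective (NormedSpace.inclusionInDoubleDual ℝ X))
    (h : ∃ x : X, IsDPoint X x) :
    (∃ x : X, IsSequentialSuperDeltaPoint X x) ∧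
    (∃ g : StrongDual ℝ X, IsSequentialSuperDeltaPoint (StrongDual ℝ X) g) ∧
    ¬ KadetsKlee X ∧ ¬ KadetsKlee (StrongDual ℝ X) := by
  obtain ⟨x, hD⟩ := h
  obtain ⟨⟨v, hv⟩, ⟨g, hg⟩⟩ := aux_main hrefl hD
  exact ⟨⟨v, hv⟩, ⟨g, hg⟩, aux_superDelta_not_KK hv, aux_superDelta_not_KK hg⟩
end
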